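/- arXiv:0708.1343 — 9 statements merged into one kernel-verified Lean document; each statement's English description precedes it below -/
import Mathlib

section
/- Let M be an element of the subring 𝓜. Then M is a unit of the ring 𝓜 if and only if det(M) is a nonzero element of F; that is, the group of units of 𝓜 equals 𝓜 ∩ GL_n(F[t]). -/
open Polynomial Matrix

/-- Membership in the subring `𝓜` of `F[t]^{n×n}`: every entry strictly below the
diagonal vanishes at `t = 0` (i.e. is a multiple of `t`). -/
def InM {F : Type*} [Field F] {n : ℕ} (M : Matrix (Fin n) (Fin n) (Polynomial F)) : Prop :=
  ∀ a b : Fin n, b < a → (M a b).eval 0 = 0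

/-- For `M ∈ 𝓜`, `M` is a unit of the ring `𝓜` (i.e. it has a two-sided
inverse lying in `𝓜`) if and only if `det M` is a nonzero constant, i.e.
`𝓜^× = 𝓜 ∩ GL_n(F[t])`. -/
theorem units_of_M_eq_M_inter_GL {F : Type*} [Field F] [Fintype F] {n : ℕ} (hn : 2 ≤ n)
    (M : Matrix (Fin n) (Fin n) (Polynomial F)) (hM : InM M) :
    (∃ N : Matrix (Fin n) (Fin n) (Polynomial F), InM N ∧ M * N = 1 ∧ N * M = 1) ↔
      ∃ c : F, c ≠ 0 ∧ M.det = Polynomial.C c := by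
  constructor
  · rintro ⟨N, -, hMN, -⟩
    have hu : IsUnit M.det := by
      have : M.det * N.det = 1 := by rw [← det_mul, hMN, det_one]
      exact isUnit_iff_exists_inv.2 ⟨_, this⟩
    obtain ⟨r, hr, hrC⟩ := Polynomial.isUnit_iff.1 hu
    exact ⟨r, hr.ne_zero, hrC.symm⟩
  · rintro ⟨c, hc, hdet⟩
    have hu : IsUnit M.det := by
      rw [hdet]; exact (isUnit_C.2 (isUnit_iff_ne_zero.2 hc))
    have hMN : M * M⁻¹ = 1 := mul_nonsing_inv M hu
    have hNM : M⁻¹ * M = 1 := nonsing_inv_mul M hu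
    refine ⟨M⁻¹, ?_, hMN, hNM⟩
    -- evaluate at 0
    set f : Polynomial F →+* F := Polynomial.evalRingHom 0
    set M₀ : Matrix (Fin n) (Fin n) F := M.map f
    have hM₀tri : M₀.BlockTriangular (id : Fin n → Fin n) := by
      intro i j hij
      exact hM i j hij
    have hM₀det : IsUnit M₀.det := by
      have h : M₀.det = f M.det := (RingHom.map_det f M).symm
      rw [h, hdet]
      simpa [f] using isUnit_iff_ne_zero.2 hc
    haveI : Invertible M₀ := M₀.invertibleOfIsUnitDet hM₀det
    have htri : M₀⁻¹.BlockTriangular (id : Fin n → Fin n) :=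
      blockTriangular_inv_of_blockTriangular hM₀tri
    have hmap : (M⁻¹).map f = M₀⁻¹ := by
      have h1 : M₀ * (M⁻¹).map f = 1 := by
        rw [← Matrix.map_mul, hMN, Matrix.map_one f (map_zero f) (map_one f)]
      calc (M⁻¹).map f = M₀⁻¹ * (M₀ * (M⁻¹).map f) := by
            rw [← mul_assoc, nonsing_inv_mul _ hM₀det, one_mul]
        _ = M₀⁻¹ := by rw [h1, mul_one]
    intro a b hab
    have := htri (show (id b : Fin n) < id a from hab)
    have h2 : (M⁻¹).map f a b = 0 := by rw [hmap]; exact this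
    simpa [f, Matrix.map_apply] using h2
end

section
/- Let M ∈ 𝓜 be delay-free. Then the rank of M over the field of rational functions F(t) equals the rank over F of the constant matrix M(0) obtained by evaluating every entry at t = 0, and both equal |Supp(M)|, the number of nonzero rows of M. In particular, the nonzero rows of a delay-free matrix M ∈ 𝓜 are linearly independent over F[t]. -/
open Polynomial Matrix

/-- `M ∈ 𝓜` is delay-free if `m_{aa}(0) ≠ 0` for every index `a` of a nonzero row. -/
def DelayFree {F : Type*} [Field F] {n : ℕ}
    (M : Matrix (Fin n) (Fin n) (Polynomial F)) : Prop :=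
  ∀ a : Fin n, M a ≠ 0 → (M a a).eval 0 ≠ 0

/-- If the square submatrix of `N` on rows/columns in `P` is invertible, then those rows
of `N` are linearly independent. -/
lemma aux_li {K : Type*} [Field K] {n : ℕ} (N : Matrix (Fin n) (Fin n) K)
    (P : Fin n → Prop) [DecidablePred P]
    (h : IsUnit (Matrix.of (fun a b : {a // P a} => N a.val b.val)).det) :
    LinearIndependent K (fun a : {a : Fin n // P a} => N a.val) := by
  have hli := Matrix.linearIndependent_rows_iff_isUnit.2
    ((Matrix.isUnit_iff_isUnit_det _).2 h)
  exact LinearIndependent.of_comp (LinearMap.funLeft K K (Subtype.val)) hli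

/-- If rows of `N` outside `P` vanish and the rows in `P` are linearly independent, then
the rank of `N` equals the number of rows in `P`. -/
lemma aux_rank {K : Type*} [Field K] {n : ℕ} (N : Matrix (Fin n) (Fin n) K)
    (P : Fin n → Prop) [DecidablePred P]
    (h0 : ∀ a, ¬ P a → N a = 0)
    (hLI : LinearIndependent K (fun a : {a : Fin n // P a} => N a.val)) :
    N.rank = Nat.card {a : Fin n // P a} := by
  rw [Matrix.rank_eq_finrank_span_row]
  have hspan : Submodule.span K (Set.range N)
      = Submodule.span K (Set.range (fun a : {a : Fin n // P a} => N a.val)) := by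
    apply le_antisymm
    · rw [Submodule.span_le]
      rintro _ ⟨a, rfl⟩
      by_cases h : P a
      · exact Submodule.subset_span ⟨⟨a, h⟩, rfl⟩
      · rw [h0 a h]; exact Submodule.zero_mem _
    · rw [Submodule.span_le]
      rintro _ ⟨a, rfl⟩
      exact Submodule.subset_span ⟨a.val, rfl⟩
  rw [show Set.range N.row = Set.range N from rfl, hspan, finrank_span_eq_card hLI, Nat.card_eq_fintype_card]

/-- For a delay-free `M ∈ 𝓜`, the rank of `M` over the rational function
field `F(t)` equals the rank over `F` of the constant matrix `M(0)`, and both equal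
`|Supp(M)|`, the number of nonzero rows of `M`.  In particular, the nonzero rows of `M`
are linearly independent over `F[t]`. -/
theorem rank_of_delayFree {F : Type*} [Field F] [Fintype F] {n : ℕ} (hn : 2 ≤ n)
    (M : Matrix (Fin n) (Fin n) (Polynomial F)) (hM : InM M) (hdf : DelayFree M) :
    (M.map (fun p => algebraMap (Polynomial F) (FractionRing (Polynomial F)) p)).rank =
      (M.map (fun p => p.eval 0)).rank ∧
    (M.map (fun p => p.eval 0)).rank = Nat.card {a : Fin n // M a ≠ 0} ∧
    LinearIndependent (Polynomial F) (fun a : {a : Fin n // M a ≠ 0} => M a.val) := by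
  classical
  set K := FractionRing (Polynomial F)
  set P : Fin n → Prop := fun a => M a ≠ 0 with hP
  -- the square submatrix over F[t]
  set A : Matrix {a : Fin n // P a} {a : Fin n // P a} (Polynomial F) :=
    Matrix.of (fun a b => M a.val b.val) with hA
  -- determinant of the evaluated submatrix
  have hdet0 : (A.map (fun p => p.eval 0)).det = ∏ a : {a : Fin n // P a}, (M a.val a.val).eval 0 := by
    apply Matrix.det_of_upperTriangular
    intro i j hij
    exact hM i.val j.val hij
  have hprod : (∏ a : {a : Fin n // P a}, (M a.val a.val).eval 0) ≠ 0 :=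
    Finset.prod_ne_zero_iff.2 (fun a _ => hdf a.val a.property)
  have hAmap : A.map (fun p => p.eval 0) = (evalRingHom (0 : F)).mapMatrix A := rfl
  have hdetA0 : (A.det).eval 0 ≠ 0 := by
    have : (evalRingHom (0 : F)) A.det = ((evalRingHom (0 : F)).mapMatrix A).det :=
      RingHom.map_det _ _
    rw [← hAmap, hdet0] at this
    show (evalRingHom (0 : F)) A.det ≠ 0
    rw [this]
    exact hprod
  have hdetA : A.det ≠ 0 := fun h => hdetA0 (by simp [h])
  -- linear independence of eval-at-0 rows
  have hli0 : LinearIndependent F (fun a : {a : Fin n // P a} => (M.map (fun p => p.eval 0)) a.val) := by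
    apply aux_li
    have : (Matrix.of fun a b : {a : Fin n // P a} => (M.map (fun p => p.eval 0)) a.val b.val)
        = A.map (fun p => p.eval 0) := rfl
    rw [this, hdet0]
    exact isUnit_iff_ne_zero.2 hprod
  -- linear independence over K of the mapped rows
  have halg : Function.Injective (algebraMap (Polynomial F) K) :=
    IsFractionRing.injective _ _
  have hliK : LinearIndependent K
      (fun a : {a : Fin n // P a} => (M.map (fun p => algebraMap (Polynomial F) K p)) a.val) := by
    apply aux_li
    have heq : (Matrix.of fun a b : {a : Fin n // P a} =>
        (M.map (fun p => algebraMap (Polynomial F) K p)) a.val b.val)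
        = (algebraMap (Polynomial F) K).mapMatrix A := rfl
    rw [heq, ← RingHom.map_det]
    exact isUnit_iff_ne_zero.2 (fun h => hdetA (halg (by simpa using h)))
  -- rows outside the support vanish
  have h0K : ∀ a, ¬ P a → (M.map (fun p => algebraMap (Polynomial F) K p)) a = 0 := by
    intro a ha
    have hMa : M a = 0 := not_not.1 ha
    funext b
    have : M a b = 0 := congrFun hMa b
    simp [Matrix.map_apply, this]
  have h00 : ∀ a, ¬ P a → (M.map (fun p => p.eval 0)) a = 0 := by
    intro a ha
    have hMa : M a = 0 := not_not.1 ha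
    funext b
    have : M a b = 0 := congrFun hMa b
    simp [Matrix.map_apply, this]
  have hrK := aux_rank (M.map (fun p => algebraMap (Polynomial F) K p)) P h0K hliK
  have hr0 := aux_rank (M.map (fun p => p.eval 0)) P h00 hli0
  refine ⟨hrK.trans hr0.symm, hr0, ?_⟩
  -- linear independence over F[t]
  have hliR : LinearIndependent (Polynomial F)
      (fun a : {a : Fin n // P a} => (M.map (fun p => algebraMap (Polynomial F) K p)) a.val) := by
    apply hliK.restrict_scalars
    intro x y hxy
    apply halg
    simpa [Algebra.algebraMap_eq_smul_one] using hxy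
  exact LinearIndependent.of_comp
    (LinearMap.pi (fun i => (Algebra.linearMap (Polynomial F) K).comp (LinearMap.proj i))) hliR
end

section
/- Let M ∈ 𝓜 be semi-reduced and a unit of the ring 𝓜 (equivalently, det(M) is a nonzero element of F). Then M is a diagonal matrix with constant nonzero diagonal entries; that is, M = diag(c_1,…,c_n) for some c_1,…,c_n ∈ F\{0}. -/
open Polynomial Matrix

/-- The degree matrix `𝒟(M)`: `𝒟(M)_{ab} = n·deg(m_{ab}) − a + b`, with the zero
polynomial having degree `−∞` (here `⊥` in `WithBot ℤ`). -/
noncomputable def degMat {F : Type*} [Field F] {n : ℕ}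
    (M : Matrix (Fin n) (Fin n) (Polynomial F)) : Matrix (Fin n) (Fin n) (WithBot ℤ) :=
  Matrix.of fun a b =>
    WithBot.map (fun d : ℕ => (n : ℤ) * (d : ℤ) - ((a : ℕ) : ℤ) + ((b : ℕ) : ℤ))
      ((M a b).degree)

/-- `M` is semi-reduced if the maxima of the non-trivial rows of `𝒟(M)` occur in
pairwise different columns. -/
def SemiReduced {F : Type*} [Field F] {n : ℕ}
    (M : Matrix (Fin n) (Fin n) (Polynomial F)) : Prop :=
  ∀ a a' b : Fin n, a ≠ a' → M a ≠ 0 → M a' ≠ 0 →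
    degMat M a b = Finset.univ.sup (fun c => degMat M a c) →
    degMat M a' b = Finset.univ.sup (fun c => degMat M a' c) → False

section Aux

variable {F : Type*} [Field F] {n : ℕ}

/-- The integer value of the degree matrix (meaningful at nonzero entries). -/
def vval (M : Matrix (Fin n) (Fin n) (Polynomial F)) (a b : Fin n) : ℤ :=
  (n : ℤ) * (((M a b).natDegree : ℕ) : ℤ) - ((a : ℕ) : ℤ) + ((b : ℕ) : ℤ)

lemma degMat_eq_vval (M : Matrix (Fin n) (Fin n) (Polynomial F)) {a b : Fin n}
    (h : M a b ≠ 0) : degMat M a b = (vval M a b : WithBot ℤ) := by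
  unfold degMat vval
  rw [Matrix.of_apply, Polynomial.degree_eq_natDegree h]
  rfl

lemma natDegree_pos_of_low (M : Matrix (Fin n) (Fin n) (Polynomial F)) (hM : InM M)
    {a b : Fin n} (h : M a b ≠ 0) (hba : b < a) : 1 ≤ (M a b).natDegree := by
  have h0 : (M a b).coeff 0 = 0 := by
    have := hM a b hba
    rwa [← Polynomial.coeff_zero_eq_eval_zero] at this
  rcases Nat.eq_zero_or_pos (M a b).natDegree with h0' | h0'
  · exfalso
    have hC := Polynomial.eq_C_of_natDegree_eq_zero h0'
    rw [h0, map_zero] at hC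
    exact h hC
  · exact h0'

lemma vval_nonneg (M : Matrix (Fin n) (Fin n) (Polynomial F)) (hM : InM M)
    {a b : Fin n} (h : M a b ≠ 0) : 0 ≤ vval M a b := by
  have ha : ((a : ℕ) : ℤ) < (n : ℤ) := by exact_mod_cast a.isLt
  have hb0 : (0 : ℤ) ≤ ((b : ℕ) : ℤ) := by positivity
  rcases lt_or_ge b a with hba | hab
  · have hd : (1 : ℤ) ≤ (((M a b).natDegree : ℕ) : ℤ) := by
      exact_mod_cast natDegree_pos_of_low M hM h hba
    have hmul : (n : ℤ) * 1 ≤ (n : ℤ) * (((M a b).natDegree : ℕ) : ℤ) :=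
      mul_le_mul_of_nonneg_left hd (by positivity)
    unfold vval
    linarith
  · have hab' : ((a : ℕ) : ℤ) ≤ ((b : ℕ) : ℤ) := by exact_mod_cast hab
    have hmul : (0 : ℤ) ≤ (n : ℤ) * (((M a b).natDegree : ℕ) : ℤ) := by positivity
    unfold vval
    linarith

lemma vval_eq_zero (M : Matrix (Fin n) (Fin n) (Polynomial F)) (hM : InM M)
    {a b : Fin n} (h : M a b ≠ 0) (hv : vval M a b = 0) :
    a = b ∧ (M a b).natDegree = 0 := by
  have ha : ((a : ℕ) : ℤ) < (n : ℤ) := by exact_mod_cast a.isLt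
  have hb0 : (0 : ℤ) ≤ ((b : ℕ) : ℤ) := by positivity
  rcases lt_or_ge b a with hba | hab
  · exfalso
    have hd : (1 : ℤ) ≤ (((M a b).natDegree : ℕ) : ℤ) := by
      exact_mod_cast natDegree_pos_of_low M hM h hba
    have hmul : (n : ℤ) * 1 ≤ (n : ℤ) * (((M a b).natDegree : ℕ) : ℤ) :=
      mul_le_mul_of_nonneg_left hd (by positivity)
    have hba' : ((b : ℕ) : ℤ) < ((a : ℕ) : ℤ) := by exact_mod_cast hba
    unfold vval at hv
    linarith
  · have hab' : ((a : ℕ) : ℤ) ≤ ((b : ℕ) : ℤ) := by exact_mod_cast hab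
    have hmul : (0 : ℤ) ≤ (n : ℤ) * (((M a b).natDegree : ℕ) : ℤ) := by positivity
    unfold vval at hv
    have hnd : (n : ℤ) * (((M a b).natDegree : ℕ) : ℤ) = 0 := by linarith
    have hav : ((a : ℕ) : ℤ) = ((b : ℕ) : ℤ) := by linarith
    have hn0 : (n : ℤ) ≠ 0 := by
      have : 0 < n := a.pos
      exact_mod_cast this.ne'
    have hd0 : (((M a b).natDegree : ℕ) : ℤ) = 0 := by
      rcases mul_eq_zero.mp hnd with h' | h'
      · exact absurd h' hn0
      · exact h'
    constructor
    · exact Fin.ext (by exact_mod_cast hav)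
    · exact_mod_cast hd0

end Aux

/-- If `M ∈ 𝓜` is semi-reduced and a unit of the ring `𝓜`, then `M` is a
diagonal matrix with nonzero constant diagonal entries. -/
theorem semiReduced_unit_is_diagonal {F : Type*} [Field F] [Fintype F] {n : ℕ} (hn : 2 ≤ n)
    (M : Matrix (Fin n) (Fin n) (Polynomial F)) (hM : InM M) (hsr : SemiReduced M)
    (hunit : ∃ N : Matrix (Fin n) (Fin n) (Polynomial F), InM N ∧ M * N = 1 ∧ N * M = 1) :
    ∃ c : Fin n → F, (∀ i, c i ≠ 0) ∧ M = Matrix.diagonal (fun i => Polynomial.C (c i)) := by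
  classical
  obtain ⟨N, hN, hMN, hNM⟩ := hunit
  -- `det M` is a nonzero constant.
  have hdetu : IsUnit M.det := by
    have h1 := congrArg Matrix.det hMN
    rw [Matrix.det_mul, Matrix.det_one] at h1
    exact IsUnit.of_mul_eq_one _ h1
  obtain ⟨u, hu, hC⟩ := Polynomial.isUnit_iff.mp hdetu
  have hu0 : u ≠ 0 := hu.ne_zero
  have hdet0 : M.det ≠ 0 := by
    rw [← hC]
    simpa using hu0
  have hdegdet : M.det.degree = 0 := by
    rw [← hC]
    exact Polynomial.degree_C hu0
  -- every row of `M` is nonzero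
  have hrow : ∀ a, M a ≠ 0 := by
    intro a h
    exact hdet0 (Matrix.det_eq_zero_of_row_eq_zero a (fun j => congrFun h j))
  have hnpos : 0 < n := by omega
  haveI : Nonempty (Fin n) := ⟨⟨0, hnpos⟩⟩
  -- choose for each row a column attaining the row maximum
  have hsup : ∀ a, ∃ b, M a b ≠ 0 ∧
      degMat M a b = Finset.univ.sup (fun c => degMat M a c) := by
    intro a
    obtain ⟨b, -, hb⟩ := Finset.exists_mem_eq_sup Finset.univ
      (Finset.univ_nonempty (α := Fin n)) (fun c => degMat M a c)
    refine ⟨b, ?_, hb.symm⟩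
    intro h0
    -- the sup would be ⊥, contradicting a nonzero entry in the row
    obtain ⟨c, hc⟩ : ∃ c, M a c ≠ 0 := by
      by_contra hall
      push_neg at hall
      exact hrow a (funext hall)
    have h1 : degMat M a c ≤ Finset.univ.sup (fun c => degMat M a c) :=
      Finset.le_sup (Finset.mem_univ c)
    rw [hb] at h1
    have h2 : degMat M a b = ⊥ := by
      unfold degMat
      rw [Matrix.of_apply, h0, Polynomial.degree_zero]
      rfl
    rw [h2, le_bot_iff, degMat_eq_vval M hc] at h1
    exact WithBot.coe_ne_bot h1
  choose bfun hb1 hb2 using hsup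
  -- `bfun` is injective, hence bijective
  have hinj : Function.Injective bfun := by
    intro a a' hEq
    by_contra hne
    exact hsr a a' (bfun a) hne (hrow a) (hrow a') (hb2 a) (hEq ▸ hb2 a')
  have hbij : Function.Bijective bfun := Finite.injective_iff_bijective.mp hinj
  -- the row maximum is attained only at `bfun a`
  have huniq : ∀ a c, degMat M a c = Finset.univ.sup (fun c => degMat M a c) →
      c = bfun a := by
    intro a c hc
    by_contra hne
    obtain ⟨a', ha'⟩ := hbij.surjective c
    have haa' : a ≠ a' := by
      intro h
      exact hne (by rw [h, ha'])
    exact hsr a a' c haa' (hrow a) (hrow a') hc (ha' ▸ hb2 a')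
  -- the permutation sending a column to the row whose maximum it carries
  set π : Equiv.Perm (Fin n) := (Equiv.ofBijective bfun hbij).symm with hπdef
  have hbπ : ∀ i, bfun (π i) = i := fun i =>
    (Equiv.ofBijective bfun hbij).apply_symm_apply i
  have hπb : ∀ a, π (bfun a) = a := fun a =>
    Equiv.ofBijective_symm_apply_apply bfun hbij a
  -- the "main" product
  set P : Polynomial F := ∏ i, M (π i) i with hPdef
  have hPne : ∀ i, M (π i) i ≠ 0 := by
    intro i
    have := hb1 (π i)
    rwa [hbπ i] at this
  have hP0 : P ≠ 0 := Finset.prod_ne_zero_iff.mpr fun i _ => hPne i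
  -- expanding the sum of vvals along a permutation
  have hexp : ∀ ρ : Equiv.Perm (Fin n),
      ∑ i, vval M (ρ i) i
        = (n : ℤ) * ∑ i, (((M (ρ i) i).natDegree : ℕ) : ℤ) := by
    intro ρ
    have hcomp : ∑ i, (((ρ i : ℕ) : ℤ)) = ∑ i : Fin n, ((i : ℕ) : ℤ) :=
      Equiv.sum_comp ρ (fun j => ((j : ℕ) : ℤ))
    unfold vval
    rw [Finset.sum_add_distrib, Finset.sum_sub_distrib, ← Finset.mul_sum]
    rw [hcomp]
    ring
  -- reindexing the row maxima
  have hreidx : ∀ ρ : Equiv.Perm (Fin n),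
      ∑ i, vval M (ρ i) (bfun (ρ i)) = ∑ a, vval M a (bfun a) :=
    fun ρ => Equiv.sum_comp ρ (fun a => vval M a (bfun a))
  -- key : any other permutation gives a product of strictly smaller degree
  have key : ∀ τ : Equiv.Perm (Fin n), τ ≠ π →
      (∏ i, M (τ i) i).degree < P.degree := by
    intro τ hτ
    by_cases hz : ∀ i, M (τ i) i ≠ 0
    · have hle : ∀ i, vval M (τ i) i ≤ vval M (τ i) (bfun (τ i)) := by
        intro i
        have h1 : degMat M (τ i) i ≤ degMat M (τ i) (bfun (τ i)) := by
          rw [hb2 (τ i)]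
          exact Finset.le_sup (Finset.mem_univ i)
        rw [degMat_eq_vval M (hz i), degMat_eq_vval M (hb1 (τ i))] at h1
        exact_mod_cast h1
      obtain ⟨i0, hi0⟩ : ∃ i, τ i ≠ π i := by
        by_contra hcon
        push_neg at hcon
        exact hτ (Equiv.ext hcon)
      have hlt0 : vval M (τ i0) i0 < vval M (τ i0) (bfun (τ i0)) := by
        have hne : degMat M (τ i0) i0
            ≠ Finset.univ.sup (fun c => degMat M (τ i0) c) := by
          intro hcon
          have hEq := huniq (τ i0) i0 hcon
          apply hi0
          have := congrArg π hEq
          rw [hπb (τ i0)] at this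
          exact this.symm
        have h1 : degMat M (τ i0) i0
            ≤ Finset.univ.sup (fun c => degMat M (τ i0) c) :=
          Finset.le_sup (Finset.mem_univ i0)
        have h2 := lt_of_le_of_ne h1 hne
        rw [← hb2 (τ i0)] at h2
        rw [degMat_eq_vval M (hz i0), degMat_eq_vval M (hb1 (τ i0))] at h2
        exact_mod_cast h2
      have hsumlt : ∑ i, vval M (τ i) i < ∑ i, vval M (τ i) (bfun (τ i)) :=
        Finset.sum_lt_sum (fun i _ => hle i) ⟨i0, Finset.mem_univ i0, hlt0⟩
      have hπsum : ∑ i, vval M (π i) i = ∑ a, vval M a (bfun a) := by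
        rw [← hreidx π]
        congr 1
        funext i
        rw [hbπ i]
      have hlt' : ∑ i, vval M (τ i) i < ∑ i, vval M (π i) i := by
        rw [hπsum, ← hreidx τ]
        exact hsumlt
      rw [hexp τ, hexp π] at hlt'
      have hdlt : ∑ i, (((M (τ i) i).natDegree : ℕ) : ℤ)
          < ∑ i, (((M (π i) i).natDegree : ℕ) : ℤ) :=
        lt_of_mul_lt_mul_left hlt' (by positivity)
      have hdltn : ∑ i, (M (τ i) i).natDegree < ∑ i, (M (π i) i).natDegree := by
        exact_mod_cast hdlt
      have hτ0 : (∏ i, M (τ i) i) ≠ 0 := Finset.prod_ne_zero_iff.mpr fun i _ => hz i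
      rw [Polynomial.degree_eq_natDegree hτ0, Polynomial.degree_eq_natDegree hP0,
        Polynomial.natDegree_prod _ _ (fun i _ => hz i), hPdef,
        Polynomial.natDegree_prod _ _ (fun i _ => hPne i)]
      exact_mod_cast hdltn
    · push_neg at hz
      obtain ⟨i, hi⟩ := hz
      have hzero : ∏ i, M (τ i) i = 0 := Finset.prod_eq_zero (Finset.mem_univ i) hi
      rw [hzero, Polynomial.degree_zero]
      exact bot_lt_iff_ne_bot.mpr (fun h => hP0 (Polynomial.degree_eq_bot.mp h))
  -- the degrees of the signed terms
  have hdeg_term : ∀ τ : Equiv.Perm (Fin n),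
      (((Equiv.Perm.sign τ : ℤ) : Polynomial F) * ∏ i, M (τ i) i).degree
        = (∏ i, M (τ i) i).degree := by
    intro τ
    rcases Int.units_eq_one_or (Equiv.Perm.sign τ) with h | h <;> rw [h]
    · simp
    · push_cast
      rw [neg_one_mul, Polynomial.degree_neg]
  -- degree of det = degree of the main product
  have hdet_deg : M.det.degree = P.degree := by
    rw [Matrix.det_apply']
    rw [← Finset.add_sum_erase Finset.univ _ (Finset.mem_univ π)]
    rw [Polynomial.degree_add_eq_left_of_degree_lt, hdeg_term π]
    rw [hdeg_term π]
    refine lt_of_le_of_lt (Polynomial.degree_sum_le _ _) ?_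
    rw [Finset.sup_lt_iff]
    · intro τ hτ
      rw [hdeg_term τ]
      exact key τ (Finset.ne_of_mem_erase hτ)
    · exact bot_lt_iff_ne_bot.mpr (fun h => hP0 (Polynomial.degree_eq_bot.mp h))
  -- hence degree P = 0, so the sum of natDegrees along π is 0
  have hPdeg0 : P.degree = 0 := by rw [← hdet_deg]; exact hdegdet
  have hPnat0 : P.natDegree = 0 := Polynomial.natDegree_eq_zero_iff_degree_le_zero.mpr hPdeg0.le
  have hdsum0 : ∑ i, (M (π i) i).natDegree = 0 := by
    rw [← Polynomial.natDegree_prod _ _ (fun i _ => hPne i)]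
    exact hPnat0
  -- the sum of vvals of the row maxima is 0, and each is nonneg, so each is 0
  have hvsum0 : ∑ a, vval M a (bfun a) = 0 := by
    have h1 : ∑ i, vval M (π i) i = ∑ a, vval M a (bfun a) := by
      rw [← hreidx π]
      congr 1
      funext i
      rw [hbπ i]
    rw [← h1, hexp π]
    have : ∑ i, (((M (π i) i).natDegree : ℕ) : ℤ) = 0 := by
      exact_mod_cast hdsum0
    rw [this, mul_zero]
  have hveach : ∀ a, vval M a (bfun a) = 0 := by
    intro a
    have := (Finset.sum_eq_zero_iff_of_nonneg
      (fun a _ => vval_nonneg M hM (hb1 a))).mp hvsum0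
    exact this a (Finset.mem_univ a)
  have hba : ∀ a, bfun a = a := by
    intro a
    exact ((vval_eq_zero M hM (hb1 a) (hveach a)).1).symm
  -- diagonal entries are nonzero constants
  have hdiag_ne : ∀ a, M a a ≠ 0 := by
    intro a
    have := hb1 a
    rwa [hba a] at this
  have hdiag_deg : ∀ a, (M a a).natDegree = 0 := by
    intro a
    have := (vval_eq_zero M hM (hb1 a) (hveach a)).2
    rwa [hba a] at this
  have hvaa : ∀ a, vval M a a = 0 := by
    intro a
    have := hveach a
    rwa [hba a] at this
  -- off-diagonal entries vanish
  have hoff : ∀ a b : Fin n, a ≠ b → M a b = 0 := by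
    intro a b hab
    by_contra h
    have h1 : degMat M a b ≤ Finset.univ.sup (fun c => degMat M a c) :=
      Finset.le_sup (Finset.mem_univ b)
    rw [← hb2 a, hba a, degMat_eq_vval M h, degMat_eq_vval M (hdiag_ne a)] at h1
    have h2 : vval M a b ≤ vval M a a := by exact_mod_cast h1
    rw [hvaa a] at h2
    have h3 : vval M a b = 0 := le_antisymm h2 (vval_nonneg M hM h)
    exact hab ((vval_eq_zero M hM h h3).1)
  refine ⟨fun i => (M i i).coeff 0, ?_, ?_⟩
  · intro i hi
    have hi' : (M i i).coeff 0 = 0 := hi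
    have hCeq := Polynomial.eq_C_of_natDegree_eq_zero (hdiag_deg i)
    rw [hi', map_zero] at hCeq
    exact hdiag_ne i hCeq
  · refine Matrix.ext fun i j => ?_
    rcases eq_or_ne i j with rfl | hij
    · rw [Matrix.diagonal_apply_eq]
      exact Polynomial.eq_C_of_natDegree_eq_zero (hdiag_deg i)
    · rw [Matrix.diagonal_apply_ne _ hij]
      exact hoff i j hij
end

section
/- Every matrix M ∈ 𝓜 can be brought into semi-reduced form via left multiplication by finitely many elementary units of 𝓜; that is, for every M ∈ 𝓜 there exists a finite product U of elementary units of 𝓜 such that U·M is semi-reduced. -/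
open Polynomial Matrix

/-- Elementary units of `𝓜`: (i) `I + (α−1)E_{aa}` with `α ≠ 0`;
(ii) `I + t^N α E_{ab}` with `N ≥ 0`, `a < b`; (iii) `I + t^N α E_{ab}` with `N > 0`,
`b < a`. -/
def IsElemUnit {F : Type*} [Field F] {n : ℕ}
    (E : Matrix (Fin n) (Fin n) (Polynomial F)) : Prop :=
  (∃ (a : Fin n) (α : F), α ≠ 0 ∧
      E = 1 + Matrix.single a a (Polynomial.C α - 1)) ∨
  (∃ (a b : Fin n) (N : ℕ) (α : F), a < b ∧
      E = 1 + Matrix.single a b (Polynomial.X ^ N * Polynomial.C α)) ∨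
  (∃ (a b : Fin n) (N : ℕ) (α : F), b < a ∧ 0 < N ∧
      E = 1 + Matrix.single a b (Polynomial.X ^ N * Polynomial.C α))

/-! ### Auxiliary development -/

namespace SemiReduceAux

variable {F : Type*} [Field F] {n : ℕ}

/-- The weighted degree of a polynomial placed at position `(a,b)`. -/
noncomputable def wdeg (n : ℕ) (a b : Fin n) {F : Type*} [Field F] (p : Polynomial F) :
    WithBot ℤ :=
  WithBot.map (fun d : ℕ => (n : ℤ) * (d : ℤ) - ((a : ℕ) : ℤ) + ((b : ℕ) : ℤ)) p.degree

lemma degMat_apply (M : Matrix (Fin n) (Fin n) (Polynomial F)) (a b : Fin n) :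
    degMat M a b = wdeg n a b (M a b) := rfl

lemma wdeg_zero (a b : Fin n) : wdeg n a b (0 : Polynomial F) = ⊥ := by simp [wdeg]

lemma wdeg_of_ne (a b : Fin n) {p : Polynomial F} (hp : p ≠ 0) :
    wdeg n a b p = (((n : ℤ) * p.natDegree - ((a:ℕ):ℤ) + ((b:ℕ):ℤ) : ℤ) : WithBot ℤ) := by
  rw [wdeg, degree_eq_natDegree hp]; rfl

lemma wdeg_eq_bot_iff (a b : Fin n) (p : Polynomial F) : wdeg n a b p = ⊥ ↔ p = 0 := by
  simp [wdeg, degree_eq_bot]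

/-- Key arithmetic: residues mod `n` separate columns/rows. -/
lemma key_arith {d e : ℕ} {x y : ℤ} (h : (n:ℤ) * d + x = (n:ℤ) * e + y)
    (h1 : -(n:ℤ) < x - y) (h2 : x - y < n) : d = e ∧ x = y := by
  rcases lt_trichotomy d e with hlt | heq | hgt
  · exfalso
    have hc : ((d:ℤ) + 1) ≤ (e:ℤ) := by exact_mod_cast hlt
    have := mul_le_mul_of_nonneg_left hc (by positivity : (0:ℤ) ≤ (n:ℤ))
    nlinarith [this]
  · refine ⟨heq, ?_⟩
    subst heq; linarith
  · exfalso
    have hc : ((e:ℤ) + 1) ≤ (d:ℤ) := by exact_mod_cast hgt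
    have := mul_le_mul_of_nonneg_left hc (by positivity : (0:ℤ) ≤ (n:ℤ))
    nlinarith [this]

lemma wdeg_mono (a b : Fin n) {p q : Polynomial F} (h : p.degree ≤ q.degree) :
    wdeg n a b p ≤ wdeg n a b q := by
  by_cases hp : p = 0
  · simp [hp, wdeg_zero]
  · have hq : q ≠ 0 := by
      intro hq0; rw [hq0, degree_zero, le_bot_iff, degree_eq_bot] at h; exact hp h
    rw [wdeg_of_ne a b hp, wdeg_of_ne a b hq, WithBot.coe_le_coe]
    have hd : p.natDegree ≤ q.natDegree := natDegree_le_natDegree h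
    have : (n:ℤ) * p.natDegree ≤ (n:ℤ) * q.natDegree := by
      apply mul_le_mul_of_nonneg_left _ (by positivity)
      exact_mod_cast hd
    linarith

lemma wdeg_add_le (a b : Fin n) (p q : Polynomial F) :
    wdeg n a b (p + q) ≤ max (wdeg n a b p) (wdeg n a b q) := by
  rcases le_total p.degree q.degree with h | h
  · exact le_trans (wdeg_mono a b (le_trans (degree_add_le p q) (max_le h le_rfl)))
      (le_max_right _ _)
  · exact le_trans (wdeg_mono a b (le_trans (degree_add_le p q) (max_le le_rfl h)))
      (le_max_left _ _)

lemma wdeg_lt_of_degree_lt (a b : Fin n) {p : Polynomial F} {m : ℕ}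
    (h : p.degree < (m : WithBot ℕ)) :
    wdeg n a b p < (((n:ℤ) * m - ((a:ℕ):ℤ) + ((b:ℕ):ℤ) : ℤ) : WithBot ℤ) := by
  by_cases hp : p = 0
  · rw [hp, wdeg_zero]; exact WithBot.bot_lt_coe _
  · rw [wdeg_of_ne a b hp, WithBot.coe_lt_coe]
    have hd : p.natDegree < m := by
      rwa [← Polynomial.natDegree_lt_iff_degree_lt hp] at h
    have hn : 0 < n := a.pos
    have : (n:ℤ) * (p.natDegree + 1) ≤ (n:ℤ) * m := by
      apply mul_le_mul_of_nonneg_left _ (by positivity)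
      exact_mod_cast hd
    nlinarith [this]

/-- Row measure. -/
noncomputable def rsize (n : ℕ) (s : WithBot ℤ) : ℕ :=
  WithBot.recBotCoe 0 (fun k => (k + n).toNat + 1) s

/-- The total measure of a matrix. -/
noncomputable def mu (M : Matrix (Fin n) (Fin n) (Polynomial F)) : ℕ :=
  ∑ a : Fin n, rsize n (Finset.univ.sup fun c => degMat M a c)

lemma rsize_lt {v : ℤ} {s : WithBot ℤ} (hs : s < (v : WithBot ℤ)) (hv : 0 < v + n) :
    rsize n s < rsize n (v : WithBot ℤ) := by
  induction s using WithBot.recBotCoe with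
  | bot => simp [rsize]
  | coe k =>
    rw [WithBot.coe_lt_coe] at hs
    simp only [rsize, WithBot.recBotCoe_coe]
    omega

lemma pivot_ne_zero (M : Matrix (Fin n) (Fin n) (Polynomial F)) (a b : Fin n)
    (h1 : M a ≠ 0) (hb : degMat M a b = Finset.univ.sup (fun c => degMat M a c)) :
    M a b ≠ 0 := by
  obtain ⟨c, hc⟩ := Function.ne_iff.1 h1
  intro h0
  have hc' : M a c ≠ 0 := by simpa using hc
  have hle : degMat M a c ≤ Finset.univ.sup (fun c => degMat M a c) :=
    Finset.le_sup (Finset.mem_univ c)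
  rw [← hb, degMat_apply, degMat_apply, h0, wdeg_zero, le_bot_iff, wdeg_eq_bot_iff] at hle
  exact hc' hle

/-- The key step, asymmetric version: row `a` has the strictly larger pivot value. -/
lemma step_aux (M : Matrix (Fin n) (Fin n) (Polynomial F)) (hM : InM M)
    (a a' b : Fin n) (ha : a ≠ a') (h1 : M a ≠ 0) (h2 : M a' ≠ 0)
    (hb : degMat M a b = Finset.univ.sup (fun c => degMat M a c))
    (hb' : degMat M a' b = Finset.univ.sup (fun c => degMat M a' c))
    (hv : Finset.univ.sup (fun c => degMat M a' c) < Finset.univ.sup (fun c => degMat M a c)) :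
    ∃ E, IsElemUnit E ∧ InM (E * M) ∧ mu (E * M) < mu M := by
  have hMab : M a b ≠ 0 := pivot_ne_zero M a b h1 hb
  have hMa'b : M a' b ≠ 0 := pivot_ne_zero M a' b h2 hb'
  set d := (M a b).natDegree with hd_def
  set d' := (M a' b).natDegree with hd'_def
  set v : ℤ := (n:ℤ) * d - ((a:ℕ):ℤ) + ((b:ℕ):ℤ) with hv_def
  set v' : ℤ := (n:ℤ) * d' - ((a':ℕ):ℤ) + ((b:ℕ):ℤ) with hv'_def
  have hsa : Finset.univ.sup (fun c => degMat M a c) = (v : WithBot ℤ) := by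
    rw [← hb, degMat_apply, wdeg_of_ne _ _ hMab]
  have hsa' : Finset.univ.sup (fun c => degMat M a' c) = (v' : WithBot ℤ) := by
    rw [← hb', degMat_apply, wdeg_of_ne _ _ hMa'b]
  have hvv' : v' < v := by
    rw [hsa, hsa', WithBot.coe_lt_coe] at hv; exact hv
  -- basic bounds
  have hav : ((a:ℕ):ℤ) < n := by exact_mod_cast a.isLt
  have ha'v : ((a':ℕ):ℤ) < n := by exact_mod_cast a'.isLt
  have hav0 : (0:ℤ) ≤ ((a:ℕ):ℤ) := by positivity
  have ha'v0 : (0:ℤ) ≤ ((a':ℕ):ℤ) := by positivity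
  have hbv : ((b:ℕ):ℤ) < n := by exact_mod_cast b.isLt
  have hbv0 : (0:ℤ) ≤ ((b:ℕ):ℤ) := by positivity
  have hd'd : d' ≤ d := by
    by_contra hcon
    push_neg at hcon
    have hm : (n:ℤ) * (d + 1) ≤ (n:ℤ) * d' := by
      apply mul_le_mul_of_nonneg_left _ (by positivity)
      exact_mod_cast hcon
    rw [hv_def, hv'_def] at hvv'
    nlinarith [hm]
  set N := d - d' with hN_def
  have hNcast : (N:ℤ) = (d:ℤ) - (d':ℤ) := by omega
  have hNpos : a' < a → 0 < N := by
    intro haa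
    have haa' : ((a':ℕ):ℤ) < ((a:ℕ):ℤ) := by exact_mod_cast haa
    by_contra hcon
    have hN0 : N = 0 := by omega
    have hdd : (d:ℤ) = (d':ℤ) := by omega
    rw [hv_def, hv'_def, hdd] at hvv'
    linarith
  set lc := (M a b).leadingCoeff with hlc_def
  set lc' := (M a' b).leadingCoeff with hlc'_def
  have hlc : lc ≠ 0 := leadingCoeff_ne_zero.2 hMab
  have hlc' : lc' ≠ 0 := leadingCoeff_ne_zero.2 hMa'b
  set α : F := -(lc / lc') with hα_def
  have hα : α ≠ 0 := by
    rw [hα_def, neg_ne_zero]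
    exact div_ne_zero hlc hlc'
  set p : Polynomial F := X ^ N * C α with hp_def
  have hpne : p ≠ 0 := mul_ne_zero (pow_ne_zero _ X_ne_zero) (C_ne_zero.2 hα)
  have hdegp : p.degree = (N : WithBot ℕ) := by
    rw [hp_def, degree_mul, degree_X_pow, degree_C hα, add_zero]
  set E := 1 + single a a' p with hE_def
  have hrow : ∀ i j, (E * M) i j = if i = a then M a j + p * M a' j else M i j := by
    intro i j
    rw [hE_def, add_mul, one_mul, Matrix.add_apply]
    by_cases hi : i = a
    · subst hi; rw [if_pos rfl, Matrix.single_mul_apply_same]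
    · rw [if_neg hi, Matrix.single_mul_apply_of_ne _ _ _ _ _ hi, add_zero]
  have hunit : IsElemUnit E := by
    rcases lt_or_gt_of_ne ha with hlt | hgt
    · exact Or.inr (Or.inl ⟨a, a', N, α, hlt, by rw [hE_def, hp_def]⟩)
    · exact Or.inr (Or.inr ⟨a, a', N, α, hgt, hNpos hgt, by rw [hE_def, hp_def]⟩)
  have hInM : InM (E * M) := by
    intro i c hc
    rw [hrow]
    by_cases hi : i = a
    · rw [if_pos hi, eval_add, hM a c (lt_of_lt_of_eq hc hi), zero_add, hp_def, eval_mul,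
        eval_mul, eval_pow, eval_C, eval_X]
      by_cases hN0 : N = 0
      · have haa' : a < a' := by
          rcases lt_or_gt_of_ne ha with h | h
          · exact h
          · exact absurd (hNpos h) (by omega)
        rw [hM a' c (lt_trans (lt_of_lt_of_eq hc hi) haa'), mul_zero]
      · rw [zero_pow hN0, zero_mul, zero_mul]
    · rw [if_neg hi]; exact hM i c hc
  -- strict upper bounds on row a of the new matrix
  have hub' : ∀ c, degMat M a' c ≤ (v' : WithBot ℤ) := by
    intro c
    rw [← hsa']
    exact Finset.le_sup (Finset.mem_univ c)
  have huniq : ∀ c : Fin n, c ≠ b → degMat M a c < (v : WithBot ℤ) := by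
    intro c hcb
    refine lt_of_le_of_ne (by rw [← hsa]; exact Finset.le_sup (Finset.mem_univ c)) ?_
    intro heq
    have hc0 : M a c ≠ 0 := by
      intro h0
      rw [degMat_apply, h0, wdeg_zero] at heq
      exact WithBot.bot_ne_coe heq
    rw [degMat_apply, wdeg_of_ne _ _ hc0] at heq
    have heq' : (n:ℤ) * (M a c).natDegree - ((a:ℕ):ℤ) + ((c:ℕ):ℤ) = v :=
      WithBot.coe_injective heq
    have hcv : ((c:ℕ):ℤ) < n := by exact_mod_cast c.isLt
    have hcv0 : (0:ℤ) ≤ ((c:ℕ):ℤ) := by positivity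
    have hkey := key_arith (n := n) (d := (M a c).natDegree) (e := d)
      (x := ((c:ℕ):ℤ) - ((a:ℕ):ℤ)) (y := ((b:ℕ):ℤ) - ((a:ℕ):ℤ))
      (by rw [hv_def] at heq'; linarith) (by linarith) (by linarith)
    have : ((c:ℕ):ℤ) = ((b:ℕ):ℤ) := by linarith [hkey.2]
    exact hcb (Fin.ext (by exact_mod_cast this))
  have huniq' : ∀ c : Fin n, c ≠ b → degMat M a' c < (v' : WithBot ℤ) := by
    intro c hcb
    refine lt_of_le_of_ne (hub' c) ?_
    intro heq
    have hc0 : M a' c ≠ 0 := by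
      intro h0
      rw [degMat_apply, h0, wdeg_zero] at heq
      exact WithBot.bot_ne_coe heq
    rw [degMat_apply, wdeg_of_ne _ _ hc0] at heq
    have heq' : (n:ℤ) * (M a' c).natDegree - ((a':ℕ):ℤ) + ((c:ℕ):ℤ) = v' :=
      WithBot.coe_injective heq
    have hcv : ((c:ℕ):ℤ) < n := by exact_mod_cast c.isLt
    have hcv0 : (0:ℤ) ≤ ((c:ℕ):ℤ) := by positivity
    have hkey := key_arith (n := n) (d := (M a' c).natDegree) (e := d')
      (x := ((c:ℕ):ℤ) - ((a':ℕ):ℤ)) (y := ((b:ℕ):ℤ) - ((a':ℕ):ℤ))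
      (by rw [hv'_def] at heq'; linarith) (by linarith) (by linarith)
    have : ((c:ℕ):ℤ) = ((b:ℕ):ℤ) := by linarith [hkey.2]
    exact hcb (Fin.ext (by exact_mod_cast this))
  have hpiece : ∀ c : Fin n, c ≠ b → wdeg n a c (p * M a' c) < (v : WithBot ℤ) := by
    intro c hcb
    by_cases h0 : M a' c = 0
    · rw [h0, mul_zero, wdeg_zero]; exact WithBot.bot_lt_coe _
    · have hne : p * M a' c ≠ 0 := mul_ne_zero hpne h0
      have hdeg : (p * M a' c).natDegree = N + (M a' c).natDegree := by
        rw [natDegree_mul hpne h0]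
        congr 1
        exact natDegree_eq_of_degree_eq_some hdegp
      rw [wdeg_of_ne _ _ hne, WithBot.coe_lt_coe, hdeg]
      have h2' := huniq' c hcb
      rw [degMat_apply, wdeg_of_ne _ _ h0, WithBot.coe_lt_coe] at h2'
      have hexp : (n:ℤ) * ((N:ℤ) + ((M a' c).natDegree : ℤ))
          = (n:ℤ) * N + (n:ℤ) * ((M a' c).natDegree : ℤ) := by ring
      have hNn : (n:ℤ) * N = (n:ℤ) * d - (n:ℤ) * d' := by
        rw [hNcast]; ring
      rw [hv_def]
      rw [hv'_def] at h2'
      push_cast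
      push_cast at hexp hNn h2'
      linarith [hexp, hNn, h2']
  have hrowlt : ∀ c, degMat (E * M) a c < (v : WithBot ℤ) := by
    intro c
    rw [degMat_apply, hrow, if_pos rfl]
    by_cases hcb : c = b
    · subst hcb
      have hCd : (lc / lc') ≠ 0 := div_ne_zero hlc hlc'
      have hq : M a c + p * M a' c = M a c - (X ^ N * C (lc / lc') * M a' c) := by
        rw [hp_def, hα_def, map_neg]; ring
      rw [hq]
      have hq0 : X ^ N * C (lc / lc') ≠ 0 :=
        mul_ne_zero (pow_ne_zero _ X_ne_zero) (C_ne_zero.2 hCd)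
      have hdq : (X ^ N * C (lc / lc') * M a' c).degree = (M a c).degree := by
        rw [degree_mul, degree_mul, degree_X_pow, degree_C hCd, add_zero,
          degree_eq_natDegree hMa'b, degree_eq_natDegree hMab]
        rw [show ((N : WithBot ℕ)) + ((d' : ℕ) : WithBot ℕ) = ((N + d' : ℕ) : WithBot ℕ) by
          exact_mod_cast rfl]
        congr 1
        omega
      have hlcq : (M a c).leadingCoeff = (X ^ N * C (lc / lc') * M a' c).leadingCoeff := by
        rw [leadingCoeff_mul, leadingCoeff_mul, leadingCoeff_X_pow, leadingCoeff_C, one_mul,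
          ← hlc'_def, div_mul_cancel₀ _ hlc']
      have hlt := degree_sub_lt hdq.symm hMab hlcq
      rw [degree_eq_natDegree hMab] at hlt
      have hw := wdeg_lt_of_degree_lt a c hlt
      rw [hv_def]
      exact hw
    · refine lt_of_le_of_lt (wdeg_add_le a c _ _) (max_lt ?_ ?_)
      · have h := huniq c hcb
        rwa [degMat_apply] at h
      · exact hpiece c hcb
  have hvpos : (0:ℤ) < v + n := by
    have : (0:ℤ) ≤ (n:ℤ) * d := by positivity
    rw [hv_def]; linarith
  have hsup_lt : (Finset.univ.sup fun c => degMat (E * M) a c) < (v : WithBot ℤ) := by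
    rw [Finset.sup_lt_iff (WithBot.bot_lt_coe v)]
    intro c _; exact hrowlt c
  have hsup_eq : ∀ i, i ≠ a →
      (Finset.univ.sup fun c => degMat (E * M) i c)
        = Finset.univ.sup fun c => degMat M i c := by
    intro i hi
    apply Finset.sup_congr rfl
    intro c _
    rw [degMat_apply, degMat_apply, hrow, if_neg hi]
  refine ⟨E, hunit, hInM, ?_⟩
  unfold mu
  apply Finset.sum_lt_sum
  · intro i _
    by_cases hi : i = a
    · subst hi
      rw [hsa]
      exact le_of_lt (rsize_lt hsup_lt hvpos)
    · rw [hsup_eq i hi]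
  · exact ⟨a, Finset.mem_univ a, by rw [hsa]; exact rsize_lt hsup_lt hvpos⟩

/-- Symmetrized step. -/
lemma step (M : Matrix (Fin n) (Fin n) (Polynomial F)) (hM : InM M)
    (h : ¬ SemiReduced M) :
    ∃ E, IsElemUnit E ∧ InM (E * M) ∧ mu (E * M) < mu M := by
  unfold SemiReduced at h
  push_neg at h
  simp only [not_false_iff, and_true] at h
  obtain ⟨a, a', b, ha, h1, h2, hb, hb'⟩ := h
  have hMab : M a b ≠ 0 := pivot_ne_zero M a b h1 hb
  have hMa'b : M a' b ≠ 0 := pivot_ne_zero M a' b h2 hb'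
  set d := (M a b).natDegree with hd_def
  set d' := (M a' b).natDegree with hd'_def
  set v : ℤ := (n:ℤ) * d - ((a:ℕ):ℤ) + ((b:ℕ):ℤ) with hv_def
  set v' : ℤ := (n:ℤ) * d' - ((a':ℕ):ℤ) + ((b:ℕ):ℤ) with hv'_def
  have hsa : Finset.univ.sup (fun c => degMat M a c) = (v : WithBot ℤ) := by
    rw [← hb, degMat_apply, wdeg_of_ne _ _ hMab]
  have hsa' : Finset.univ.sup (fun c => degMat M a' c) = (v' : WithBot ℤ) := by
    rw [← hb', degMat_apply, wdeg_of_ne _ _ hMa'b]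
  have hav : ((a:ℕ):ℤ) < n := by exact_mod_cast a.isLt
  have ha'v : ((a':ℕ):ℤ) < n := by exact_mod_cast a'.isLt
  have hav0 : (0:ℤ) ≤ ((a:ℕ):ℤ) := by positivity
  have ha'v0 : (0:ℤ) ≤ ((a':ℕ):ℤ) := by positivity
  have hne : v ≠ v' := by
    intro heq
    have hkey := key_arith (n := n) (d := d) (e := d')
      (x := ((b:ℕ):ℤ) - ((a:ℕ):ℤ)) (y := ((b:ℕ):ℤ) - ((a':ℕ):ℤ))
      (by rw [hv_def, hv'_def] at heq; linarith) (by linarith) (by linarith)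
    have : ((a:ℕ):ℤ) = ((a':ℕ):ℤ) := by linarith [hkey.2]
    exact ha (Fin.ext (by exact_mod_cast this))
  rcases hne.lt_or_gt with hlt | hgt
  · exact step_aux M hM a' a b ha.symm h2 h1 hb' hb
      (by rw [hsa, hsa']; exact_mod_cast hlt)
  · exact step_aux M hM a a' b ha h1 h2 hb hb'
      (by rw [hsa, hsa']; exact_mod_cast hgt)

end SemiReduceAux

/-- Every matrix `M ∈ 𝓜` can be brought into semi-reduced form via left
multiplication by finitely many elementary units of `𝓜`. -/
theorem semiReduce_by_elemUnits {F : Type*} [Field F] [Fintype F] {n : ℕ} (hn : 2 ≤ n)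
    (M : Matrix (Fin n) (Fin n) (Polynomial F)) (hM : InM M) :
    ∃ L : List (Matrix (Fin n) (Fin n) (Polynomial F)),
      (∀ E ∈ L, IsElemUnit E) ∧ SemiReduced (L.prod * M) := by
  suffices h : ∀ (m : ℕ) (M : Matrix (Fin n) (Fin n) (Polynomial F)), InM M →
      SemiReduceAux.mu M ≤ m →
      ∃ L : List (Matrix (Fin n) (Fin n) (Polynomial F)),
        (∀ E ∈ L, IsElemUnit E) ∧ SemiReduced (L.prod * M) by
    exact h (SemiReduceAux.mu M) M hM le_rfl
  intro m
  induction m with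
  | zero =>
    intro M hM hm
    by_cases hs : SemiReduced M
    · exact ⟨[], by simp, by simpa using hs⟩
    · obtain ⟨E, -, -, hlt⟩ := SemiReduceAux.step M hM hs
      omega
  | succ m ih =>
    intro M hM hm
    by_cases hs : SemiReduced M
    · exact ⟨[], by simp, by simpa using hs⟩
    · obtain ⟨E, hE, hInM, hlt⟩ := SemiReduceAux.step M hM hs
      obtain ⟨L, hL, hsr⟩ := ih (E * M) hInM (by omega)
      refine ⟨L ++ [E], ?_, ?_⟩
      · intro E' hE'
        rcases List.mem_append.1 hE' with h | h
        · exact hL E' h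
        · rw [List.mem_singleton] at h; subst h; exact hE
      · rwa [List.prod_append, List.prod_singleton, mul_assoc]
end

section
/- Every unit of the ring 𝓜 can be written as a finite product of elementary units of 𝓜. -/
open Polynomial Matrix

namespace ElemAux

variable {F : Type*} [Field F] {n : ℕ}

def Gen (M : Matrix (Fin n) (Fin n) (Polynomial F)) : Prop :=
  ∃ L : List (Matrix (Fin n) (Fin n) (Polynomial F)),
    (∀ E ∈ L, IsElemUnit E) ∧ M = L.prod

lemma Gen.one : Gen (1 : Matrix (Fin n) (Fin n) (Polynomial F)) :=
  ⟨[], by simp, by simp⟩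

lemma Gen.mul {M N : Matrix (Fin n) (Fin n) (Polynomial F)} (hM : Gen M) (hN : Gen N) :
    Gen (M * N) := by
  obtain ⟨L1, h1, rfl⟩ := hM
  obtain ⟨L2, h2, rfl⟩ := hN
  refine ⟨L1 ++ L2, ?_, (List.prod_append).symm⟩
  intro E hE
  rcases List.mem_append.1 hE with h | h
  exacts [h1 E h, h2 E h]

lemma Gen.of_elem {E : Matrix (Fin n) (Fin n) (Polynomial F)} (h : IsElemUnit E) : Gen E :=
  ⟨[E], by simpa using h, by simp⟩

lemma one_add_std_sub_one (a : Fin n) (c : Polynomial F) :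
    (1 : Matrix (Fin n) (Fin n) (Polynomial F)) + Matrix.single a a (c - 1) =
      Matrix.diagonal (fun i => if i = a then c else 1) := by
  ext i k
  rcases eq_or_ne i k with rfl | hik
  · rcases eq_or_ne i a with rfl | hia
    · simp [Matrix.single, Matrix.diagonal, Matrix.one_apply]
    · simp [Matrix.single, Matrix.diagonal, Matrix.one_apply, hia, Ne.symm hia]
  · have : ¬(a = i ∧ a = k) := by rintro ⟨rfl, rfl⟩; exact hik rfl
    simp [Matrix.single, Matrix.diagonal, Matrix.one_apply, hik, this]

lemma diag_unit_mul (a : Fin n) (α β : F) (h : β * α = 1) :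
    Matrix.diagonal (fun i : Fin n => if i = a then Polynomial.C β else 1) *
      Matrix.diagonal (fun i : Fin n => if i = a then Polynomial.C α else 1) = 1 := by
  rw [Matrix.diagonal_mul_diagonal]
  ext i k
  rcases eq_or_ne i k with rfl | hik
  · rcases eq_or_ne i a with rfl | hia
    · simp [← Polynomial.C_mul, h]
    · simp [hia]
  · simp [Matrix.diagonal_apply_ne _ hik, Matrix.one_apply_ne hik]

lemma transvection_neg_cancel (a b : Fin n) (hab : a ≠ b) (v : Polynomial F) :
    (1 + Matrix.single a b (-v)) * (1 + Matrix.single a b v) = 1 := by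
  rw [show (1 : Matrix (Fin n) (Fin n) (Polynomial F)) + Matrix.single a b v =
      Matrix.transvection a b v from rfl,
    show (1 : Matrix (Fin n) (Fin n) (Polynomial F)) + Matrix.single a b (-v) =
      Matrix.transvection a b (-v) from rfl,
    Matrix.transvection_mul_transvection_same a b hab]
  simp

lemma elem_inv {E : Matrix (Fin n) (Fin n) (Polynomial F)} (h : IsElemUnit E) :
    ∃ E', IsElemUnit E' ∧ E' * E = 1 ∧ E * E' = 1 := by
  rcases h with ⟨a, α, hα, rfl⟩ | ⟨a, b, N, α, hab, rfl⟩ | ⟨a, b, N, α, hba, hN, rfl⟩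
  · refine ⟨1 + Matrix.single a a (Polynomial.C α⁻¹ - 1),
      Or.inl ⟨a, α⁻¹, inv_ne_zero hα, rfl⟩, ?_, ?_⟩
    · rw [one_add_std_sub_one, one_add_std_sub_one]
      exact diag_unit_mul a α α⁻¹ (inv_mul_cancel₀ hα)
    · rw [one_add_std_sub_one, one_add_std_sub_one]
      exact diag_unit_mul a α⁻¹ α (mul_inv_cancel₀ hα)
  · have hneg : Polynomial.X ^ N * Polynomial.C (-α) = -(Polynomial.X ^ N * Polynomial.C α) := by
      rw [Polynomial.C_neg, mul_neg]
    refine ⟨1 + Matrix.single a b (Polynomial.X ^ N * Polynomial.C (-α)),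
      Or.inr (Or.inl ⟨a, b, N, -α, hab, rfl⟩), ?_, ?_⟩
    · rw [hneg]; exact transvection_neg_cancel a b (ne_of_lt hab) _
    · rw [hneg]
      have := transvection_neg_cancel a b (ne_of_lt hab) (-(Polynomial.X ^ N * Polynomial.C α))
      rwa [neg_neg] at this
  · have hneg : Polynomial.X ^ N * Polynomial.C (-α) = -(Polynomial.X ^ N * Polynomial.C α) := by
      rw [Polynomial.C_neg, mul_neg]
    refine ⟨1 + Matrix.single a b (Polynomial.X ^ N * Polynomial.C (-α)),
      Or.inr (Or.inr ⟨a, b, N, -α, hba, hN, rfl⟩), ?_, ?_⟩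
    · rw [hneg]; exact transvection_neg_cancel a b (ne_of_gt hba) _
    · rw [hneg]
      have := transvection_neg_cancel a b (ne_of_gt hba) (-(Polynomial.X ^ N * Polynomial.C α))
      rwa [neg_neg] at this

lemma Gen.inv {M : Matrix (Fin n) (Fin n) (Polynomial F)} (h : Gen M) :
    ∃ M', Gen M' ∧ M' * M = 1 ∧ M * M' = 1 := by
  obtain ⟨L, hL, rfl⟩ := h
  induction L with
  | nil => exact ⟨1, Gen.one, by simp, by simp⟩
  | cons E L IH =>
    obtain ⟨E', hE', hl, hr⟩ := elem_inv (hL E (List.mem_cons_self))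
    obtain ⟨M', hM', hl', hr'⟩ := IH (fun x hx => hL x (List.mem_cons_of_mem _ hx))
    refine ⟨M' * E', hM'.mul (Gen.of_elem hE'), ?_, ?_⟩
    · rw [List.prod_cons, show M' * E' * (E * L.prod) = M' * (E' * E) * L.prod by
        noncomm_ring, hl, mul_one, hl']
    · rw [List.prod_cons, show E * L.prod * (M' * E') = E * (L.prod * M') * E' by
        noncomm_ring, hr', mul_one, hr]

lemma isElemUnit_transvection_monomial (a b : Fin n) (i : ℕ) (c : F)
    (h : a < b ∨ (b < a ∧ 0 < i)) :
    IsElemUnit (Matrix.transvection a b ((Polynomial.monomial i) c)) := by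
  have hm : (Polynomial.monomial i) c = Polynomial.X ^ i * Polynomial.C c := by
    rw [← Polynomial.C_mul_X_pow_eq_monomial, mul_comm]
  rcases h with h | ⟨h, hi⟩
  · exact Or.inr (Or.inl ⟨a, b, i, c, h, by rw [Matrix.transvection, hm]⟩)
  · exact Or.inr (Or.inr ⟨a, b, i, c, h, hi, by rw [Matrix.transvection, hm]⟩)

lemma Gen_transvection_of_lt (a b : Fin n) (hab : a < b) (f : Polynomial F) :
    Gen (Matrix.transvection a b f) := by
  induction f using Polynomial.induction_on' with
  | add p q hp hq =>
    rw [← Matrix.transvection_mul_transvection_same a b (ne_of_lt hab)]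
    exact hp.mul hq
  | monomial i c =>
    exact Gen.of_elem (isElemUnit_transvection_monomial a b i c (Or.inl hab))

lemma Gen_transvection_of_gt (a b : Fin n) (hba : b < a) (f : Polynomial F)
    (hf : f.eval 0 = 0) : Gen (Matrix.transvection a b f) := by
  have hX : Polynomial.X ∣ f := Polynomial.X_dvd_iff.2 (by
    rw [Polynomial.coeff_zero_eq_eval_zero, hf])
  obtain ⟨g, rfl⟩ := hX
  clear hf
  induction g using Polynomial.induction_on' with
  | add p q hp hq =>
    rw [mul_add, ← Matrix.transvection_mul_transvection_same a b (ne_of_gt hba)]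
    exact hp.mul hq
  | monomial i c =>
    rw [Polynomial.X_mul_monomial]
    exact Gen.of_elem (isElemUnit_transvection_monomial a b (i + 1) c
      (Or.inr ⟨hba, Nat.succ_pos i⟩))

lemma Gen_transvection (a b : Fin n) (hab : a ≠ b) (f : Polynomial F)
    (hlow : b < a → f.eval 0 = 0) : Gen (Matrix.transvection a b f) := by
  rcases lt_or_gt_of_ne hab with h | h
  · exact Gen_transvection_of_lt a b h f
  · exact Gen_transvection_of_gt a b h f (hlow h)

lemma eval0_diag_ne_zero {M : Matrix (Fin n) (Fin n) (Polynomial F)} (hInM : InM M)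
    (hdet : IsUnit M.det) (a : Fin n) : (M a a).eval 0 ≠ 0 := by
  have hmap : (Polynomial.evalRingHom (0 : F)) M.det = (M.map (Polynomial.evalRingHom 0)).det :=
    RingHom.map_det _ M
  have htri : (M.map (Polynomial.evalRingHom (0 : F))).BlockTriangular id := by
    intro i k hik
    simpa [Matrix.map_apply] using hInM i k hik
  have hprod : (M.map (Polynomial.evalRingHom (0 : F))).det =
      ∏ i, (M i i).eval 0 := by
    rw [Matrix.det_of_upperTriangular htri]
    simp [Matrix.map_apply]
  have hne : (M.det).eval 0 ≠ 0 := by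
    have := hdet.map (Polynomial.evalRingHom (0 : F))
    simpa using this.ne_zero
  intro h0
  apply hne
  have : ∏ i, (M i i).eval 0 = 0 := Finset.prod_eq_zero (Finset.mem_univ a) h0
  calc (M.det).eval 0 = (Polynomial.evalRingHom (0:F)) M.det := rfl
    _ = ∏ i, (M i i).eval 0 := by rw [hmap, hprod]
    _ = 0 := this

lemma clear_entry (j a : Fin n) (hja : j < a) (d : ℕ) :
    ∀ M : Matrix (Fin n) (Fin n) (Polynomial F),
    (M j j).natDegree = d → (M j j).eval 0 ≠ 0 → (M a j).eval 0 = 0 →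
    ∃ P : Matrix (Fin n) (Fin n) (Polynomial F), Gen P ∧ P.det = 1 ∧
      (P * M) a j = 0 ∧
      ((P * M) j j).eval 0 ≠ 0 ∧
      (∀ i, i ≠ j → i ≠ a → ∀ c, (P * M) i c = M i c) ∧
      (∀ c, M j c = 0 → M a c = 0 → (P * M) j c = 0 ∧ (P * M) a c = 0) ∧
      (∀ c, ((P * M) a c).eval 0 = (M a c).eval 0) := by
  induction d using Nat.strong_induction_on with
  | _ d IH =>
  intro M hdeg heval hq0
  have haj : a ≠ j := ne_of_gt hja
  have hjan : j ≠ a := ne_of_lt hja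
  by_cases hq : M a j = 0
  · exact ⟨1, Gen.one, by simp, by simp [hq], by simpa using heval, by simp,
      fun c h1 h2 => by simp [h1, h2], by simp⟩
  set p := M j j with hp_def
  have hp : p ≠ 0 := fun h => heval (by rw [h]; simp)
  have hgX : M a j = Polynomial.X * (M a j /ₘ Polynomial.X) := by
    conv_lhs => rw [← Polynomial.modByMonic_add_div (M a j) Polynomial.X]
    rw [Polynomial.modByMonic_X, hq0, Polynomial.C_0, zero_add]
  set g := M a j /ₘ Polynomial.X with hg_def
  set p' := p * Polynomial.C (p.leadingCoeff)⁻¹ with hp'_def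
  have hmp' : p'.Monic := Polynomial.monic_mul_leadingCoeff_inv hp
  set s := g /ₘ p' with hs_def
  set r := g %ₘ p' with hr_def
  have hg_eq : g = p' * s + r := by
    have h := Polynomial.modByMonic_add_div g p'
    rw [← hs_def, ← hr_def] at h
    linear_combination -h
  set f1 := -(Polynomial.X * (Polynomial.C (p.leadingCoeff)⁻¹ * s)) with hf1_def
  have hf1e : f1.eval 0 = 0 := by simp [hf1_def]
  set P1 := Matrix.transvection a j f1 with hP1_def
  have hM1row : ∀ i, i ≠ a → ∀ c, (P1 * M) i c = M i c := fun i hi c =>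
    Matrix.transvection_mul_apply_of_ne a j i c hi f1 M
  have hM1a : ∀ c, (P1 * M) a c = M a c + f1 * M j c := fun c =>
    Matrix.transvection_mul_apply_same a j c f1 M
  have hM1aj : (P1 * M) a j = Polynomial.X * r := by
    rw [hM1a j, hgX, hg_eq, hf1_def, hp'_def, hp_def]
    ring
  have hdetP1 : P1.det = 1 := Matrix.det_transvection_of_ne a j haj f1
  have hGenP1 : Gen P1 := Gen_transvection a j haj f1 (fun _ => hf1e)
  by_cases hr0 : r = 0
  · refine ⟨P1, hGenP1, hdetP1, by rw [hM1aj, hr0, mul_zero], ?_, ?_, ?_, ?_⟩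
    · rw [hM1row j hjan j]; exact heval
    · intro i hij hia c; exact hM1row i hia c
    · intro c hjc hac
      refine ⟨by rw [hM1row j hjan c]; exact hjc, by rw [hM1a c, hjc, hac]; ring⟩
    · intro c
      rw [hM1a c]
      simp [hf1e]
  -- r ≠ 0 : second operation then recursion
  have hdr : r.degree < p.degree := by
    have h1 : r.degree < p'.degree := by
      rw [hr_def]; exact Polynomial.degree_modByMonic_lt g hmp'
    rwa [hp'_def, Polynomial.degree_mul_leadingCoeff_inv p hp] at h1
  have hrn : r.natDegree < p.natDegree := Polynomial.natDegree_lt_natDegree hr0 hdr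
  set u := Polynomial.X * (r * Polynomial.C (r.leadingCoeff)⁻¹) with hu_def
  have hmu : u.Monic := Polynomial.monic_X.mul (Polynomial.monic_mul_leadingCoeff_inv hr0)
  set s2 := p /ₘ u with hs2_def
  set p2 := p %ₘ u with hp2_def
  have hp_eq : p = u * s2 + p2 := by
    have h := Polynomial.modByMonic_add_div p u
    rw [← hs2_def, ← hp2_def] at h
    linear_combination -h
  have hue : u.eval 0 = 0 := by simp [hu_def]
  have hp2e : p2.eval 0 = p.eval 0 := by
    have h2 : p2 = p - u * s2 := by linear_combination -hp_eq
    rw [h2]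
    simp [hue]
  have hp2ne : p2 ≠ 0 := by
    intro h
    apply heval
    rw [← hp2e, h]
    simp
  have hdp2 : p2.natDegree < d := by
    have h1 : p2.degree < u.degree := by
      rw [hp2_def]; exact Polynomial.degree_modByMonic_lt p hmu
    have h2 : p2.natDegree < u.natDegree := Polynomial.natDegree_lt_natDegree hp2ne h1
    have h3 : u.natDegree = r.natDegree + 1 := by
      rw [hu_def, Polynomial.natDegree_mul Polynomial.X_ne_zero
        (Polynomial.monic_mul_leadingCoeff_inv hr0).ne_zero,
        Polynomial.natDegree_X, Polynomial.natDegree_mul_leadingCoeff_inv r hr0]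
      omega
    omega
  rw [hu_def] at hp_eq
  set f2 := -(Polynomial.C (r.leadingCoeff)⁻¹ * s2) with hf2_def
  set P2 := Matrix.transvection j a f2 with hP2_def
  have hM2row : ∀ i, i ≠ j → ∀ c, (P2 * (P1 * M)) i c = (P1 * M) i c := fun i hi c =>
    Matrix.transvection_mul_apply_of_ne j a i c hi f2 (P1 * M)
  have hM2j : ∀ c, (P2 * (P1 * M)) j c = (P1 * M) j c + f2 * (P1 * M) a c := fun c =>
    Matrix.transvection_mul_apply_same j a c f2 (P1 * M)
  have hM2jj : (P2 * (P1 * M)) j j = p2 := by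
    rw [hM2j j, hM1row j hjan j, ← hp_def, hM1aj, hf2_def]
    linear_combination hp_eq
  obtain ⟨P3, hGen3, hdet3, h3aj, h3jj, h3rows, h3z, h3ev⟩ :=
    IH p2.natDegree hdp2 (P2 * (P1 * M)) (by rw [hM2jj]) (by rw [hM2jj, hp2e]; exact heval)
      (by rw [hM2row a haj j, hM1aj]; simp)
  have hdetP2 : P2.det = 1 := Matrix.det_transvection_of_ne j a hjan f2
  have hGenP2 : Gen P2 := Gen_transvection j a hjan f2 (fun h => absurd h (asymm hja))
  have hassoc : P3 * (P2 * P1) * M = P3 * (P2 * (P1 * M)) := by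
    rw [Matrix.mul_assoc, Matrix.mul_assoc]
  refine ⟨P3 * (P2 * P1), hGen3.mul (hGenP2.mul hGenP1), ?_, ?_, ?_, ?_, ?_, ?_⟩
  · rw [Matrix.det_mul, Matrix.det_mul, hdet3, hdetP2, hdetP1]; ring
  · rw [hassoc]; exact h3aj
  · rw [hassoc]; exact h3jj
  · intro i hij hia c
    rw [hassoc, h3rows i hij hia c, hM2row i hij c, hM1row i hia c]
  · intro c hjc hac
    have h1j : (P1 * M) j c = 0 := by rw [hM1row j hjan c]; exact hjc
    have h1a : (P1 * M) a c = 0 := by rw [hM1a c, hjc, hac]; ring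
    have h2j : (P2 * (P1 * M)) j c = 0 := by rw [hM2j c, h1j, h1a]; ring
    have h2a : (P2 * (P1 * M)) a c = 0 := by rw [hM2row a haj c]; exact h1a
    rw [hassoc]
    exact h3z c h2j h2a
  · intro c
    rw [hassoc, h3ev c, hM2row a haj c, hM1a c]
    simp [hf1e]

lemma clear_col (j : Fin n) : ∀ m : ℕ, ∀ M : Matrix (Fin n) (Fin n) (Polynomial F),
    InM M → IsUnit M.det →
    (∀ a b : Fin n, a ≠ b → ((a : ℕ) < (j : ℕ) ∨ (b : ℕ) < (j : ℕ)) → M a b = 0) →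
    (∀ a : Fin n, (a : ℕ) < (j : ℕ) → M a a = 1) →
    (∀ a : Fin n, j < a → (a : ℕ) < n - m → M a j = 0) →
    ∃ P : Matrix (Fin n) (Fin n) (Polynomial F), Gen P ∧ (P * M).det = M.det ∧
      InM (P * M) ∧
      (∀ a b : Fin n, a ≠ b → ((a : ℕ) < (j : ℕ) ∨ (b : ℕ) < (j : ℕ)) → (P * M) a b = 0) ∧
      (∀ a : Fin n, (a : ℕ) < (j : ℕ) → (P * M) a a = 1) ∧
      (∀ a : Fin n, j < a → (P * M) a j = 0) := by
  intro m
  induction m with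
  | zero =>
    intro M hInM hdet hRed hdiag hclr
    exact ⟨1, Gen.one, by simp, by simpa using hInM, by simpa using hRed,
      by simpa using hdiag, fun a ha => by
        simpa using hclr a ha (by have := a.isLt; omega)⟩
  | succ m IHm =>
    intro M hInM hdet hRed hdiag hclr
    by_cases hc : (j : ℕ) < n - m - 1
    · have hin : n - m - 1 < n := by have := j.isLt; omega
      set i : Fin n := ⟨n - m - 1, hin⟩ with hi_def
      have hji : j < i := Fin.lt_def.mpr hc
      have hjiv : (j : ℕ) < (i : ℕ) := hc
      have hq0 : (M i j).eval 0 = 0 := hInM i j hji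
      have heval : (M j j).eval 0 ≠ 0 := eval0_diag_ne_zero hInM hdet j
      obtain ⟨P1, hGen1, hdet1, h1ij, h1jj, h1rows, h1z, h1ev⟩ :=
        clear_entry j i hji (M j j).natDegree M rfl heval hq0
      have hdetM1 : (P1 * M).det = M.det := by rw [Matrix.det_mul, hdet1, one_mul]
      have hInM1 : InM (P1 * M) := by
        intro x y hyx
        have hyxv : (y : ℕ) < (x : ℕ) := Fin.lt_def.mp hyx
        by_cases hxj : x = j
        · rw [hxj] at hyxv ⊢
          have hyj : (y : ℕ) < (j : ℕ) := hyxv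
          have h := h1z y (hRed j y (by intro h; rw [h] at hyj; omega) (Or.inr hyj))
            (hRed i y (by intro h; rw [← h] at hyj; have := hjiv; omega) (Or.inr hyj))
          rw [h.1]
          simp
        · by_cases hxi : x = i
          · rw [hxi] at hyxv ⊢
            rw [h1ev y]
            exact hInM i y (Fin.lt_def.mpr hyxv)
          · rw [h1rows x hxj hxi y]
            exact hInM x y hyx
      have hRed1 : ∀ a b : Fin n, a ≠ b → ((a : ℕ) < (j : ℕ) ∨ (b : ℕ) < (j : ℕ)) →
          (P1 * M) a b = 0 := by
        intro a b hab hmin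
        by_cases haj : a = j
        · have hbj : (b : ℕ) < (j : ℕ) := by
            rcases hmin with h | h
            · rw [haj] at h; omega
            · exact h
          rw [haj]
          exact (h1z b (hRed j b (by intro h; rw [← h] at hbj; omega) (Or.inr hbj))
            (hRed i b (by intro h; rw [← h] at hbj; omega) (Or.inr hbj))).1
        · by_cases hai : a = i
          · have hbj : (b : ℕ) < (j : ℕ) := by
              rcases hmin with h | h
              · rw [hai] at h; exact absurd h (by simp; omega)
              · exact h
            rw [hai]
            exact (h1z b (hRed j b (by intro h; rw [← h] at hbj; omega) (Or.inr hbj))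
              (hRed i b (by intro h; rw [← h] at hbj; have := hjiv; omega) (Or.inr hbj))).2
          · rw [h1rows a haj hai b]
            exact hRed a b hab hmin
      have hdiag1 : ∀ a : Fin n, (a : ℕ) < (j : ℕ) → (P1 * M) a a = 1 := by
        intro a ha
        rw [h1rows a (by intro h; rw [h] at ha; omega)
          (by intro h; rw [h] at ha; simp at ha; omega) a]
        exact hdiag a ha
      have hclr1 : ∀ a : Fin n, j < a → (a : ℕ) < n - m → (P1 * M) a j = 0 := by
        intro a hja ha
        by_cases hai : a = i
        · rw [hai]; exact h1ij
        · rw [h1rows a (by intro h; rw [h] at hja; exact lt_irrefl _ hja) hai j]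
          refine hclr a hja ?_
          have : (a : ℕ) ≠ n - m - 1 := fun h => hai (Fin.ext (by simpa using h))
          omega
      obtain ⟨P2, hGen2, hdet2, hInM2, hRed2, hdiag2, hclr2⟩ :=
        IHm (P1 * M) hInM1 (hdetM1 ▸ hdet) hRed1 hdiag1 hclr1
      refine ⟨P2 * P1, hGen2.mul hGen1, ?_, ?_, ?_, ?_, ?_⟩
      · rw [Matrix.mul_assoc, hdet2, hdetM1]
      · rw [Matrix.mul_assoc]; exact hInM2
      · rw [Matrix.mul_assoc]; exact hRed2
      · rw [Matrix.mul_assoc]; exact hdiag2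
      · rw [Matrix.mul_assoc]; exact hclr2
    · refine IHm M hInM hdet hRed hdiag ?_
      intro a hja ha
      exfalso
      have h1 : (j : ℕ) < (a : ℕ) := Fin.lt_def.mp hja
      omega

lemma clear_row (j : Fin n) (s : Finset (Fin n)) (hs : ∀ c ∈ s, j < c) :
    ∀ M : Matrix (Fin n) (Fin n) (Polynomial F),
    (∀ a : Fin n, M a j = if a = j then 1 else 0) →
    ∃ T : Matrix (Fin n) (Fin n) (Polynomial F), Gen T ∧ T.det = 1 ∧
      (∀ a c : Fin n, (M * T) a c = if a = j ∧ c ∈ s then 0 else M a c) := by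
  induction s using Finset.induction_on with
  | empty =>
    intro M hcol
    exact ⟨1, Gen.one, by simp, by simp⟩
  | @insert c₀ s hc₀s IH =>
    intro M hcol
    have hjc₀ : j < c₀ := hs c₀ (Finset.mem_insert_self c₀ s)
    have hjc₀n : j ≠ c₀ := ne_of_lt hjc₀
    obtain ⟨T1, hGen1, hdet1, h1⟩ := IH (fun c hc => hs c (Finset.mem_insert_of_mem hc)) M hcol
    have hcol1 : ∀ a : Fin n, (M * T1) a j = if a = j then 1 else 0 := by
      intro a
      rw [h1 a j]
      have : ¬(a = j ∧ j ∈ s) := by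
        rintro ⟨-, hj⟩
        exact absurd (hs j (Finset.mem_insert_of_mem hj)) (lt_irrefl j)
      rw [if_neg this]
      exact hcol a
    set f := -((M * T1) j c₀) with hf_def
    set T2 := Matrix.transvection j c₀ f with hT2_def
    have h2 : ∀ a c : Fin n, c ≠ c₀ → ((M * T1) * T2) a c = (M * T1) a c := fun a c hc =>
      Matrix.mul_transvection_apply_of_ne j c₀ a c hc f (M * T1)
    have h2c : ∀ a : Fin n, ((M * T1) * T2) a c₀ = (M * T1) a c₀ + f * (M * T1) a j :=
      fun a => Matrix.mul_transvection_apply_same j c₀ a f (M * T1)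
    refine ⟨T1 * T2, hGen1.mul (Gen_transvection j c₀ hjc₀n f
      (fun h => absurd h (asymm hjc₀))), ?_, ?_⟩
    · rw [Matrix.det_mul, hdet1, Matrix.det_transvection_of_ne j c₀ hjc₀n f, one_mul]
    · intro a c
      rw [← Matrix.mul_assoc]
      by_cases hcc : c = c₀
      · rw [hcc, h2c a, hcol1 a]
        by_cases haj : a = j
        · rw [haj, if_pos rfl, if_pos ⟨rfl, Finset.mem_insert_self c₀ s⟩, hf_def]
          ring
        · rw [if_neg haj, mul_zero, add_zero, if_neg (fun h => haj (And.left h)),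
            h1 a c₀, if_neg (fun h => haj (And.left h))]
      · rw [h2 a c hcc, h1 a c]
        by_cases hacs : a = j ∧ c ∈ s
        · rw [if_pos hacs, if_pos ⟨hacs.1, Finset.mem_insert_of_mem hacs.2⟩]
        · rw [if_neg hacs]
          have : ¬(a = j ∧ c ∈ insert c₀ s) := by
            rintro ⟨rfl, hc⟩
            rcases Finset.mem_insert.1 hc with h | h
            · exact hcc h
            · exact hacs ⟨rfl, h⟩
          rw [if_neg this]

lemma main_red : ∀ m : ℕ, ∀ M : Matrix (Fin n) (Fin n) (Polynomial F),
    InM M → IsUnit M.det →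
    (∀ a b : Fin n, a ≠ b → ((a : ℕ) < n - m ∨ (b : ℕ) < n - m) → M a b = 0) →
    (∀ a : Fin n, (a : ℕ) < n - m → M a a = 1) →
    Gen M := by
  intro m
  induction m with
  | zero =>
    intro M _ _ hRed hdiag
    have hM1 : M = 1 := by
      ext a b
      by_cases hab : a = b
      · rw [hab, hdiag b (by have := b.isLt; omega), Matrix.one_apply_eq]
      · rw [hRed a b hab (Or.inl (by have := a.isLt; omega)), Matrix.one_apply_ne hab]
    rw [hM1]; exact Gen.one
  | succ m IHm =>
    intro M hInM hdet hRed hdiag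
    by_cases hm : n - (m + 1) < n - m
    case neg =>
      have he : n - (m + 1) = n - m := by omega
      exact IHm M hInM hdet (by rw [← he]; exact hRed) (by rw [← he]; exact hdiag)
    case pos =>
    have hjn : n - (m + 1) < n := by omega
    set j : Fin n := ⟨n - (m + 1), hjn⟩ with hj_def
    have hjv : (j : ℕ) = n - (m + 1) := rfl
    have hnm : n - m = (j : ℕ) + 1 := by rw [hjv]; omega
    obtain ⟨P1, hGenP1, hdet1, hInM1, hRed1, hdiag1, hclr1⟩ :=
      clear_col j n M hInM hdet
        (fun a b hab h => hRed a b hab (by rw [hjv] at h; exact h))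
        (fun a ha => hdiag a (by rw [hjv] at ha; exact ha))
        (fun a hja ha => absurd ha (by omega))
    set M1 := P1 * M with hM1_def
    have hdetM1 : IsUnit M1.det := by rw [hdet1]; exact hdet
    have hcolj : ∀ a : Fin n, a ≠ j → M1 a j = 0 := by
      intro a haj
      have hne : (a : ℕ) ≠ (j : ℕ) := fun h => haj (Fin.ext h)
      rcases lt_or_gt_of_ne hne with h | h
      · exact hRed1 a j haj (Or.inl h)
      · exact hclr1 a (Fin.lt_def.mpr h)
    have hdvd : M1 j j ∣ M1.det := by
      have h := congrArg (fun N => N j j) (Matrix.adjugate_mul M1)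
      simp only [Matrix.mul_apply, Matrix.smul_apply, Matrix.one_apply_eq, smul_eq_mul,
        mul_one] at h
      have hsum : ∑ k, M1.adjugate j k * M1 k j = M1.adjugate j j * M1 j j :=
        Finset.sum_eq_single j (fun b _ hbj => by rw [hcolj b hbj, mul_zero])
          (fun h' => absurd (Finset.mem_univ j) h')
      rw [hsum] at h
      exact ⟨M1.adjugate j j, by rw [← h]; ring⟩
    have hunit_jj : IsUnit (M1 j j) := isUnit_of_dvd_unit hdvd hdetM1
    obtain ⟨α, hαu, hCα⟩ := Polynomial.isUnit_iff.1 hunit_jj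
    have hα : α ≠ 0 := hαu.ne_zero
    set D := (1 : Matrix (Fin n) (Fin n) (Polynomial F)) +
      Matrix.single j j (Polynomial.C α⁻¹ - 1) with hD_def
    have hED : IsElemUnit D := Or.inl ⟨j, α⁻¹, inv_ne_zero hα, rfl⟩
    have hDdiag : D = Matrix.diagonal (fun i => if i = j then Polynomial.C α⁻¹ else 1) :=
      one_add_std_sub_one j _
    set M2 := D * M1 with hM2_def
    have hM2app : ∀ a c : Fin n, M2 a c = (if a = j then Polynomial.C α⁻¹ else 1) * M1 a c := by
      intro a c
      rw [hM2_def, hDdiag, Matrix.diagonal_mul]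
    have hM2rows : ∀ a : Fin n, a ≠ j → ∀ c, M2 a c = M1 a c := by
      intro a haj c
      rw [hM2app a c, if_neg haj, one_mul]
    have hM2jj : M2 j j = 1 := by
      rw [hM2app j j, if_pos rfl, ← hCα, ← Polynomial.C_mul, inv_mul_cancel₀ hα, Polynomial.C_1]
    have hcol2 : ∀ a : Fin n, M2 a j = if a = j then 1 else 0 := by
      intro a
      by_cases haj : a = j
      · rw [haj, hM2jj, if_pos rfl]
      · rw [if_neg haj, hM2rows a haj j, hcolj a haj]
    have hdetD : D.det = Polynomial.C α⁻¹ := by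
      rw [hDdiag, Matrix.det_diagonal]
      rw [Finset.prod_eq_single j (fun b _ hbj => if_neg hbj)
        (fun h' => absurd (Finset.mem_univ j) h'), if_pos rfl]
    have hdetM2 : IsUnit M2.det := by
      rw [hM2_def, Matrix.det_mul, hdetD]
      exact (Polynomial.isUnit_C.2 (isUnit_iff_ne_zero.2 (inv_ne_zero hα))).mul hdetM1
    obtain ⟨T, hGenT, hdetT, hT⟩ :=
      clear_row j (Finset.univ.filter (fun c => j < c))
        (fun c hc => (Finset.mem_filter.1 hc).2) M2 hcol2
    set M3 := M2 * T with hM3_def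
    have hM3app : ∀ a c : Fin n, M3 a c = if a = j ∧ j < c then 0 else M2 a c := by
      intro a c
      by_cases h : a = j ∧ j < c
      · rw [if_pos h, hT a c, if_pos ⟨h.1, by simp [h.2]⟩]
      · rw [if_neg h, hT a c, if_neg (fun hh => h ⟨hh.1, by simpa using hh.2⟩)]
    have hInM3 : InM M3 := by
      intro x y hyx
      have hyxv := Fin.lt_def.mp hyx
      by_cases hxj : x = j
      · rw [hxj] at hyxv ⊢
        have hcond : ¬(j = j ∧ j < y) := fun h => absurd (Fin.lt_def.mp h.2) (by omega)
        rw [hM3app j y, if_neg hcond, hM2app j y,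
          hRed1 j y (fun h => by rw [h] at hyxv; omega) (Or.inr hyxv), mul_zero]
        simp
      · rw [hM3app x y, if_neg (fun h => hxj h.1), hM2rows x hxj y]
        exact hInM1 x y hyx
    have hdetM3 : IsUnit M3.det := by
      rw [hM3_def, Matrix.det_mul, hdetT, mul_one]
      exact hdetM2
    have hRed3 : ∀ a b : Fin n, a ≠ b → ((a : ℕ) < n - m ∨ (b : ℕ) < n - m) → M3 a b = 0 := by
      intro a b hab h
      rw [hnm] at h
      by_cases haj : a = j
      · have hbj : b ≠ j := fun hh => hab (by rw [haj, hh])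
        have hbv : (b : ℕ) ≠ (j : ℕ) := fun hh => hbj (Fin.ext hh)
        rcases lt_or_gt_of_ne hbv with hb | hb
        · rw [hM3app a b, if_neg (fun hh => absurd (Fin.lt_def.mp hh.2) (by omega)),
            hM2app a b, haj, hRed1 j b (Ne.symm hbj) (Or.inr hb), mul_zero]
        · rw [hM3app a b, if_pos ⟨haj, Fin.lt_def.mpr hb⟩]
      · by_cases hbj : b = j
        · rw [hbj, hM3app a j, if_neg (fun hh => haj hh.1), hcol2 a, if_neg haj]
        · have hav : (a : ℕ) ≠ (j : ℕ) := fun hh => haj (Fin.ext hh)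
          have hbv : (b : ℕ) ≠ (j : ℕ) := fun hh => hbj (Fin.ext hh)
          rw [hM3app a b, if_neg (fun hh => haj hh.1), hM2rows a haj b]
          refine hRed1 a b hab ?_
          rcases h with h | h
          · exact Or.inl (by omega)
          · exact Or.inr (by omega)
    have hdiag3 : ∀ a : Fin n, (a : ℕ) < n - m → M3 a a = 1 := by
      intro a ha
      rw [hnm] at ha
      by_cases haj : a = j
      · rw [haj, hM3app j j, if_neg (fun hh => lt_irrefl j hh.2), hM2jj]
      · have hav : (a : ℕ) ≠ (j : ℕ) := fun hh => haj (Fin.ext hh)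
        rw [hM3app a a, if_neg (fun hh => haj hh.1), hM2rows a haj a]
        exact hdiag1 a (by omega)
    have hGenM3 : Gen M3 := IHm M3 hInM3 hdetM3 hRed3 hdiag3
    have hfact : M3 = (D * P1) * M * T := by
      rw [hM3_def, hM2_def, hM1_def]
      noncomm_ring
    obtain ⟨A', hGenA', hA'l, hA'r⟩ := Gen.inv ((Gen.of_elem hED).mul hGenP1)
    obtain ⟨T', hGenT', hT'l, hT'r⟩ := Gen.inv hGenT
    have hM_eq : M = A' * M3 * T' := by
      rw [hfact]
      rw [show A' * (D * P1 * M * T) * T' = (A' * (D * P1)) * M * (T * T') by noncomm_ring]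
      rw [hA'l, hT'r, one_mul, mul_one]
    rw [hM_eq]
    exact (hGenA'.mul hGenM3).mul hGenT'

end ElemAux

/-- Every unit of the ring `𝓜` is a finite product of elementary units
of `𝓜`. -/
theorem unit_eq_prod_elemUnits {F : Type*} [Field F] [Fintype F] {n : ℕ} (hn : 2 ≤ n)
    (M : Matrix (Fin n) (Fin n) (Polynomial F)) (hM : InM M)
    (hunit : ∃ N : Matrix (Fin n) (Fin n) (Polynomial F), InM N ∧ M * N = 1 ∧ N * M = 1) :
    ∃ L : List (Matrix (Fin n) (Fin n) (Polynomial F)),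
      (∀ E ∈ L, IsElemUnit E) ∧ M = L.prod := by
  obtain ⟨N, hN, hMN, hNM⟩ := hunit
  have hdet : IsUnit M.det := IsUnit.of_mul_eq_one N.det
    (by rw [← Matrix.det_mul, hMN, Matrix.det_one])
  have hGen : ElemAux.Gen M := ElemAux.main_red n M hM hdet
    (fun a b hab h => by rcases h with h | h <;> exact absurd h (by omega))
    (fun a ha => absurd ha (by omega))
  obtain ⟨L, h1, h2⟩ := hGen
  exact ⟨L, h1, h2⟩
end

section
/- Let M ∈ 𝓜 be not semi-reduced. Then there exists an elementary unit E of 𝓜 of type (ii) or (iii) and a row index c such that, setting M̂ = E·M, all rows of M̂ except row c coincide with those of M, and every entry of row c of the degree matrix 𝒟(M̂) is strictly smaller than the maximum of row c of 𝒟(M). -/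
open Polynomial Matrix

/-- Elementary units of `𝓜` of type (ii) or (iii): `I + t^N α E_{ab}` with `N ≥ 0` and
`a < b`, or with `N > 0` and `b < a`. -/
def IsElemUnitOffDiag {F : Type*} [Field F] {n : ℕ}
    (E : Matrix (Fin n) (Fin n) (Polynomial F)) : Prop :=
  (∃ (a b : Fin n) (N : ℕ) (α : F), a < b ∧
      E = 1 + Matrix.single a b (Polynomial.X ^ N * Polynomial.C α)) ∨
  (∃ (a b : Fin n) (N : ℕ) (α : F), b < a ∧ 0 < N ∧
      E = 1 + Matrix.single a b (Polynomial.X ^ N * Polynomial.C α))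

lemma int_ne_helper {n x y u v : ℤ} (hn : 0 < n) (hu0 : 0 ≤ u) (hun : u < n)
    (hv0 : 0 ≤ v) (hvn : v < n) (huv : u ≠ v) (h : n * x + u ≤ n * y + v) :
    n * x + u < n * y + v := by
  rcases lt_trichotomy x y with h1 | h1 | h1
  · have h2 : x + 1 ≤ y := h1
    have h3 := mul_le_mul_of_nonneg_left h2 hn.le
    nlinarith
  · subst h1
    have : u < v := lt_of_le_of_ne (by linarith) huv
    linarith
  · have h2 : y + 1 ≤ x := h1
    have h3 := mul_le_mul_of_nonneg_left h2 hn.le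
    nlinarith

lemma withbot_map_natCast {f : ℕ → ℤ} (d : ℕ) :
    WithBot.map f (d : WithBot ℕ) = ((f d : ℤ) : WithBot ℤ) := by
  rw [Nat.cast_withBot, WithBot.map_coe]

lemma reduce_row {F : Type*} [Field F] {n : ℕ} (hn : 2 ≤ n)
    (M : Matrix (Fin n) (Fin n) (Polynomial F)) (c o b : Fin n) (hco : c ≠ o)
    (hc0 : M c ≠ 0) (ho0 : M o ≠ 0)
    (hmc : degMat M c b = Finset.univ.sup (fun j => degMat M c j))
    (hmo : degMat M o b = Finset.univ.sup (fun j => degMat M o j))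
    (hdle : (M o b).natDegree ≤ (M c b).natDegree)
    (htype : c < o ∨ (M o b).natDegree < (M c b).natDegree) :
    ∃ E : Matrix (Fin n) (Fin n) (Polynomial F), IsElemUnitOffDiag E ∧
      ∃ c : Fin n,
        (∀ a : Fin n, a ≠ c → (E * M) a = M a) ∧
        (∀ b : Fin n, degMat (E * M) c b < Finset.univ.sup (fun b' => degMat M c b')) := by
  have hn0 : (0 : ℤ) < n := by positivity
  -- the pivot entries are nonzero
  have key : ∀ a : Fin n, M a ≠ 0 →
      degMat M a b = Finset.univ.sup (fun j => degMat M a j) → M a b ≠ 0 := by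
    intro a ha hmax h0
    obtain ⟨j, hj⟩ := Function.ne_iff.mp ha
    simp only [Pi.zero_apply] at hj
    have h1 : degMat M a j ≤ Finset.univ.sup (fun j => degMat M a j) :=
      Finset.le_sup (Finset.mem_univ j)
    have h2 : degMat M a j ≠ ⊥ := by
      simp [degMat, WithBot.map_eq_bot_iff, Polynomial.degree_eq_bot, hj]
    have hb : degMat M a b = ⊥ := by simp [degMat, h0]
    rw [hmax] at hb
    exact h2 (le_bot_iff.mp (hb ▸ h1))
  have hp : M c b ≠ 0 := key c hc0 hmc
  have hq : M o b ≠ 0 := key o ho0 hmo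
  set dc := (M c b).natDegree with hdc
  set dq := (M o b).natDegree with hdq
  set N := dc - dq with hN
  have hNd : dc = N + dq := by omega
  set α : F := -((M c b).leadingCoeff / (M o b).leadingCoeff) with hα
  have hα0 : α ≠ 0 := by
    simp only [hα, neg_ne_zero]
    exact div_ne_zero (leadingCoeff_ne_zero.mpr hp) (leadingCoeff_ne_zero.mpr hq)
  set E : Matrix (Fin n) (Fin n) (Polynomial F)
    := 1 + Matrix.single c o (X ^ N * C α) with hEdef
  refine ⟨E, ?_, c, ?_, ?_⟩
  · -- elementary unit
    rcases lt_or_gt_of_ne hco with hlt | hgt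
    · exact Or.inl ⟨c, o, N, α, hlt, hEdef⟩
    · rcases htype with h | h
      · exact absurd h (not_lt.mpr hgt.le)
      · exact Or.inr ⟨c, o, N, α, hgt, by omega, hEdef⟩
  · -- unchanged rows
    intro a ha
    funext j
    rw [hEdef, Matrix.add_mul, Matrix.one_mul, Matrix.add_apply,
      Matrix.single_mul_apply_of_ne (i := c) (j := o) (a := a) (b := j) (h := ha), add_zero]
  · -- the reduced row
    intro b'
    have hrowc : ∀ j, (E * M) c j = M c j + (X ^ N * C α) * M o j := by
      intro j
      rw [hEdef, Matrix.add_mul, Matrix.one_mul, Matrix.add_apply,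
        Matrix.single_mul_apply_same]
    have hdegp : (M c b).degree = (dc : WithBot ℕ) := degree_eq_natDegree hp
    have hdegq : (M o b).degree = (dq : WithBot ℕ) := degree_eq_natDegree hq
    have hsup : Finset.univ.sup (fun j => degMat M c j)
        = (((n : ℤ) * dc - (c : ℕ) + (b : ℕ) : ℤ) : WithBot ℤ) := by
      rw [← hmc]
      simp only [degMat, Matrix.of_apply, hdegp]
      exact withbot_map_natCast dc
    have hsupo : degMat M o b = (((n : ℤ) * dq - (o : ℕ) + (b : ℕ) : ℤ) : WithBot ℤ) := by
      simp only [degMat, Matrix.of_apply, hdegq]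
      exact withbot_map_natCast dq
    have hlec : ∀ j, degMat M c j ≤ (((n : ℤ) * dc - (c : ℕ) + (b : ℕ) : ℤ) : WithBot ℤ) :=
      fun j => hsup ▸ Finset.le_sup (Finset.mem_univ j)
    have hleo : ∀ j, degMat M o j ≤ (((n : ℤ) * dq - (o : ℕ) + (b : ℕ) : ℤ) : WithBot ℤ) :=
      fun j => le_trans (Finset.le_sup (Finset.mem_univ j)) (le_of_eq (by rw [← hmo, hsupo]))
    rw [hsup]
    set r : Polynomial F := M c b' + (X ^ N * C α) * M o b' with hrdef
    have hdm : degMat (E * M) c b'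
        = WithBot.map (fun d : ℕ => (n : ℤ) * (d : ℤ) - ((c : ℕ) : ℤ) + ((b' : ℕ) : ℤ))
          r.degree := by
      simp only [degMat, Matrix.of_apply, hrowc b', hrdef]
    rw [hdm]
    by_cases hbb : b' = b
    · subst hbb
      -- cancellation of leading coefficients
      have hcan : α * (M o b').leadingCoeff = -(M c b').leadingCoeff := by
        rw [hα, neg_mul, div_mul_cancel₀ _ (leadingCoeff_ne_zero.mpr hq)]
      have hcoeff : ∀ m, dc ≤ m → r.coeff m = 0 := by
        intro m hm
        have hcomm : (X ^ N * C α) * M o b' = C α * M o b' * X ^ N := by ring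
        have hNm : N ≤ m := le_trans (by omega) hm
        have hc2 : ((X ^ N * C α) * M o b').coeff m = α * (M o b').coeff (m - N) := by
          rw [hcomm, Polynomial.coeff_mul_X_pow', if_pos hNm, Polynomial.coeff_C_mul]
        rcases eq_or_lt_of_le hm with he | hlt
        · have hmn : m - N = dq := by omega
          rw [hrdef, Polynomial.coeff_add, hc2, hmn, ← he, hdc, hdq,
            Polynomial.coeff_natDegree, Polynomial.coeff_natDegree, hcan]
          ring
        · have h1 : (M c b').coeff m = 0 :=
            Polynomial.coeff_eq_zero_of_natDegree_lt (by omega)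
          have h2 : (M o b').coeff (m - N) = 0 :=
            Polynomial.coeff_eq_zero_of_natDegree_lt (by omega)
          rw [hrdef, Polynomial.coeff_add, hc2, h1, h2, mul_zero, add_zero]
      have hdr : r.degree < (dc : WithBot ℕ) := (degree_lt_iff_coeff_zero r dc).mpr hcoeff
      cases hd : r.degree with
      | bot => rw [WithBot.map_bot]; exact WithBot.bot_lt_coe _
      | coe d =>
        rw [hd] at hdr
        have hdlt : d < dc := WithBot.coe_lt_coe.mp hdr
        rw [WithBot.map_coe, WithBot.coe_lt_coe]
        have : (n : ℤ) * d < (n : ℤ) * dc := by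
          apply mul_lt_mul_of_pos_left _ hn0
          exact_mod_cast hdlt
        linarith
    · -- off-pivot column
      have h1deg : (X ^ N * C α : Polynomial F).degree = (N : WithBot ℕ) := by
        rw [Polynomial.degree_mul, Polynomial.degree_X_pow, Polynomial.degree_C hα0, add_zero]
      have hmulq : ((X ^ N * C α) * M o b').degree = (N : WithBot ℕ) + (M o b').degree := by
        rw [Polynomial.degree_mul, h1deg]
      have hdr : r.degree ≤ max (M c b').degree ((N : WithBot ℕ) + (M o b').degree) := by
        refine le_trans (Polynomial.degree_add_le _ _) ?_
        rw [hmulq]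
      cases hd : r.degree with
      | bot => rw [WithBot.map_bot]; exact WithBot.bot_lt_coe _
      | coe d =>
        rw [hd] at hdr
        rw [WithBot.map_coe, WithBot.coe_lt_coe]
        have hvb' : ((b' : ℕ) : ℤ) ≠ ((b : ℕ) : ℤ) := by
          intro h
          exact hbb (Fin.ext (by exact_mod_cast h))
        have hb'n : ((b' : ℕ) : ℤ) < n := by exact_mod_cast b'.isLt
        have hbn : ((b : ℕ) : ℤ) < n := by exact_mod_cast b.isLt
        rcases le_max_iff.mp hdr with h1 | h1
        · have hne : M c b' ≠ 0 := by
            intro h0; rw [h0, Polynomial.degree_zero] at h1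
            exact WithBot.not_coe_le_bot _ h1
          have hdeg1 : (M c b').degree = ((M c b').natDegree : WithBot ℕ) :=
            degree_eq_natDegree hne
          have hdd1 : d ≤ (M c b').natDegree := by
            rw [hdeg1] at h1; exact WithBot.coe_le_coe.mp h1
          have h2 := hlec b'
          have h3 : degMat M c b'
              = (((n : ℤ) * (M c b').natDegree - (c : ℕ) + (b' : ℕ) : ℤ) : WithBot ℤ) := by
            simp only [degMat, Matrix.of_apply, hdeg1]
            exact withbot_map_natCast _
          rw [h3, WithBot.coe_le_coe] at h2
          have h4 : (n : ℤ) * (M c b').natDegree + ((b' : ℕ) : ℤ)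
              ≤ (n : ℤ) * dc + ((b : ℕ) : ℤ) := by linarith
          have h5 := int_ne_helper hn0 (by positivity) hb'n (by positivity) hbn hvb' h4
          have h6 : (n : ℤ) * d ≤ (n : ℤ) * (M c b').natDegree :=
            mul_le_mul_of_nonneg_left (by exact_mod_cast hdd1) hn0.le
          linarith
        · have hne : M o b' ≠ 0 := by
            intro h0; rw [h0, Polynomial.degree_zero, WithBot.add_bot] at h1
            exact WithBot.not_coe_le_bot _ h1
          have hdeg2 : (M o b').degree = ((M o b').natDegree : WithBot ℕ) :=
            degree_eq_natDegree hne
          have hdd2 : d ≤ N + (M o b').natDegree := by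
            rw [hdeg2, ← Nat.cast_add] at h1
            exact WithBot.coe_le_coe.mp h1
          have h2 := hleo b'
          have h3 : degMat M o b'
              = (((n : ℤ) * (M o b').natDegree - (o : ℕ) + (b' : ℕ) : ℤ) : WithBot ℤ) := by
            simp only [degMat, Matrix.of_apply, hdeg2]
            exact withbot_map_natCast _
          rw [h3, WithBot.coe_le_coe] at h2
          have h4 : (n : ℤ) * (M o b').natDegree + ((b' : ℕ) : ℤ)
              ≤ (n : ℤ) * dq + ((b : ℕ) : ℤ) := by linarith
          have h5 := int_ne_helper hn0 (by positivity) hb'n (by positivity) hbn hvb' h4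
          have h6 : (n : ℤ) * d ≤ (n : ℤ) * ((N : ℤ) + (M o b').natDegree) := by
            have : (d : ℤ) ≤ (N : ℤ) + (M o b').natDegree := by exact_mod_cast hdd2
            exact mul_le_mul_of_nonneg_left this hn0.le
          have h7 : (n : ℤ) * dc = (n : ℤ) * N + (n : ℤ) * dq := by
            have hz : (dc : ℤ) = (N : ℤ) + (dq : ℤ) := by exact_mod_cast hNd
            rw [hz]; ring
          nlinarith

/-- If `M ∈ 𝓜` is not semi-reduced, then there is an elementary unit
`E` of type (ii) or (iii) and a row index `c` such that `E·M` agrees with `M` in all rows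
except row `c`, and every entry of row `c` of `𝒟(E·M)` is strictly smaller than the
maximum of row `c` of `𝒟(M)`. -/
theorem reduction_step {F : Type*} [Field F] [Fintype F] {n : ℕ} (hn : 2 ≤ n)
    (M : Matrix (Fin n) (Fin n) (Polynomial F)) (hM : InM M) (hnsr : ¬ SemiReduced M) :
    ∃ E : Matrix (Fin n) (Fin n) (Polynomial F), IsElemUnitOffDiag E ∧
      ∃ c : Fin n,
        (∀ a : Fin n, a ≠ c → (E * M) a = M a) ∧
        (∀ b : Fin n, degMat (E * M) c b < Finset.univ.sup (fun b' => degMat M c b')) := by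
  unfold SemiReduced at hnsr
  push_neg at hnsr
  obtain ⟨a, a', b, hne, ha, ha', hmax, hmax', -⟩ := hnsr
  rcases lt_trichotomy (M a b).natDegree (M a' b).natDegree with h | h | h
  · exact reduce_row hn M a' a b hne.symm ha' ha hmax' hmax h.le (Or.inr h)
  · rcases hne.lt_or_gt with hlt | hlt
    · exact reduce_row hn M a a' b hne ha ha' hmax hmax' h.ge (Or.inl hlt)
    · exact reduce_row hn M a' a b hne.symm ha' ha hmax' hmax h.le (Or.inl hlt)
  · exact reduce_row hn M a a' b hne ha ha' hmax hmax' h.le (Or.inr h)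
end

section
/- Let M ∈ 𝓜 be delay-free with Supp(M) = {i_1,…,i_k}, where i_1 < … < i_k, and let M̃ ∈ F[t]^{k×n} be the matrix whose rows are the rows M_{i_1},…,M_{i_k} of M. Then the following are equivalent: (a) M̃ is basic; (b) there exist row vectors M̂_i ∈ F[t]^{1×n} for i ∈ {1,…,n}\{i_1,…,i_k} such that the matrix N ∈ F[t]^{n×n}, whose i-th row is the i-th row of M for i ∈ {i_1,…,i_k} and is M̂_i otherwise, is a unit of the ring 𝓜. -/
open Polynomial Matrix

/-- A `k × n` matrix over `F[t]` is basic if it has a right inverse over `F[t]`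
(equivalently, its `k × k` minors are coprime). -/
def IsBasic {F : Type*} [Field F] {k n : ℕ}
    (G : Matrix (Fin k) (Fin n) (Polynomial F)) : Prop :=
  ∃ H : Matrix (Fin n) (Fin k) (Polynomial F), G * H = 1


lemma exists_unimodular_completion {F : Type*} [Field F] {n k : ℕ}
    (G : Matrix (Fin k) (Fin n) (Polynomial F))
    (H : Matrix (Fin n) (Fin k) (Polynomial F)) (hGH : G * H = 1)
    (i : Fin k → Fin n) (hinj : Function.Injective i) :
    ∃ N : Matrix (Fin n) (Fin n) (Polynomial F),
      (∀ l, N (i l) = G l) ∧ IsUnit N.det := by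
  classical
  let f : (Fin n → Polynomial F) →ₗ[Polynomial F] (Fin k → Polynomial F) := H.vecMulLinear
  set K : Submodule (Polynomial F) (Fin n → Polynomial F) := LinearMap.ker f with hK
  let p : (Fin n → Polynomial F) →ₗ[Polynomial F] (Fin n → Polynomial F) :=
    LinearMap.id - G.vecMulLinear.comp f
  have hmem : ∀ v, p v ∈ K := by
    intro v
    simp only [hK, LinearMap.mem_ker, p, LinearMap.sub_apply, LinearMap.id_apply,
      LinearMap.comp_apply, f, vecMulLinear_apply, map_sub, vecMul_vecMul]
    rw [Matrix.mul_assoc, hGH, Matrix.mul_one, sub_self]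
  let φ : (Fin n → Polynomial F) →ₗ[Polynomial F] (Fin k → Polynomial F) × K :=
    LinearMap.prod f (LinearMap.codRestrict K p hmem)
  let ψ : (Fin k → Polynomial F) × K →ₗ[Polynomial F] (Fin n → Polynomial F) :=
    G.vecMulLinear.comp (LinearMap.fst _ _ _) + K.subtype.comp (LinearMap.snd _ _ _)
  have h1 : ψ.comp φ = LinearMap.id := by
    ext v
    simp [ψ, φ, p, f]
  have h2 : φ.comp ψ = LinearMap.id := by
    apply LinearMap.ext
    rintro ⟨c, w⟩
    have hw : w.1 ᵥ* H = 0 := w.2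
    refine Prod.ext ?_ (Subtype.ext ?_)
    · simp only [LinearMap.comp_apply, LinearMap.prod_apply, LinearMap.id_apply, Function.prod,
        ψ, φ, f, LinearMap.add_apply, vecMulLinear_apply, LinearMap.fst_apply,
        LinearMap.snd_apply, Submodule.coe_subtype, add_vecMul, vecMul_vecMul, hGH,
        vecMul_one, hw, add_zero]
    · simp only [LinearMap.comp_apply, LinearMap.prod_apply, LinearMap.id_apply, Function.prod,
        ψ, φ, f, p, LinearMap.add_apply, vecMulLinear_apply, LinearMap.fst_apply,
        LinearMap.snd_apply, Submodule.coe_subtype, LinearMap.codRestrict_apply,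
        LinearMap.sub_apply, LinearMap.id_apply, LinearMap.comp_apply,
        add_vecMul, vecMul_vecMul, hGH, vecMul_one, hw, add_zero]
      abel
  let e : ((Fin k → Polynomial F) × K) ≃ₗ[Polynomial F] (Fin n → Polynomial F) :=
    LinearEquiv.ofLinear ψ φ h1 h2
  obtain ⟨m, bK⟩ := Submodule.basisOfPid (Pi.basisFun (Polynomial F) (Fin n)) K
  let b : Module.Basis (Fin k ⊕ Fin m) (Polynomial F) (Fin n → Polynomial F) :=
    ((Pi.basisFun (Polynomial F) (Fin k)).prod bK).map e
  have hcard : k + m = n := by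
    have hb1 := Module.finrank_eq_card_basis b
    have hb2 := Module.finrank_eq_card_basis (Pi.basisFun (Polynomial F) (Fin n))
    rw [hb2] at hb1
    simpa using hb1.symm
  let e1 : Fin k ≃ Set.range i := Equiv.ofInjective i hinj
  have hc2 : Fintype.card (Fin m) = Fintype.card ((Set.range i)ᶜ : Set (Fin n)) := by
    rw [Fintype.card_compl_set, Set.card_range_of_injective hinj]
    simp
    omega
  let e2 : Fin m ≃ ((Set.range i)ᶜ : Set (Fin n)) := Fintype.equivOfCardEq hc2
  let σ : (Fin k ⊕ Fin m) ≃ Fin n := (e1.sumCongr e2).trans (Equiv.Set.sumCompl (Set.range i))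
  have hσ : ∀ l, σ (Sum.inl l) = i l := by
    intro l
    simp [σ, e1]
  let b' : Module.Basis (Fin n) (Polynomial F) (Fin n → Polynomial F) := b.reindex σ
  haveI := (Pi.basisFun (Polynomial F) (Fin n)).invertibleToMatrix b'
  let A := (Pi.basisFun (Polynomial F) (Fin n)).toMatrix b'
  refine ⟨Aᵀ, ?_, ?_⟩
  · intro l
    funext c
    have hb' : b' (i l) = G l := by
      have hs : σ.symm (i l) = Sum.inl l := by
        rw [Equiv.symm_apply_eq, hσ]
      rw [Module.Basis.reindex_apply, hs, Module.Basis.map_apply]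
      show ψ _ = _
      simp [ψ, Module.Basis.prod_apply_inl_fst, Module.Basis.prod_apply_inl_snd, Pi.basisFun_apply]
      rfl
    show A c (i l) = G l c
    simp only [A, Module.Basis.toMatrix_apply, hb', Pi.basisFun_repr]
  · rw [det_transpose]
    exact isUnit_det_of_invertible A

theorem basic_iff_completable_to_unit' {F : Type*} [Field F] [Fintype F] {n k : ℕ}
    (hn : 2 ≤ n) (M : Matrix (Fin n) (Fin n) (Polynomial F))
    (hM : ∀ a b : Fin n, b < a → (M a b).eval 0 = 0)
    (hdf : ∀ a : Fin n, M a ≠ 0 → (M a a).eval 0 ≠ 0)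
    (i : Fin k → Fin n) (hmono : StrictMono i)
    (hsupp : ∀ a : Fin n, M a ≠ 0 ↔ ∃ l : Fin k, a = i l) :
    (∃ H : Matrix (Fin n) (Fin k) (Polynomial F),
        (Matrix.of fun (l : Fin k) (b : Fin n) => M (i l) b) * H = 1) ↔
      ∃ N : Matrix (Fin n) (Fin n) (Polynomial F),
        (∀ l : Fin k, N (i l) = M (i l)) ∧ (∀ a b : Fin n, b < a → (N a b).eval 0 = 0) ∧
        ∃ N' : Matrix (Fin n) (Fin n) (Polynomial F),
          (∀ a b : Fin n, b < a → (N' a b).eval 0 = 0) ∧ N * N' = 1 ∧ N' * N = 1 := by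
  classical
  constructor
  · rintro ⟨H, hGH⟩
    obtain ⟨N₁, hrow, hN₁det⟩ :=
      exists_unimodular_completion (Matrix.of fun (l : Fin k) (b : Fin n) => M (i l) b)
        H hGH i hmono.injective
    have hrow : ∀ l, N₁ (i l) = M (i l) := hrow
    set φ0 : Polynomial F →+* F := evalRingHom 0 with hφ0
    set N₁0 := N₁.map φ0 with hN₁0
    have hdet0 : IsUnit N₁0.det := by
      rw [hN₁0, ← RingHom.mapMatrix_apply, ← RingHom.map_det]
      exact hN₁det.map φ0
    set U : Matrix (Fin n) (Fin n) F := Matrix.of (fun a b =>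
      if ∃ l, a = i l then (M a b).eval 0 else (1 : Matrix (Fin n) (Fin n) F) a b) with hU
    have hUtri : U.BlockTriangular id := by
      intro a b hba
      by_cases h : ∃ l, a = i l
      · simp only [hU, of_apply, if_pos h]
        exact hM a b hba
      · simp only [hU, of_apply, if_neg h, one_apply]
        exact if_neg (ne_of_lt hba).symm
    have hUdiag : ∀ a, U a a ≠ 0 := by
      intro a
      by_cases h : ∃ l, a = i l
      · simp only [hU, of_apply, if_pos h]
        exact hdf a ((hsupp a).mpr h)
      · simp only [hU, of_apply, if_neg h, one_apply_eq]
        exact one_ne_zero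
    have hUdet : U.det ≠ 0 := by
      rw [det_of_upperTriangular hUtri]
      exact Finset.prod_ne_zero_iff.mpr fun a _ => hUdiag a
    set B : Matrix (Fin n) (Fin n) F := U * N₁0⁻¹ with hB
    have hBN : B * N₁0 = U := by
      rw [hB, Matrix.mul_assoc, nonsing_inv_mul _ hdet0, Matrix.mul_one]
    have hBdet : B.det ≠ 0 := by
      intro h
      apply hUdet
      rw [← hBN, det_mul, h, zero_mul]
    set N : Matrix (Fin n) (Fin n) (Polynomial F) := B.map Polynomial.C * N₁ with hN
    have hNmap : N.map φ0 = U := by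
      rw [hN, Matrix.map_mul, Matrix.map_map, ← hBN]
      congr 1
      ext a b
      simp [hφ0]
    have hNdet : IsUnit N.det := by
      rw [hN, det_mul, ← RingHom.mapMatrix_apply, ← RingHom.map_det]
      exact ((Polynomial.isUnit_C).mpr (isUnit_iff_ne_zero.mpr hBdet)).mul hN₁det
    have hUrow : ∀ l, U (i l) = N₁0 (i l) := by
      intro l
      funext b
      simp only [hU, of_apply, hN₁0, map_apply, hφ0, coe_evalRingHom]
      rw [if_pos (⟨l, rfl⟩ : ∃ l', i l = i l'), hrow l]
    have hBrow : ∀ l, B (i l) = (1 : Matrix (Fin n) (Fin n) F) (i l) := by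
      intro l
      funext c
      rw [hB, mul_apply]
      rw [Finset.sum_congr rfl (fun d _ => by rw [hUrow l])]
      rw [← mul_apply, mul_nonsing_inv _ hdet0]
    have hNrow : ∀ l, N (i l) = M (i l) := by
      intro l
      funext b
      have hBC : ∀ c, (B.map Polynomial.C) (i l) c = if i l = c then 1 else 0 := by
        intro c
        rw [map_apply, hBrow l, one_apply]
        split <;> simp
      rw [hN, mul_apply]
      rw [Finset.sum_congr rfl (fun c _ => by rw [hBC c])]
      simp [hrow l]
    have hInMN : ∀ a b : Fin n, b < a → (N a b).eval 0 = 0 := by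
      intro a b hba
      have : (N.map φ0) a b = 0 := by rw [hNmap]; exact hUtri hba
      simpa [hφ0] using this
    haveI : Invertible U := U.invertibleOfIsUnitDet (isUnit_iff_ne_zero.mpr hUdet)
    have hNN' : N * N⁻¹ = 1 := mul_nonsing_inv _ hNdet
    have hN'N : N⁻¹ * N = 1 := nonsing_inv_mul _ hNdet
    have hinvmap : N⁻¹.map φ0 = U⁻¹ := by
      symm
      apply inv_eq_right_inv
      rw [← hNmap, ← Matrix.map_mul, hNN']
      exact Matrix.map_one _ (map_zero φ0) (map_one φ0)
    have hUitri : U⁻¹.BlockTriangular id := blockTriangular_inv_of_blockTriangular hUtri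
    refine ⟨N, hNrow, hInMN, N⁻¹, ?_, hNN', hN'N⟩
    intro a b hba
    have : (N⁻¹.map φ0) a b = 0 := by rw [hinvmap]; exact hUitri hba
    simpa [hφ0] using this
  · rintro ⟨N, hrows, -, N', -, hNN', -⟩
    refine ⟨Matrix.of fun b l => N' b (i l), ?_⟩
    ext l l'
    rw [mul_apply]
    have : ∀ b, (Matrix.of fun (l : Fin k) (b : Fin n) => M (i l) b) l b *
        (Matrix.of fun b l => N' b (i l)) b l' = N (i l) b * N' b (i l') := by
      intro b
      simp [hrows l]
    rw [Finset.sum_congr rfl (fun b _ => this b), ← mul_apply, hNN']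
    rw [one_apply, one_apply]
    simp [hmono.injective.eq_iff]

/-- Let `M ∈ 𝓜` be delay-free with support `{i_1 < … < i_k}`
(enumerated by the strictly monotone map `i`), and let `M̃` be the `k × n` matrix whose
rows are the nonzero rows of `M`.  Then `M̃` is basic if and only if the zero rows of `M`
can be replaced by suitable rows so that the resulting matrix is a unit of the ring `𝓜`. -/
theorem basic_iff_completable_to_unit {F : Type*} [Field F] [Fintype F] {n k : ℕ}
    (hn : 2 ≤ n) (M : Matrix (Fin n) (Fin n) (Polynomial F))
    (hM : InM M) (hdf : DelayFree M)
    (i : Fin k → Fin n) (hmono : StrictMono i)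
    (hsupp : ∀ a : Fin n, M a ≠ 0 ↔ ∃ l : Fin k, a = i l) :
    IsBasic (Matrix.of fun (l : Fin k) (b : Fin n) => M (i l) b) ↔
      ∃ N : Matrix (Fin n) (Fin n) (Polynomial F),
        (∀ l : Fin k, N (i l) = M (i l)) ∧ InM N ∧
        ∃ N' : Matrix (Fin n) (Fin n) (Polynomial F), InM N' ∧ N * N' = 1 ∧ N' * N = 1 := by
  exact basic_iff_completable_to_unit' hn M hM hdf i hmono hsupp
end

section
/- Let j_1,…,j_{n−1} ∈ {1,…,n} be pairwise different and let d_1,…,d_{n−1} ∈ ℕ be such that j_i < i implies d_i > 0. Then there exists a basic matrix M = (m_{ij}) ∈ F[t]^{(n−1)×n} with the following properties: (i) deg(m_{ij}) ≤ d_i for j < j_i; (ii) deg(m_{ij}) = d_i for j = j_i; (iii) deg(m_{ij}) < d_i for j > j_i; (iv) m_{ii}(0) = 1 for all i; (v) m_{ij}(0) = 0 for j < i. -/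
open Polynomial Matrix

namespace Stmt12Aux

attribute [local instance] Classical.propDecidable

variable {n : ℕ}

/-- Cast a row index to a column index. -/
def cst (i : Fin (n - 1)) : Fin n := Fin.castLE (Nat.sub_le n 1) i

@[simp] lemma cst_val (i : Fin (n - 1)) : ((cst i : Fin n) : ℕ) = (i : ℕ) := rfl

lemma cst_inj {a b : Fin (n - 1)} (h : cst a = cst b) : a = b := by
  apply Fin.ext
  have := congrArg (fun x : Fin n => (x : ℕ)) h
  simpa using this

/-- The search predicate for the number of steps to the set `T2`. -/
def stepsP (π : Equiv.Perm (Fin n)) (T2 : Set (Fin n)) (x : Fin n) (s : ℕ) : Prop :=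
  (0 < s ∧ s ≤ orderOf π ∧ (π ^ s) x ∈ T2) ∨ s = orderOf π + 1

lemma stepsP_ex (π : Equiv.Perm (Fin n)) (T2 : Set (Fin n)) (x : Fin n) :
    ∃ s, stepsP π T2 x s := ⟨orderOf π + 1, Or.inr rfl⟩

/-- Number of steps from `x` (exclusive) until the orbit hits `T2`. -/
noncomputable def steps (π : Equiv.Perm (Fin n)) (T2 : Set (Fin n)) (x : Fin n) : ℕ :=
  Nat.find (stepsP_ex π T2 x)

lemma steps_spec (π : Equiv.Perm (Fin n)) (T2 : Set (Fin n)) (x : Fin n) :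
    stepsP π T2 x (steps π T2 x) := Nat.find_spec (stepsP_ex π T2 x)

lemma steps_le {π : Equiv.Perm (Fin n)} {T2 : Set (Fin n)} {x : Fin n} {s : ℕ}
    (h : stepsP π T2 x s) : steps π T2 x ≤ s := Nat.find_le h

lemma steps_min {π : Equiv.Perm (Fin n)} {T2 : Set (Fin n)} {x : Fin n} {s : ℕ}
    (h : s < steps π T2 x) : ¬ stepsP π T2 x s := Nat.find_min (stepsP_ex π T2 x) h

lemma steps_le_top (π : Equiv.Perm (Fin n)) (T2 : Set (Fin n)) (x : Fin n) :
    steps π T2 x ≤ orderOf π + 1 := steps_le (Or.inr rfl)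

/-- If there is a genuine witness, `steps` satisfies the genuine property. -/
lemma steps_good {π : Equiv.Perm (Fin n)} {T2 : Set (Fin n)} {x : Fin n}
    (h : ∃ s, 0 < s ∧ s ≤ orderOf π ∧ (π ^ s) x ∈ T2) :
    0 < steps π T2 x ∧ steps π T2 x ≤ orderOf π ∧ (π ^ steps π T2 x) x ∈ T2 := by
  obtain ⟨s, hs1, hs2, hs3⟩ := h
  have hle : steps π T2 x ≤ s := steps_le (Or.inl ⟨hs1, hs2, hs3⟩)
  rcases steps_spec π T2 x with h' | h'
  · exact h'
  · omega

lemma steps_not_mem {π : Equiv.Perm (Fin n)} {T2 : Set (Fin n)} {x : Fin n} {s : ℕ}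
    (h1 : 0 < s) (h2 : s < steps π T2 x) : (π ^ s) x ∉ T2 := by
  intro hmem
  have hs : s ≤ orderOf π := by
    have := steps_le_top π T2 x
    omega
  exact steps_min h2 (Or.inl ⟨h1, hs, hmem⟩)

/-- The matrix construction. `Ts` is the set of rerouted (column-indexed) rows, and
`tm` maps a rerouted row to its pivot column. -/
noncomputable def Mm (F : Type*) [Field F] (j : Fin (n - 1) → Fin n) (d : Fin (n - 1) → ℕ)
    (Ts : Set (Fin n)) (tm : Fin n → Fin n) : Matrix (Fin (n - 1)) (Fin n) (Polynomial F) :=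
  fun i b =>
    (if b = cst i ∧ b ≠ j i then 1 else 0)
    + (if b = j i then (if j i = cst i ∧ d i ≠ 0 then 1 + X ^ (d i) else X ^ (d i)) else 0)
    + (if cst i ∈ Ts ∧ b = tm (cst i) then 1 else 0)

section MmLemmas
variable {F : Type*} [Field F] (j : Fin (n - 1) → Fin n) (d : Fin (n - 1) → ℕ)
  (Ts : Set (Fin n)) (tm : Fin n → Fin n)
  (Hts : ∀ i : Fin (n - 1), cst i ∈ Ts →
    (j i : ℕ) ≤ (i : ℕ) ∧ 0 < d i ∧ (i : ℕ) < (tm (cst i) : ℕ))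
  (Hjd : ∀ i : Fin (n - 1), (j i : ℕ) < (i : ℕ) → 0 < d i)
  (Htriv : ∀ i : Fin (n - 1), cst i ∉ Ts → j i = cst i → d i = 0)

lemma bot_lt_nat (m : ℕ) : (⊥ : WithBot ℕ) < (m : WithBot ℕ) := by
  exact_mod_cast WithBot.bot_lt_coe m

lemma zero_le_nat (m : ℕ) : (0 : WithBot ℕ) ≤ (m : WithBot ℕ) := by
  exact_mod_cast Nat.zero_le m

lemma zero_lt_nat {m : ℕ} (h : 0 < m) : (0 : WithBot ℕ) < (m : WithBot ℕ) := by
  exact_mod_cast h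

lemma deg_one_add_X_pow {m : ℕ} (hm : m ≠ 0) :
    ((1 + X ^ m : Polynomial F)).degree = (m : WithBot ℕ) := by
  rw [degree_add_eq_right_of_degree_lt, degree_X_pow]
  rw [degree_one, degree_X_pow]
  exact zero_lt_nat (Nat.pos_of_ne_zero hm)

include Hts in
lemma Mm_deg_le (i : Fin (n - 1)) (b : Fin n) (hb : (b : ℕ) < (j i : ℕ)) :
    (Mm F j d Ts tm i b).degree ≤ (d i : WithBot ℕ) := by
  have h2 : ¬ (b = j i) := by
    intro h
    have : (b : ℕ) = (j i : ℕ) := by rw [h]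
    omega
  have h3 : ¬ (cst i ∈ Ts ∧ b = tm (cst i)) := by
    rintro ⟨hm, he⟩
    obtain ⟨ha, _, hcℕ⟩ := Hts i hm
    have : (b : ℕ) = (tm (cst i) : ℕ) := by rw [he]
    omega
  unfold Mm
  rw [if_neg h2, if_neg h3, add_zero, add_zero]
  split_ifs with h1
  · rw [degree_one]; exact zero_le_nat (d i)
  · rw [degree_zero]; exact bot_le

include Hts in
lemma Mm_deg_eq (i : Fin (n - 1)) :
    (Mm F j d Ts tm i (j i)).degree = (d i : WithBot ℕ) := by
  have h3 : ¬ (cst i ∈ Ts ∧ (j i : Fin n) = tm (cst i)) := by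
    rintro ⟨hm, he⟩
    obtain ⟨ha, _, hcℕ⟩ := Hts i hm
    have : (j i : ℕ) = (tm (cst i) : ℕ) := by rw [he]
    omega
  have h1 : ¬ ((j i : Fin n) = cst i ∧ (j i : Fin n) ≠ j i) := by simp
  unfold Mm
  rw [if_neg h1, if_pos rfl, if_neg h3, add_zero, zero_add]
  split_ifs with h2
  · exact deg_one_add_X_pow h2.2
  · exact degree_X_pow (d i)

include Hts Hjd in
lemma Mm_deg_lt (i : Fin (n - 1)) (b : Fin n) (hb : (j i : ℕ) < (b : ℕ)) :
    (Mm F j d Ts tm i b).degree < (d i : WithBot ℕ) := by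
  have hbj : ¬ (b = j i) := by
    intro h
    have : (b : ℕ) = (j i : ℕ) := by rw [h]
    omega
  unfold Mm
  rw [if_neg hbj]
  split_ifs with h1 h3 h3
  · exfalso
    obtain ⟨hm, he⟩ := h3
    obtain ⟨_, _, hcℕ⟩ := Hts i hm
    have h4 : (b : ℕ) = (tm (cst i) : ℕ)  := by rw [he]
    have h5 : (b : ℕ) = (i : ℕ) := by rw [h1.1]; simp
    omega
  · have hd : 0 < d i := by
      apply Hjd
      have : (b : ℕ) = (i : ℕ) := by rw [h1.1]; simp
      omega
    simp only [add_zero, zero_add, degree_one]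
    exact zero_lt_nat hd
  · obtain ⟨_, hd, _⟩ := Hts i h3.1
    simp only [add_zero, zero_add, degree_one]
    exact zero_lt_nat hd
  · simp only [add_zero, zero_add, degree_zero]
    exact bot_lt_nat (d i)

include Hts in
lemma Mm_eval_diag (i : Fin (n - 1)) : (Mm F j d Ts tm i (cst i)).eval 0 = 1 := by
  have h3 : ¬ (cst i ∈ Ts ∧ (cst i : Fin n) = tm (cst i)) := by
    rintro ⟨hm, he⟩
    obtain ⟨_, _, hcℕ⟩ := Hts i hm
    have : ((cst i : Fin n) : ℕ) = (tm (cst i) : ℕ) := by rw [← he]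
    simp only [cst_val] at this
    omega
  unfold Mm
  rw [if_neg h3, add_zero]
  rcases em ((cst i : Fin n) = j i) with hji | hji
  · rw [if_neg (by simp [hji]), if_pos hji, zero_add]
    split_ifs with h2
    · simp [zero_pow h2.2]
    · rcases em (d i = 0) with hd | hd
      · simp [hd]
      · exact absurd ⟨hji.symm, hd⟩ h2
  · rw [if_pos ⟨rfl, hji⟩, if_neg (fun h => hji h), add_zero]
    simp

include Hts Hjd in
lemma Mm_eval_lt (i : Fin (n - 1)) (b : Fin n) (hb : (b : ℕ) < (i : ℕ)) :
    (Mm F j d Ts tm i b).eval 0 = 0 := by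
  have h1 : ¬ (b = cst i ∧ b ≠ j i) := by
    rintro ⟨h, _⟩
    have : (b : ℕ) = (i : ℕ) := by rw [h]; simp
    omega
  have h3 : ¬ (cst i ∈ Ts ∧ b = tm (cst i)) := by
    rintro ⟨hm, he⟩
    obtain ⟨_, _, hcℕ⟩ := Hts i hm
    have : (b : ℕ) = (tm (cst i) : ℕ) := by rw [he]
    omega
  unfold Mm
  rw [if_neg h1, if_neg h3, zero_add, add_zero]
  rcases em (b = j i) with h2 | h2
  · rw [if_pos h2]
    have hji : ¬ ((j i : Fin n) = cst i ∧ d i ≠ 0) := by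
      rintro ⟨h, _⟩
      have : (j i : ℕ) = (i : ℕ) := by rw [h]; simp
      have : (b : ℕ) = (j i : ℕ) := by rw [h2]
      omega
    rw [if_neg hji]
    have hd : 0 < d i := by
      apply Hjd
      have : (b : ℕ) = (j i : ℕ) := by rw [h2]
      omega
    simp [zero_pow (Nat.pos_iff_ne_zero.mp hd)]
  · rw [if_neg h2]
    simp

lemma Mm_support (i : Fin (n - 1)) (b : Fin n) (h : Mm F j d Ts tm i b ≠ 0) :
    b = cst i ∨ b = j i ∨ (cst i ∈ Ts ∧ b = tm (cst i)) := by
  by_contra hcon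
  push_neg at hcon
  obtain ⟨hc1, hc2, hc3⟩ := hcon
  apply h
  unfold Mm
  rw [if_neg (fun hh : b = cst i ∧ b ≠ j i => hc1 hh.1), if_neg hc2,
    if_neg (fun hh : cst i ∈ Ts ∧ b = tm (cst i) => hc3 hh.1 hh.2)]
  simp

include Hts in
lemma Mm_pivot_mem (i : Fin (n - 1)) (hm : (cst i : Fin n) ∈ Ts) :
    Mm F j d Ts tm i (tm (cst i)) = 1 := by
  obtain ⟨ha, hd, hcℕ⟩ := Hts i hm
  have h1 : ¬ (tm (cst i) = cst i ∧ tm (cst i) ≠ j i) := by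
    rintro ⟨h, _⟩
    have : (tm (cst i) : ℕ) = (i : ℕ) := by rw [h]; simp
    omega
  have h2 : ¬ (tm (cst i) = j i) := by
    intro h
    have : (tm (cst i) : ℕ) = (j i : ℕ) := by rw [h]
    omega
  unfold Mm
  rw [if_neg h1, if_neg h2, if_pos ⟨hm, rfl⟩]
  simp

include Htriv in
lemma Mm_pivot_notmem (i : Fin (n - 1)) (hm : (cst i : Fin n) ∉ Ts) :
    Mm F j d Ts tm i (cst i) = 1 := by
  have h3 : ¬ ((cst i : Fin n) ∈ Ts ∧ (cst i : Fin n) = tm (cst i)) := fun h => hm h.1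
  unfold Mm
  rw [if_neg h3, add_zero]
  rcases em ((cst i : Fin n) = j i) with hji | hji
  · have hd : d i = 0 := Htriv i hm hji.symm
    rw [if_neg (by simp [hji]), if_pos hji, zero_add,
      if_neg (by rintro ⟨_, hh⟩; exact hh hd), hd]
    exact pow_zero X
  · rw [if_pos ⟨rfl, hji⟩, if_neg (fun h => hji h), add_zero]

end MmLemmas


end Stmt12Aux

/-- Given pairwise different columns `j_1,…,j_{n−1} ∈ {1,…,n}` and
degrees `d_1,…,d_{n−1} ∈ ℕ` with `j_i < i → d_i > 0`, there is a basic matrix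
`M ∈ F[t]^{(n−1)×n}` such that: (i) `deg m_{ij} ≤ d_i` for `j < j_i`;
(ii) `deg m_{i,j_i} = d_i`; (iii) `deg m_{ij} < d_i` for `j > j_i`;
(iv) `m_{ii}(0) = 1` for all `i`; (v) `m_{ij}(0) = 0` for `j < i`. -/
theorem exists_basic_matrix_with_degrees {F : Type*} [Field F] [Fintype F] {n : ℕ}
    (hn : 2 ≤ n) (j : Fin (n - 1) → Fin n) (hj : Function.Injective j)
    (d : Fin (n - 1) → ℕ) (hjd : ∀ i : Fin (n - 1), ((j i : ℕ) < (i : ℕ)) → 0 < d i) :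
    ∃ M : Matrix (Fin (n - 1)) (Fin n) (Polynomial F), IsBasic M ∧
      (∀ (i : Fin (n - 1)) (b : Fin n), (b : ℕ) < (j i : ℕ) →
        (M i b).degree ≤ (d i : WithBot ℕ)) ∧
      (∀ i : Fin (n - 1), (M i (j i)).degree = (d i : WithBot ℕ)) ∧
      (∀ (i : Fin (n - 1)) (b : Fin n), (j i : ℕ) < (b : ℕ) →
        (M i b).degree < (d i : WithBot ℕ)) ∧
      (∀ i : Fin (n - 1), (M i (Fin.castLE (Nat.sub_le n 1) i)).eval 0 = 1) ∧
      (∀ (i : Fin (n - 1)) (b : Fin n), (b : ℕ) < (i : ℕ) → (M i b).eval 0 = 0) := by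
  classical
  open Stmt12Aux in
  -- the last column
  obtain ⟨lastc, hlastval⟩ : ∃ lc : Fin n, (lc : ℕ) = n - 1 := ⟨⟨n - 1, by omega⟩, rfl⟩
  -- the permutation extending `j`
  obtain ⟨π, hπrow⟩ : ∃ π : Equiv.Perm (Fin n), ∀ i : Fin (n - 1), π (cst i) = j i := by
    obtain ⟨c, hc⟩ : ∃ c : Fin n, ∀ i, j i ≠ c := by
      by_contra h
      push_neg at h
      have hsurj : Function.Surjective j := fun c => h c
      have hcard := Fintype.card_le_of_surjective j hsurj
      simp only [Fintype.card_fin] at hcard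
      omega
    have hfinj : Function.Injective
        (fun x : Fin n => if h : (x : ℕ) < n - 1 then j ⟨x, h⟩ else c) := by
      intro x y hxy
      simp only at hxy
      split_ifs at hxy with h1 h2 h2
      · have h3 := hj hxy
        simp only [Fin.mk.injEq] at h3
        exact Fin.ext h3
      · exact absurd hxy (hc _)
      · exact absurd hxy.symm (hc _)
      · apply Fin.ext
        have hx := x.isLt
        have hy := y.isLt
        omega
    refine ⟨Equiv.ofBijective _ (Finite.injective_iff_bijective.mp hfinj), fun i => ?_⟩
    show (if h : ((cst i : Fin n) : ℕ) < n - 1 then j ⟨(cst i : Fin n), h⟩ else c) = j i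
    rw [dif_pos (show ((cst i : Fin n) : ℕ) < n - 1 from by simpa using i.isLt)]
    exact congrArg j (Fin.ext (by simp))
  -- degrees indexed by columns
  obtain ⟨dr, hdrc⟩ : ∃ dr : Fin n → ℕ, ∀ i : Fin (n - 1), dr (cst i) = d i :=
    ⟨fun x => if h : (x : ℕ) < n - 1 then d ⟨x, h⟩ else 0,
      fun i => by
        show (if h : ((cst i : Fin n) : ℕ) < n - 1
            then d ⟨((cst i : Fin n) : ℕ), h⟩ else 0) = d i
        rw [dif_pos (show ((cst i : Fin n) : ℕ) < n - 1 from by simpa using i.isLt)]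
        exact congrArg d (Fin.ext (by simp))⟩
  -- basic facts
  have hcst_ne_last : ∀ i : Fin (n - 1), (cst i : Fin n) ≠ lastc := by
    intro i h
    have := congrArg Fin.val h
    simp only [cst_val, hlastval] at this
    have := i.isLt
    omega
  have hlt_last : ∀ x : Fin n, x ≠ lastc → x < lastc := by
    intro x hx
    have h1 := x.isLt
    have h2 : (x : ℕ) ≠ n - 1 := fun h => hx (Fin.ext (by rw [h, hlastval]))
    rw [Fin.lt_def, hlastval]
    omega
  have hsc_pow : ∀ (x : Fin n) (s : ℕ), π.SameCycle x ((π ^ s) x) :=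
    fun x s => ⟨s, by rw [zpow_natCast]⟩
  have hfixed : ∀ x y : Fin n, π x = x → π.SameCycle x y → y = x := by
    rintro x y hfx ⟨k, hk⟩
    rw [Equiv.Perm.zpow_apply_eq_self_of_apply_eq_self hfx k] at hk
    exact hk.symm
  -- the reroute set
  set Ts : Set (Fin n) := {x | ¬π.SameCycle x lastc ∧ (∀ y, π.SameCycle x y → y ≤ x) ∧
      ¬(π x = x ∧ dr x = 0)} with hTs
  set T2 : Set (Fin n) := insert lastc Ts with hT2
  have hT2last : lastc ∈ T2 := Set.mem_insert _ _
  have hTsT2 : ∀ x ∈ Ts, x ∈ T2 := fun x hx => Set.mem_insert_of_mem _ hx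
  have hT2cases : ∀ x ∈ T2, x = lastc ∨ x ∈ Ts := fun x hx => Set.mem_insert_iff.mp hx
  have hTs_ne_last : ∀ x ∈ Ts, x ≠ lastc := by
    intro x hx h
    subst h
    exact hx.1 (Equiv.Perm.SameCycle.refl π x)
  have hTs_pi_le : ∀ x ∈ Ts, π x ≤ x := by
    intro x hx
    exact hx.2.1 (π x) ⟨1, by rw [zpow_one]⟩
  -- the target map
  obtain ⟨tm, htm⟩ : ∃ tm : Fin n → Fin n, ∀ x : Fin n, x ≠ lastc →
      (tm x ∈ T2 ∧ x < tm x ∧ ∀ y ∈ T2, x < y → tm x ≤ y) := by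
    have hex : ∀ x : Fin n, ∃ y : Fin n, x ≠ lastc →
        (y ∈ T2 ∧ x < y ∧ ∀ z ∈ T2, x < z → y ≤ z) := by
      intro x
      by_cases hx : x = lastc
      · exact ⟨x, fun h => absurd hx h⟩
      · have hne : (Finset.univ.filter (fun y => y ∈ T2 ∧ x < y)).Nonempty :=
          ⟨lastc, by simp [hT2last, hlt_last x hx]⟩
        refine ⟨(Finset.univ.filter (fun y => y ∈ T2 ∧ x < y)).min' hne, fun _ => ?_⟩
        have h1 := Finset.min'_mem _ hne
        simp only [Finset.mem_filter] at h1
        exact ⟨h1.2.1, h1.2.2, fun z hz hxz => Finset.min'_le _ _ (by simp [hz, hxz])⟩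
    exact ⟨fun x => (hex x).choose, fun x hx => (hex x).choose_spec hx⟩
  -- the pivot map
  set p : Fin (n - 1) → Fin n := fun i => if (cst i : Fin n) ∈ Ts then tm (cst i) else cst i
    with hp
  have htm_inj : ∀ x ∈ Ts, ∀ y ∈ Ts, tm x = tm y → x = y := by
    intro x hx y hy hxy
    rcases lt_trichotomy x y with h | h | h
    · exfalso
      have h1 : tm x ≤ y := (htm x (hTs_ne_last x hx)).2.2 y (hTsT2 y hy) h
      have h2 : y < tm y := (htm y (hTs_ne_last y hy)).2.1
      rw [hxy] at h1
      exact absurd h2 (not_lt.mpr h1)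
    · exact h
    · exfalso
      have h1 : tm y ≤ x := (htm y (hTs_ne_last y hy)).2.2 x (hTsT2 x hx) h
      have h2 : x < tm x := (htm x (hTs_ne_last x hx)).2.1
      rw [← hxy] at h1
      exact absurd h2 (not_lt.mpr h1)
  have hp_inj : Function.Injective p := by
    intro a b hab
    simp only [hp] at hab
    split_ifs at hab with ha hb hb
    · exact cst_inj (htm_inj _ ha _ hb hab)
    · exfalso
      have h1 : tm (cst a) ∈ T2 := (htm _ (hcst_ne_last a)).1
      rw [hab] at h1
      rcases hT2cases _ h1 with h | h
      · exact hcst_ne_last b h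
      · exact hb h
    · exfalso
      have h1 : tm (cst b) ∈ T2 := (htm _ (hcst_ne_last b)).1
      rw [← hab] at h1
      rcases hT2cases _ h1 with h | h
      · exact hcst_ne_last a h
      · exact ha h
    · exact cst_inj hab
  -- structural hypotheses for the matrix lemmas
  have Hts : ∀ i : Fin (n - 1), (cst i : Fin n) ∈ Ts →
      (j i : ℕ) ≤ (i : ℕ) ∧ 0 < d i ∧ (i : ℕ) < (tm (cst i) : ℕ) := by
    intro i hi
    have h1 : π (cst i) ≤ cst i := hTs_pi_le _ hi
    rw [hπrow i] at h1
    have h1' : (j i : ℕ) ≤ (i : ℕ) := by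
      have := Fin.le_def.mp h1
      simpa using this
    have h2 : 0 < d i := by
      rcases Nat.lt_or_ge (j i : ℕ) (i : ℕ) with h | h
      · exact hjd i h
      · have hji : (j i : ℕ) = (i : ℕ) := by omega
        have hfix : π (cst i) = cst i := by
          rw [hπrow i]
          apply Fin.ext
          simp [hji]
        have h3 := hi.2.2
        rw [hdrc i] at h3
        rcases Nat.eq_zero_or_pos (d i) with h4 | h4
        · exact absurd ⟨hfix, h4⟩ h3
        · exact h4
    have h3 : (i : ℕ) < (tm (cst i) : ℕ) := by
      have := Fin.lt_def.mp (htm _ (hcst_ne_last i)).2.1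
      simpa using this
    exact ⟨h1', h2, h3⟩
  have Htriv : ∀ i : Fin (n - 1), (cst i : Fin n) ∉ Ts → j i = cst i → d i = 0 := by
    intro i hni hji
    by_contra hd
    apply hni
    have hfix : π (cst i) = cst i := by rw [hπrow i, hji]
    refine ⟨?_, ?_, ?_⟩
    · intro hsc
      exact hcst_ne_last i (hfixed _ _ hfix hsc ▸ rfl)
    · intro y hy
      rw [hfixed _ _ hfix hy]
    · rintro ⟨_, hdr0⟩
      rw [hdrc i] at hdr0
      exact hd hdr0
  -- the matrix
  set Mx : Matrix (Fin (n - 1)) (Fin n) (Polynomial F) := Stmt12Aux.Mm F j d Ts tm with hMx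
  -- order of the permutation
  set N : ℕ := orderOf π with hNdef
  have hN : 0 < N := orderOf_pos π
  -- steps machinery
  have hgoodT2 : ∀ x ∈ T2, ∃ s, 0 < s ∧ s ≤ N ∧ (π ^ s) x ∈ T2 := by
    intro x hx
    refine ⟨N, hN, le_rfl, ?_⟩
    rw [hNdef, pow_orderOf_eq_one]
    simpa using hx
  have huniq : ∀ x ∈ T2, ∀ y ∈ T2, π.SameCycle x y → x = y := by
    intro x hx y hy hxy
    rcases hT2cases x hx with rfl | hx' <;> rcases hT2cases y hy with rfl | hy'
    · rfl
    · exact absurd hxy.symm hy'.1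
    · exact absurd hxy hx'.1
    · exact le_antisymm (hy'.2.1 x hxy.symm) (hx'.2.1 y hxy)
  have hhit_self : ∀ x ∈ T2, (π ^ Stmt12Aux.steps π T2 x) x = x := by
    intro x hx
    have h := Stmt12Aux.steps_good (hgoodT2 x hx)
    exact (huniq x hx _ h.2.2 (hsc_pow x _)).symm
  have hgoodG : ∀ x : Fin n, x ≠ lastc → π x ≠ x → ∃ s, 0 < s ∧ s ≤ N ∧ (π ^ s) x ∈ T2 := by
    intro x hxl hfix
    by_cases hsc : π.SameCycle x lastc
    · obtain ⟨s, hs1, hs2, hs3⟩ := hsc.exists_pow_eq''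
      exact ⟨s, hs1, hs2, by rw [hs3]; exact hT2last⟩
    · have hxS : x ∈ Finset.univ.filter (fun y => π.SameCycle x y) := by
        simp [Equiv.Perm.SameCycle.refl]
      have hne : (Finset.univ.filter (fun y => π.SameCycle x y)).Nonempty := ⟨x, hxS⟩
      set m := (Finset.univ.filter (fun y => π.SameCycle x y)).max' hne with hm
      have hmS := Finset.max'_mem _ hne
      simp only [Finset.mem_filter] at hmS
      have hxm : π.SameCycle x m := hmS.2
      have hm_ne_fix : π m ≠ m := by
        intro hfm
        have h1 : x = m := hfixed m x hfm hxm.symm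
        rw [← h1] at hfm
        exact hfix hfm
      have hmT2 : m ∈ T2 := by
        apply hTsT2
        refine ⟨fun h => hsc (hxm.trans h), ?_, fun h => hm_ne_fix h.1⟩
        intro y hy
        exact Finset.le_max' _ _ (by simp [hxm.trans hy])
      obtain ⟨s, hs1, hs2, hs3⟩ := hxm.exists_pow_eq''
      exact ⟨s, hs1, hs2, by rw [hs3]; exact hmT2⟩
  have hpow_step : ∀ (x : Fin n) (s : ℕ), (π ^ s) (π x) = (π ^ (s + 1)) x := by
    intro x s
    rw [pow_succ, Equiv.Perm.mul_apply]
  have htrans : ∀ x : Fin n, (∃ s, 0 < s ∧ s ≤ N ∧ (π ^ s) x ∈ T2) → (π x) ∉ T2 →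
      Stmt12Aux.steps π T2 (π x) = Stmt12Aux.steps π T2 x - 1 ∧
      (π ^ (Stmt12Aux.steps π T2 (π x))) (π x) = (π ^ Stmt12Aux.steps π T2 x) x := by
    intro x hgx hnx
    have h := Stmt12Aux.steps_good hgx
    have hx1 : 0 < Stmt12Aux.steps π T2 x := h.1
    have hx2 : Stmt12Aux.steps π T2 x ≤ N := h.2.1
    have h2 : 2 ≤ Stmt12Aux.steps π T2 x := by
      rcases Nat.lt_or_ge (Stmt12Aux.steps π T2 x) 2 with h' | h'
      · exfalso
        have h1 : Stmt12Aux.steps π T2 x = 1 := by omega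
        have := h.2.2
        rw [h1, pow_one] at this
        exact hnx this
      · exact h'
    have hle : Stmt12Aux.steps π T2 (π x) ≤ Stmt12Aux.steps π T2 x - 1 := by
      apply Stmt12Aux.steps_le
      left
      refine ⟨by omega, by omega, ?_⟩
      rw [hpow_step]
      have he : Stmt12Aux.steps π T2 x - 1 + 1 = Stmt12Aux.steps π T2 x := by omega
      rw [he]
      exact h.2.2
    have hspec := Stmt12Aux.steps_spec π T2 (π x)
    have hge : ¬ (Stmt12Aux.steps π T2 (π x) < Stmt12Aux.steps π T2 x - 1) := by
      intro hlt
      rcases hspec with h' | h'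
      · have hmem := h'.2.2
        rw [hpow_step] at hmem
        exact Stmt12Aux.steps_not_mem (by omega) (by omega) hmem
      · omega
    have heq : Stmt12Aux.steps π T2 (π x) = Stmt12Aux.steps π T2 x - 1 := by omega
    refine ⟨heq, ?_⟩
    have he2 : Stmt12Aux.steps π T2 x - 1 + 1 = Stmt12Aux.steps π T2 x := by omega
    rw [heq, hpow_step, he2]
  -- the rank function
  set ν : Fin (n - 1) → ℕ := fun i =>
    (((π ^ Stmt12Aux.steps π T2 (cst i)) (cst i) : Fin n) : ℕ) * (N + 2)
      + Stmt12Aux.steps π T2 (cst i) with hν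
  have hcalc : ∀ ka sa ki si : ℕ, sa ≤ N + 1 → ka < ki →
      ka * (N + 2) + sa < ki * (N + 2) + si := by
    intro ka sa ki si h1 h2
    calc ka * (N + 2) + sa < ka * (N + 2) + (N + 2) := by omega
      _ = (ka + 1) * (N + 2) := by ring
      _ ≤ ki * (N + 2) := Nat.mul_le_mul_right _ h2
      _ ≤ ki * (N + 2) + si := Nat.le_add_right _ _
  -- the key triangularity lemma
  have hkey : ∀ i a : Fin (n - 1), a ≠ i → Mx i (p a) ≠ 0 → ν a < ν i := by
    intro i a hne hMa
    have hsupp := Stmt12Aux.Mm_support j d Ts tm i (p a) (by rw [← hMx]; exact hMa)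
    have hKself : ∀ b : Fin (n - 1), (cst b : Fin n) ∈ Ts →
        (((π ^ Stmt12Aux.steps π T2 (cst b)) (cst b) : Fin n) : ℕ) = (b : ℕ) := by
      intro b hb
      rw [hhit_self _ (hTsT2 _ hb)]
      simp
    -- case: p a = t (cst i)  (third summand, i rerouted)
    rcases hsupp with hcase | hcase | hcase
    · -- p a = cst i
      by_cases ha : (cst a : Fin n) ∈ Ts
      · -- t (cst a) = cst i
        have hta : tm (cst a) = cst i := by
          rw [← hcase, hp]
          simp [ha]
        have hiT2 : (cst i : Fin n) ∈ T2 := by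
          rw [← hta]
          exact (htm _ (hcst_ne_last a)).1
        have hlt : (a : ℕ) < (i : ℕ) := by
          have := Fin.lt_def.mp (htm _ (hcst_ne_last a)).2.1
          rw [hta] at this
          simpa using this
        have hKi : (((π ^ Stmt12Aux.steps π T2 (cst i)) (cst i) : Fin n) : ℕ) = (i : ℕ) := by
          rw [hhit_self _ hiT2]
          simp
        rw [hν]
        simp only
        rw [hKself a ha, hKi]
        exact hcalc _ _ _ _ (Stmt12Aux.steps_le_top π T2 (cst a)) hlt
      · -- p a = cst a = cst i, contradiction
        exfalso
        apply hne
        apply cst_inj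
        rw [← hcase, hp]
        simp [ha]
    · -- p a = j i
      by_cases hji : j i = cst i
      · -- reduces to the previous case: p a = cst i
        by_cases ha : (cst a : Fin n) ∈ Ts
        · have hta : tm (cst a) = cst i := by
            rw [← hji, ← hcase, hp]
            simp [ha]
          have hiT2 : (cst i : Fin n) ∈ T2 := by
            rw [← hta]
            exact (htm _ (hcst_ne_last a)).1
          have hlt : (a : ℕ) < (i : ℕ) := by
            have := Fin.lt_def.mp (htm _ (hcst_ne_last a)).2.1
            rw [hta] at this
            simpa using this
          have hKi : (((π ^ Stmt12Aux.steps π T2 (cst i)) (cst i) : Fin n) : ℕ) = (i : ℕ) := by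
            rw [hhit_self _ hiT2]
            simp
          rw [hν]
          simp only
          rw [hKself a ha, hKi]
          exact hcalc _ _ _ _ (Stmt12Aux.steps_le_top π T2 (cst a)) hlt
        · exfalso
          apply hne
          apply cst_inj
          rw [← hji, ← hcase, hp]
          simp [ha]
      · -- genuine case: π (cst i) = j i ≠ cst i
        have hπx : π (cst i) = j i := hπrow i
        by_cases ha : (cst a : Fin n) ∈ Ts
        · -- π (cst i) ∈ T2, one step
          have hta : tm (cst a) = j i := by
            rw [← hcase, hp]
            simp [ha]
          have hjT2 : (j i : Fin n) ∈ T2 := by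
            rw [← hta]
            exact (htm _ (hcst_ne_last a)).1
          have hsteps1 : Stmt12Aux.steps π T2 (cst i) = 1 := by
            have hle : Stmt12Aux.steps π T2 (cst i) ≤ 1 := by
              apply Stmt12Aux.steps_le
              left
              exact ⟨one_pos, hN, by rw [pow_one, hπx]; exact hjT2⟩
            have hpos : Stmt12Aux.steps π T2 (cst i) ≠ 0 := by
              intro h0
              rcases Stmt12Aux.steps_spec π T2 (cst i) with h' | h'
              · have := h'.1; omega
              · omega
            omega
          have hKi : (((π ^ Stmt12Aux.steps π T2 (cst i)) (cst i) : Fin n) : ℕ)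
              = (j i : ℕ) := by
            rw [hsteps1, pow_one, hπx]
          have hlt : (a : ℕ) < (j i : ℕ) := by
            have := Fin.lt_def.mp (htm _ (hcst_ne_last a)).2.1
            rw [hta] at this
            simpa using this
          rw [hν]
          simp only
          rw [hKself a ha, hKi, hsteps1]
          exact hcalc _ _ _ _ (Stmt12Aux.steps_le_top π T2 (cst a)) hlt
        · -- π (cst i) = cst a ∉ T2: transfer
          have hpa : p a = cst a := by rw [hp]; simp [ha]
          have hxa : π (cst i) = cst a := by rw [hπx, ← hcase, hpa]
          have hπx_ne : π (cst i) ≠ cst i := by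
            rw [hxa]
            intro h
            exact hne (cst_inj h)
          have hnx : π (cst i) ∉ T2 := by
            rw [hxa]
            intro hmem
            rcases hT2cases _ hmem with h | h
            · exact hcst_ne_last a h
            · exact ha h
          have hgx := hgoodG (cst i) (hcst_ne_last i) hπx_ne
          obtain ⟨hst, hhit⟩ := htrans (cst i) hgx hnx
          have hpos : 0 < Stmt12Aux.steps π T2 (cst i) := (Stmt12Aux.steps_good hgx).1
          rw [hν]
          simp only
          rw [← hxa, hhit, hst]
          have h2 : 2 ≤ Stmt12Aux.steps π T2 (cst i) := by
            rcases Nat.lt_or_ge (Stmt12Aux.steps π T2 (cst i)) 2 with h' | h'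
            · exfalso
              have h1 : Stmt12Aux.steps π T2 (cst i) = 1 := by omega
              have := (Stmt12Aux.steps_good hgx).2.2
              rw [h1, pow_one] at this
              exact hnx this
            · exact h'
          exact Nat.add_lt_add_left (by omega) _
    · -- p a = tm (cst i) with cst i ∈ Ts: then p a = p i, contradiction
      exfalso
      apply hne
      apply hp_inj
      rw [hcase.2, hp]
      simp [hcase.1]
  -- the square submatrix on the pivot columns
  set B : Matrix (Fin (n - 1)) (Fin (n - 1)) (Polynomial F) := fun a b => Mx a (p b) with hB
  have hdiag : ∀ i, B i i = 1 := by
    intro i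
    show Mx i (p i) = 1
    by_cases hm : (cst i : Fin n) ∈ Ts
    · have hpi : p i = tm (cst i) := by rw [hp]; simp [hm]
      rw [hpi, hMx]
      exact Stmt12Aux.Mm_pivot_mem j d Ts tm Hts i hm
    · have hpi : p i = cst i := by rw [hp]; simp [hm]
      rw [hpi, hMx]
      exact Stmt12Aux.Mm_pivot_notmem j d Ts tm Htriv i hm
  obtain ⟨σ, hσmono⟩ : ∃ σ : Equiv.Perm (Fin (n - 1)), Monotone (ν ∘ σ) :=
    ⟨Tuple.sort ν, Tuple.monotone_sort ν⟩
  have hdet : B.det = 1 := by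
    have htri : (B.submatrix σ σ).BlockTriangular OrderDual.toDual := by
      intro a b hab
      have hab' : a < b := hab
      by_contra hz
      have hne : σ b ≠ σ a := fun h => (ne_of_lt hab') (σ.injective h).symm
      have hz' : Mx (σ a) (p (σ b)) ≠ 0 := hz
      have := hkey (σ a) (σ b) hne hz'
      have hmono := hσmono (le_of_lt hab')
      simp only [Function.comp] at hmono
      omega
    have h1 := Matrix.det_of_lowerTriangular (B.submatrix σ σ) htri
    rw [Matrix.det_submatrix_equiv_self] at h1
    rw [h1]
    have : ∀ a, (B.submatrix σ σ) a a = 1 := fun a => hdiag (σ a)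
    simp only [Matrix.submatrix_apply]
    calc ∏ a : Fin (n - 1), B (σ a) (σ a) = ∏ a : Fin (n - 1), 1 := by
          apply Finset.prod_congr rfl
          intro a _
          exact hdiag (σ a)
      _ = 1 := Finset.prod_const_one
  -- the right inverse
  have hunit : IsUnit B.det := by rw [hdet]; exact isUnit_one
  have hBinv : B * B⁻¹ = 1 := Matrix.mul_nonsing_inv B hunit
  have hbasic : IsBasic Mx := by
    refine ⟨fun b i' => if h : ∃ a, p a = b then B⁻¹ h.choose i' else 0, ?_⟩
    refine Matrix.ext fun i i' => ?_
    show (∑ b : Fin n, Mx i b * (if h : ∃ a, p a = b then B⁻¹ h.choose i' else 0))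
      = (1 : Matrix (Fin (n - 1)) (Fin (n - 1)) (Polynomial F)) i i'
    have hrw : ∀ a : Fin (n - 1),
        (if h : ∃ a', p a' = p a then B⁻¹ h.choose i' else 0) = B⁻¹ a i' := by
      intro a
      have hex : ∃ a', p a' = p a := ⟨a, rfl⟩
      rw [dif_pos hex]
      have : hex.choose = a := hp_inj hex.choose_spec
      rw [this]
    calc (∑ b : Fin n, Mx i b * (if h : ∃ a, p a = b then B⁻¹ h.choose i' else 0))
        = ∑ b ∈ Finset.univ.image p,
            Mx i b * (if h : ∃ a, p a = b then B⁻¹ h.choose i' else 0) := by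
          symm
          apply Finset.sum_subset (Finset.subset_univ _)
          intro x _ hx
          have hnex : ¬ ∃ a, p a = x := by
            intro ⟨a, ha⟩
            exact hx (Finset.mem_image.mpr ⟨a, Finset.mem_univ a, ha⟩)
          rw [dif_neg hnex, mul_zero]
      _ = ∑ a : Fin (n - 1),
            Mx i (p a) * (if h : ∃ a', p a' = p a then B⁻¹ h.choose i' else 0) := by
          apply Finset.sum_image
          intro a _ b _ hab
          exact hp_inj hab
      _ = ∑ a : Fin (n - 1), B i a * B⁻¹ a i' := by
          apply Finset.sum_congr rfl
          intro a _
          rw [hrw a]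
      _ = (B * B⁻¹) i i' := (Matrix.mul_apply).symm
      _ = (1 : Matrix (Fin (n - 1)) (Fin (n - 1)) (Polynomial F)) i i' := by rw [hBinv]
  refine ⟨Mx, hbasic, ?_, ?_, ?_, ?_, ?_⟩
  · intro i b hb
    rw [hMx]
    exact Stmt12Aux.Mm_deg_le j d Ts tm Hts i b hb
  · intro i
    rw [hMx]
    exact Stmt12Aux.Mm_deg_eq j d Ts tm Hts i
  · intro i b hb
    rw [hMx]
    exact Stmt12Aux.Mm_deg_lt j d Ts tm Hts hjd i b hb
  · intro i
    rw [hMx]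
    exact Stmt12Aux.Mm_eval_diag j d Ts tm Hts i
  · intro i b hb
    rw [hMx]
    exact Stmt12Aux.Mm_eval_lt j d Ts tm Hts hjd i b hb
end

section
/- Let j_1,…,j_{n−1} ∈ {1,…,n} be pairwise different and let d_1,…,d_{n−1} ∈ ℕ be such that j_i < i implies d_i > 0. Then there exists a basic matrix M = (m_{ij}) ∈ F[t]^{(n−1)×n} satisfying: (i) deg(m_{ij}) ≤ d_i for j < j_i; (ii) deg(m_{ij}) = d_i for j = j_i; (iii) deg(m_{ij}) < d_i for j > j_i; (iv) m_{ii}(0) = 1 for all i; and the following strengthened properties: (vi) the only nonzero entries of M strictly below the diagonal are at the positions (i, j_i) with j_i < i, and those entries equal t^{d_i}; (vii) if j_i < i, then the only nonconstant entry in the i-th row of M is at position (i, j_i). -/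
open Polynomial Matrix

open scoped Classical


section Comb
variable (k : ℕ) (s : ℕ → ℕ) (dd : ℕ → ℕ)

def Cyc (b : ℕ) : Prop := b < k ∧ ∃ m, 1 ≤ m ∧ m ≤ k ∧ s^[m] b = b

def Rmem (r : ℕ) : Prop := Cyc k s r ∧ (∀ m ≤ k, s^[m] r ≤ r) ∧ 0 < dd r

noncomputable def dst (a b : ℕ) : ℕ :=
  if h : ∃ m, s^[m] a = b then Nat.find h else 0

noncomputable def cmax (b : ℕ) : ℕ :=
  (((Finset.range (k+1)).image (fun m => s^[m] b))).max'
    (Finset.Nonempty.image ⟨0, by simp⟩ _)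

noncomputable def layer (b : ℕ) : ℕ :=
  (((Finset.range k).filter (fun r => Rmem k s dd r ∧ cmax k s b ≤ r))).card

noncomputable def rho (b : ℕ) : ℕ :=
  if Cyc k s b then layer k s dd b * (k+2) + dst s (s (cmax k s b)) b
  else (k+1) - dst s b k

noncomputable def kap (i : ℕ) : ℕ :=
  if Rmem k s dd i then
    (if h : ∃ r, i < r ∧ Rmem k s dd r then Nat.find h else k)
  else i

noncomputable def bstar : ℕ :=
  if h : ∃ r, Rmem k s dd r then Nat.find h else k

variable {k s dd}

section Lems
variable (hs1 : s k = k) (hs2 : ∀ b, b ≤ k → s b ≤ k)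
  (hs3 : ∀ a, a < k → ∀ b, b < k → s a = s b → a = b)
  (hs4 : ∀ r, r < k → s r < r → 0 < dd r) (hk : 1 ≤ k)

omit hs1 hs2 hs3 hs4 hk

include hs1 in
lemma it_k (m : ℕ) : s^[m] k = k := Function.iterate_fixed hs1 m

include hs2 in
lemma it_le {b : ℕ} (hb : b ≤ k) (m : ℕ) : s^[m] b ≤ k := by
  induction m with
  | zero => simpa
  | succ m ih => rw [Function.iterate_succ_apply']; exact hs2 _ ih

include hs1 in
lemma absorb {b m m' : ℕ} (h : m ≤ m') (hbk : s^[m] b = k) : s^[m'] b = k := by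
  obtain ⟨t, rfl⟩ := Nat.exists_eq_add_of_le h
  rw [Nat.add_comm, Function.iterate_add_apply, hbk, it_k hs1]

lemma iterate_mul_fix {b p q : ℕ} (hpb : s^[p] b = b) : s^[p * q] b = b := by
  rw [Function.iterate_mul]; exact Function.iterate_fixed hpb q

lemma period {b p : ℕ} (hp : 1 ≤ p) (hpb : s^[p] b = b) (m : ℕ) :
    s^[m] b = s^[m % p] b := by
  conv_lhs => rw [← Nat.mod_add_div m p, Function.iterate_add_apply]
  rw [iterate_mul_fix hpb]

include hs1 in
lemma cyc_ne_k {b : ℕ} (hc : Cyc k s b) (m : ℕ) : s^[m] b ≠ k := by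
  obtain ⟨hbk, p, hp1, hpk, hpb⟩ := hc
  intro h
  have h1 : s^[p * (m+1)] b = b := iterate_mul_fix hpb
  have h2' : s^[p * (m+1)] b = k := absorb hs1 (by nlinarith) h
  omega

include hs1 hs2 in
lemma cyc_lt_k {b : ℕ} (hc : Cyc k s b) (m : ℕ) : s^[m] b < k :=
  lt_of_le_of_ne (it_le hs2 (le_of_lt hc.1) m) (cyc_ne_k hs1 hc m)

include hs1 hs2 in
lemma cyc_s {b : ℕ} (hc : Cyc k s b) : Cyc k s (s b) := by
  obtain ⟨hbk, p, hp1, hpk, hpb⟩ := hc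
  refine ⟨cyc_lt_k hs1 hs2 ⟨hbk, p, hp1, hpk, hpb⟩ 1, p, hp1, hpk, ?_⟩
  have h : s^[p] (s b) = s^[p+1] b := (Function.iterate_succ_apply s p b).symm
  rw [h, Function.iterate_succ_apply', hpb]

include hs1 hs2 in
lemma cyc_it {b : ℕ} (hc : Cyc k s b) (m : ℕ) : Cyc k s (s^[m] b) := by
  induction m with
  | zero => simpa
  | succ m ih => rw [Function.iterate_succ_apply']; exact cyc_s hs1 hs2 ih

include hs2 hs3 in
lemma descend {b : ℕ} (hb : b < k) (hnk : ∀ m, m ≤ k → s^[m] b ≠ k) :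
    ∀ p q, p < q → q ≤ k → s^[p] b = s^[q] b → Cyc k s b := by
  intro p
  induction p with
  | zero =>
    intro q hpq hqk h
    exact ⟨hb, q, hpq, hqk, h.symm⟩
  | succ p ih =>
    intro q hpq hqk h
    obtain ⟨q', rfl⟩ : ∃ q', q = q' + 1 := ⟨q - 1, by omega⟩
    have hp' : s^[p] b < k :=
      lt_of_le_of_ne (it_le hs2 (le_of_lt hb) p) (hnk p (by omega))
    have hq' : s^[q'] b < k :=
      lt_of_le_of_ne (it_le hs2 (le_of_lt hb) q') (hnk q' (by omega))
    rw [Function.iterate_succ_apply', Function.iterate_succ_apply'] at h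
    exact ih q' (by omega) (by omega) (hs3 _ hp' _ hq' h)

include hs2 hs3 in
lemma reach {b : ℕ} (hb : b ≤ k) (hnc : ¬ Cyc k s b) :
    ∃ m, m ≤ k ∧ s^[m] b = k := by
  rcases eq_or_lt_of_le hb with rfl | hbk
  · exact ⟨0, by simp⟩
  by_contra hno
  push_neg at hno
  have hnk : ∀ m, m ≤ k → s^[m] b ≠ k := fun m hm => hno m hm
  have maps : ∀ m ∈ Finset.range (k+1), s^[m] b ∈ Finset.range k := by
    intro m hm
    simp only [Finset.mem_range] at *
    exact lt_of_le_of_ne (it_le hs2 (le_of_lt hbk) m) (hnk m (by omega))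
  have hcard : (Finset.range k).card < (Finset.range (k+1)).card := by simp
  obtain ⟨p, hp, q, hq, hpq, h⟩ :=
    Finset.exists_ne_map_eq_of_card_lt_of_maps_to hcard maps
  simp only [Finset.mem_range] at hp hq
  rcases Nat.lt_or_ge p q with hlt | hge
  · exact hnc (descend hs2 hs3 hbk hnk p q hlt (by omega) h)
  · exact hnc (descend hs2 hs3 hbk hnk q p (by omega) (by omega) h.symm)

lemma dst_spec {a b : ℕ} (h : ∃ m, s^[m] a = b) : s^[dst s a b] a = b := by
  rw [dst, dif_pos h]; exact Nat.find_spec h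

lemma dst_min {a b : ℕ} (m : ℕ) (hm : s^[m] a = b) : dst s a b ≤ m := by
  rw [dst, dif_pos ⟨m, hm⟩]; exact Nat.find_min' _ hm

lemma dst_self (a : ℕ) : dst s a a = 0 :=
  Nat.le_zero.mp (dst_min 0 rfl)


-- cmax lemmas
lemma cmax_mem (b : ℕ) : ∃ m, m ≤ k ∧ s^[m] b = cmax k s b := by
  have := Finset.max'_mem (((Finset.range (k+1)).image (fun m => s^[m] b)))
    (Finset.Nonempty.image ⟨0, by simp⟩ _)
  rw [Finset.mem_image] at this
  obtain ⟨m, hm, h⟩ := this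
  exact ⟨m, by simpa using Nat.lt_succ_iff.mp (Finset.mem_range.mp hm), h⟩

lemma le_cmax {b : ℕ} (m : ℕ) (hm : m ≤ k) : s^[m] b ≤ cmax k s b := by
  apply Finset.le_max'
  rw [Finset.mem_image]
  exact ⟨m, Finset.mem_range.mpr (by omega), rfl⟩

lemma cmax_ge (b : ℕ) : b ≤ cmax k s b := le_cmax 0 (by omega)

lemma le_cmax_all {b : ℕ} (hc : Cyc k s b) (m : ℕ) : s^[m] b ≤ cmax k s b := by
  obtain ⟨hbk, p, hp1, hpk, hpb⟩ := hc
  rw [period hp1 hpb m]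
  refine le_cmax _ ?_
  have := Nat.mod_lt m (y := p) (by omega)
  omega

include hs1 hs2 in
lemma cmax_cyc {b : ℕ} (hc : Cyc k s b) : Cyc k s (cmax k s b) := by
  obtain ⟨m, hm, h⟩ := cmax_mem (s := s) (k := k) b
  rw [← h]
  exact cyc_it hs1 hs2 hc m

include hs1 hs2 in
lemma cmax_lt_k {b : ℕ} (hc : Cyc k s b) : cmax k s b < k :=
  (cmax_cyc hs1 hs2 hc).1

include hs1 hs2 in
lemma cmax_s {b : ℕ} (hc : Cyc k s b) : cmax k s (s b) = cmax k s b := by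
  obtain ⟨hbk, p, hp1, hpk, hpb⟩ := hc
  have himg : ((Finset.range (k+1)).image (fun m => s^[m] (s b)))
      = ((Finset.range (k+1)).image (fun m => s^[m] b)) := by
    ext v
    simp only [Finset.mem_image, Finset.mem_range]
    constructor
    · rintro ⟨m, hm, rfl⟩
      have h1 : s^[m] (s b) = s^[m+1] b := (Function.iterate_succ_apply s m b).symm
      have h2 : s^[m+1] b = s^[(m+1) % p] b := period hp1 hpb (m+1)
      refine ⟨(m+1) % p, ?_, by rw [h1, h2]⟩
      have hlt := Nat.mod_lt (m+1) (y := p) (by omega)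
      omega
    · rintro ⟨m, hm, rfl⟩
      have h2 : s^[m] b = s^[m % p] b := period hp1 hpb m
      rcases Nat.eq_zero_or_pos (m % p) with h0 | h0
      · refine ⟨p - 1, by omega, ?_⟩
        have : s^[p-1] (s b) = s^[p] b := by
          rw [Function.iterate_succ_apply s (p-1) b |>.symm]
          congr 1
          omega
        rw [this, hpb, h2, h0, Function.iterate_zero_apply]
      · refine ⟨m % p - 1, ?_, ?_⟩
        · have := Nat.mod_lt m (y := p) (by omega)
          omega
        · have : s^[m % p - 1] (s b) = s^[m % p] b := by
            rw [Function.iterate_succ_apply s (m % p - 1) b |>.symm]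
            congr 1
            omega
          rw [this, h2]
  rw [cmax, cmax]
  congr 1

include hs1 hs2 in
lemma cmax_it {b : ℕ} (hc : Cyc k s b) (m : ℕ) :
    cmax k s (s^[m] b) = cmax k s b := by
  induction m with
  | zero => simp
  | succ m ih =>
    rw [Function.iterate_succ_apply', cmax_s hs1 hs2 (cyc_it hs1 hs2 hc m), ih]

include hs1 hs2 in
lemma cmax_fix {b : ℕ} (hc : Cyc k s b) : cmax k s (cmax k s b) = cmax k s b := by
  obtain ⟨m, hm, h⟩ := cmax_mem (s := s) (k := k) b
  conv_lhs => rw [← h]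
  rw [cmax_it hs1 hs2 hc m]

include hs1 hs2 in
lemma cmax_max_iter {b : ℕ} (hc : Cyc k s b) (m : ℕ) :
    s^[m] (cmax k s b) ≤ cmax k s b := by
  have := le_cmax_all (cmax_cyc hs1 hs2 hc) m
  rwa [cmax_fix hs1 hs2 hc] at this

include hs1 hs2 hs4 in
lemma Rcmax {b : ℕ} (hc : Cyc k s b) (hne : s (cmax k s b) ≠ cmax k s b) :
    Rmem k s dd (cmax k s b) := by
  refine ⟨cmax_cyc hs1 hs2 hc, fun m _ => cmax_max_iter hs1 hs2 hc m, ?_⟩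
  apply hs4 _ (cmax_lt_k hs1 hs2 hc)
  have h1 : s (cmax k s b) ≤ cmax k s b := by
    have := cmax_max_iter hs1 hs2 hc 1
    simpa using this
  omega

include hk in
lemma Rfix {b : ℕ} (hb : b < k) (hsb : s b = b) (hdd : 0 < dd b) :
    Rmem k s dd b := by
  refine ⟨⟨hb, 1, le_refl 1, hk, by simpa using hsb⟩, ?_, hdd⟩
  intro m _
  rw [Function.iterate_fixed hsb m]

lemma cmax_R {r : ℕ} (hr : Rmem k s dd r) : cmax k s r = r := by
  obtain ⟨m, hm, h⟩ := cmax_mem (s := s) (k := k) r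
  exact le_antisymm (h ▸ hr.2.1 m hm) (cmax_ge r)

include hs1 hs2 in
lemma pos_exists {b : ℕ} (hc : Cyc k s b) :
    ∃ m, s^[m] (s (cmax k s b)) = b := by
  obtain ⟨m0, hm0, hcm⟩ := cmax_mem (s := s) (k := k) b
  obtain ⟨hbk, p, hp1, hpk, hpb⟩ := hc
  refine ⟨p * (m0 + 1) - m0 - 1, ?_⟩
  have h1 : s^[p * (m0 + 1) - m0 - 1] (s (cmax k s b)) =
      s^[p * (m0 + 1) - m0] (cmax k s b) := by
    rw [← Function.iterate_succ_apply s _ (cmax k s b)]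
    congr 1
    have : m0 + 1 ≤ p * (m0 + 1) := Nat.le_mul_of_pos_left _ (by omega)
    omega
  rw [h1, ← hcm, ← Function.iterate_add_apply]
  have he : p * (m0 + 1) - m0 + m0 = p * (m0 + 1) := by
    have : m0 + 1 ≤ p * (m0 + 1) := Nat.le_mul_of_pos_left _ (by omega)
    omega
  rw [he]
  exact iterate_mul_fix hpb

include hs1 hs2 in
lemma dst_pos_le {b : ℕ} (hc : Cyc k s b) :
    dst s (s (cmax k s b)) b ≤ k - 1 := by
  set c := cmax k s b with hcdef
  obtain ⟨hck, pc, hpc1, hpck, hpcb⟩ := cmax_cyc hs1 hs2 hc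
  obtain ⟨m0, hm0, hcm⟩ := cmax_mem (s := s) (k := k) b
  obtain ⟨q, hq⟩ := pos_exists hs1 hs2 hc
  have hb' : b = s^[q+1] c := by
    rw [Function.iterate_succ_apply]
    exact hq.symm
  have hb2 : b = s^[(q+1) % pc] c := by rw [hb', period hpc1 hpcb]
  rcases Nat.eq_zero_or_pos ((q+1) % pc) with h0 | h0
  · have hbc : b = c := by rw [hb2, h0, Function.iterate_zero_apply]
    have hble : dst s (s c) b ≤ pc - 1 := by
      refine dst_min _ ?_
      have h5 : s^[pc - 1] (s c) = s^[pc] c := by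
        rw [← Function.iterate_succ_apply s (pc - 1) c]
        congr 1
        omega
      rw [h5, hpcb]
      exact hbc.symm
    omega
  · have hble : dst s (s c) b ≤ (q+1) % pc - 1 := by
      apply dst_min
      have : s^[(q+1) % pc - 1] (s c) = s^[(q+1) % pc] c := by
        rw [← Function.iterate_succ_apply s _ c]
        congr 1
        omega
      rw [this, ← hb2]
    have := Nat.mod_lt (q+1) (y := pc) (by omega)
    omega

include hs1 hs2 hs3 in
lemma dst_step {b : ℕ} (hc : Cyc k s b) (hne : b ≠ cmax k s b) :
    dst s (s (cmax k s b)) (s b) = dst s (s (cmax k s b)) b + 1 := by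
  set c := cmax k s b with hcdef
  have hcc : Cyc k s c := cmax_cyc hs1 hs2 hc
  have hex : ∃ m, s^[m] (s c) = b := pos_exists hs1 hs2 hc
  set q := dst s (s c) b with hqdef
  have hq : s^[q] (s c) = b := dst_spec hex
  have hup : dst s (s c) (s b) ≤ q + 1 := by
    apply dst_min
    rw [Function.iterate_succ_apply', hq]
  have hexs : ∃ m, s^[m] (s c) = s b := ⟨q + 1, by rw [Function.iterate_succ_apply', hq]⟩
  have h0 : dst s (s c) (s b) ≠ 0 := by
    intro h0
    have hu := dst_spec hexs
    rw [h0, Function.iterate_zero_apply] at hu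
    exact hne (hs3 _ hc.1 _ hcc.1 hu.symm)
  have hu : s^[dst s (s c) (s b)] (s c) = s b := dst_spec hexs
  obtain ⟨u', hu'⟩ : ∃ u', dst s (s c) (s b) = u' + 1 :=
    ⟨dst s (s c) (s b) - 1, by omega⟩
  rw [hu', Function.iterate_succ_apply'] at hu
  have h1 : s^[u'] (s c) < k := by
    rw [← Function.iterate_succ_apply s u' c]
    exact cyc_lt_k hs1 hs2 hcc (u'+1)
  have h2 : s^[u'] (s c) = b := hs3 _ h1 _ hc.1 hu
  have h3 := dst_min (s := s) u' h2
  omega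

include hs1 hs2 hs3 in
lemma noncyc_s {b : ℕ} (hb : b ≤ k) (hnc : ¬ Cyc k s b) : ¬ Cyc k s (s b) := by
  intro hcs
  rcases eq_or_lt_of_le hb with rfl | hbk
  · rw [hs1] at hcs
    exact absurd hcs.1 (lt_irrefl _)
  obtain ⟨hsbk, p, hp1, hpk, hpb⟩ := hcs
  have hw : s (s^[p-1] (s b)) = s b := by
    have h5 : s^[p] (s b) = s (s^[p-1] (s b)) := by
      conv_lhs => rw [show p = (p-1) + 1 by omega]
      rw [Function.iterate_succ_apply']
    rw [← h5, hpb]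
  have hwk : s^[p-1] (s b) < k := cyc_lt_k hs1 hs2 ⟨hsbk, p, hp1, hpk, hpb⟩ (p-1)
  have hwb := hs3 _ hwk _ hbk hw
  apply hnc
  refine ⟨hbk, p, hp1, hpk, ?_⟩
  rw [show p = (p-1) + 1 by omega, Function.iterate_succ_apply]
  exact hwb

include hs1 hs2 hs3 in
lemma dst_k_step {b : ℕ} (hb : b < k) (hnc : ¬ Cyc k s b) :
    dst s b k ≤ k ∧ 1 ≤ dst s b k ∧ dst s (s b) k + 1 = dst s b k := by
  obtain ⟨m, hm, hke⟩ := reach hs2 hs3 (le_of_lt hb) hnc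
  have hex : ∃ m, s^[m] b = k := ⟨m, hke⟩
  set q := dst s b k with hqdef
  have hq : s^[q] b = k := dst_spec hex
  have hqk : q ≤ k := le_trans (dst_min m hke) hm
  have hq1 : 1 ≤ q := by
    rcases Nat.eq_zero_or_pos q with h0 | h0
    · rw [h0, Function.iterate_zero_apply] at hq
      omega
    · exact h0
  have h5 : s^[q-1] (s b) = k := by
    have h6 : s^[q-1] (s b) = s^[q] b := by
      conv_rhs => rw [show q = (q-1) + 1 by omega]
      rw [Function.iterate_succ_apply]
    rw [h6, hq]
  have hup : dst s (s b) k ≤ q - 1 := dst_min _ h5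
  have hlow : q ≤ dst s (s b) k + 1 := by
    have hu : s^[dst s (s b) k] (s b) = k := dst_spec ⟨q - 1, h5⟩
    have h7 : s^[dst s (s b) k + 1] b = k := by
      rw [Function.iterate_succ_apply]
      exact hu
    exact dst_min _ h7
  exact ⟨hqk, hq1, by omega⟩


-- kap lemmas
lemma Rmem_lt_k {r : ℕ} (hr : Rmem k s dd r) : r < k := hr.1.1

lemma kap_not {i : ℕ} (h : ¬ Rmem k s dd i) : kap k s dd i = i := by
  rw [kap, if_neg h]

lemma kap_R_cases {i : ℕ} (h : Rmem k s dd i) :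
    (Rmem k s dd (kap k s dd i) ∧ i < kap k s dd i ∧
      (∀ r', i < r' → Rmem k s dd r' → kap k s dd i ≤ r')) ∨
    (kap k s dd i = k ∧ ∀ r', i < r' → ¬ Rmem k s dd r') := by
  rw [kap, if_pos h]
  by_cases hex : ∃ r, i < r ∧ Rmem k s dd r
  · left
    rw [dif_pos hex]
    obtain ⟨h1, h2⟩ := Nat.find_spec hex
    exact ⟨h2, h1, fun r' hr1 hr2 => Nat.find_min' hex ⟨hr1, hr2⟩⟩
  · right
    rw [dif_neg hex]
    push_neg at hex
    exact ⟨rfl, fun r' h1 h2 => (hex r' h1 h2).elim⟩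

lemma kap_gt {r : ℕ} (hr : Rmem k s dd r) : r < kap k s dd r := by
  rcases kap_R_cases hr with ⟨_, h, _⟩ | ⟨h, _⟩
  · exact h
  · rw [h]; exact Rmem_lt_k hr

lemma kap_le {i : ℕ} (hi : i < k) : kap k s dd i ≤ k := by
  by_cases h : Rmem k s dd i
  · rcases kap_R_cases h with ⟨h1, _, _⟩ | ⟨h1, _⟩
    · exact le_of_lt (Rmem_lt_k h1)
    · rw [h1]
  · rw [kap_not h]; omega

lemma kap_inj {i u : ℕ} (hi : i < k) (hu : u < k)
    (h : kap k s dd i = kap k s dd u) : i = u := by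
  by_cases hRi : Rmem k s dd i <;> by_cases hRu : Rmem k s dd u
  · rcases kap_R_cases hRi with ⟨hi1, hi2, hi3⟩ | ⟨hi1, hi2⟩ <;>
      rcases kap_R_cases hRu with ⟨hu1, hu2, hu3⟩ | ⟨hu1, hu2⟩
    · rcases Nat.lt_trichotomy i u with hlt | heq | hgt
      · have := hi3 u hlt hRu
        omega
      · exact heq
      · have := hu3 i hgt hRi
        omega
    · rw [hu1] at h
      rw [h] at hi1
      have := Rmem_lt_k hi1
      omega
    · rw [hi1] at h
      rw [← h] at hu1
      have := Rmem_lt_k hu1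
      omega
    · rcases Nat.lt_trichotomy i u with hlt | heq | hgt
      · exact absurd hRu (hi2 u hlt)
      · exact heq
      · exact absurd hRi (hu2 i hgt)
  · rw [kap_not hRu] at h
    rcases kap_R_cases hRi with ⟨hi1, _, _⟩ | ⟨hi1, _⟩
    · rw [h] at hi1; exact absurd hi1 hRu
    · rw [hi1] at h; omega
  · rw [kap_not hRi] at h
    rcases kap_R_cases hRu with ⟨hu1, _, _⟩ | ⟨hu1, _⟩
    · rw [← h] at hu1; exact absurd hu1 hRi
    · rw [hu1] at h; omega
  · rw [kap_not hRi, kap_not hRu] at h; exact h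

lemma bstar_cases :
    (Rmem k s dd (bstar k s dd) ∧ ∀ r' < bstar k s dd, ¬ Rmem k s dd r') ∨
    (bstar k s dd = k ∧ ∀ r, ¬ Rmem k s dd r) := by
  rw [bstar]
  by_cases hex : ∃ r, Rmem k s dd r
  · left
    rw [dif_pos hex]
    exact ⟨Nat.find_spec hex, fun r' hr' => Nat.find_min hex hr'⟩
  · right
    rw [dif_neg hex]
    push_neg at hex
    exact ⟨rfl, hex⟩

lemma kap_ne_bstar {i : ℕ} (hi : i < k) : kap k s dd i ≠ bstar k s dd := by
  rcases bstar_cases (k := k) (s := s) (dd := dd) with ⟨hb1, hb2⟩ | ⟨hb1, hb2⟩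
  · by_cases hRi : Rmem k s dd i
    · rcases kap_R_cases hRi with ⟨h1, h2, h3⟩ | ⟨h1, h2⟩
      · intro h
        rw [h] at h2
        -- i < bstar, but bstar is least R elem and Rmem i
        exact hb2 i h2 hRi
      · rw [h1]
        intro h
        rw [← h] at hb1
        have := Rmem_lt_k hb1
        omega
    · rw [kap_not hRi]
      intro h
      rw [h] at hRi
      exact hRi hb1
  · by_cases hRi : Rmem k s dd i
    · exact absurd hRi (hb2 i)
    · rw [kap_not hRi, hb1]; omega

-- layer lemmas
lemma layer_congr {b b' : ℕ} (h : cmax k s b = cmax k s b') :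
    layer k s dd b = layer k s dd b' := by
  rw [layer, layer, h]

lemma layer_pos {r : ℕ} (hr : Rmem k s dd r) : 1 ≤ layer k s dd r := by
  rw [layer]
  rw [Nat.succ_le_iff, Finset.card_pos]
  refine ⟨r, ?_⟩
  rw [Finset.mem_filter, Finset.mem_range]
  exact ⟨Rmem_lt_k hr, hr, le_of_eq (cmax_R hr)⟩

lemma layer_succ {r : ℕ} (hr : Rmem k s dd r) (hRk : Rmem k s dd (kap k s dd r))
    (hmin : ∀ r', r < r' → Rmem k s dd r' → kap k s dd r ≤ r') :
    layer k s dd r = layer k s dd (kap k s dd r) + 1 := by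
  have hgt := kap_gt hr
  rw [layer, layer, cmax_R hr, cmax_R hRk]
  have hins : (Finset.range k).filter (fun x => Rmem k s dd x ∧ r ≤ x)
      = insert r ((Finset.range k).filter (fun x => Rmem k s dd x ∧ kap k s dd r ≤ x)) := by
    ext x
    simp only [Finset.mem_filter, Finset.mem_range, Finset.mem_insert]
    constructor
    · rintro ⟨hx1, hx2, hx3⟩
      rcases eq_or_lt_of_le hx3 with heq | hlt
      · exact Or.inl heq.symm
      · exact Or.inr ⟨hx1, hx2, hmin x hlt hx2⟩
    · rintro (heq | ⟨hx1, hx2, hx3⟩)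
      · subst heq
        exact ⟨Rmem_lt_k hr, hr, le_refl x⟩
      · exact ⟨hx1, hx2, by omega⟩
  rw [hins, Finset.card_insert_of_notMem]
  rw [Finset.mem_filter]
  push_neg
  intro _ _
  omega

-- rho lemmas
include hs1 hs2 hs3 hs4 in
lemma rho_step {i : ℕ} (hi : i < k) (hnR : ¬ Rmem k s dd i) (hsi : s i ≠ i) :
    rho k s dd i < rho k s dd (s i) := by
  by_cases hc : Cyc k s i
  · have hne : i ≠ cmax k s i := by
      intro h
      apply hnR
      have h2 : s (cmax k s i) ≠ cmax k s i := by rw [← h]; exact hsi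
      have := Rcmax hs1 hs2 hs4 hc h2
      rwa [← h] at this
    have hcs : Cyc k s (s i) := cyc_s hs1 hs2 hc
    have hcm : cmax k s (s i) = cmax k s i := cmax_s hs1 hs2 hc
    have hlay : layer k s dd (s i) = layer k s dd i := layer_congr hcm
    have hdst := dst_step hs1 hs2 hs3 hc hne
    rw [rho, rho, if_pos hc, if_pos hcs, hcm, hlay, hdst]
    omega
  · have hcs : ¬ Cyc k s (s i) := noncyc_s hs1 hs2 hs3 (le_of_lt hi) hc
    obtain ⟨h1, h2, h3⟩ := dst_k_step hs1 hs2 hs3 hi hc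
    rw [rho, rho, if_neg hc, if_neg hcs]
    omega

include hs1 hs2 in
lemma rho_kap_bound {r : ℕ} (hr : Rmem k s dd r) :
    rho k s dd (kap k s dd r) < layer k s dd r * (k+2) := by
  have hL := layer_pos hr
  rcases kap_R_cases hr with ⟨h1, h2, h3⟩ | ⟨h1, h2⟩
  · set v := kap k s dd r with hv
    have hcv : Cyc k s v := h1.1
    have hcmv : cmax k s v = v := cmax_R h1
    have hdb : dst s (s (cmax k s v)) v ≤ k - 1 := dst_pos_le hs1 hs2 hcv
    have hlv : layer k s dd r = layer k s dd v + 1 := layer_succ hr h1 h3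
    rw [rho, if_pos hcv]
    have he : layer k s dd v * (k+2) + (k+2) = layer k s dd r * (k+2) := by
      rw [hlv]; ring
    omega
  · rw [h1, rho, if_neg (fun hc : Cyc k s k => by exact absurd hc.1 (lt_irrefl k)),
      dst_self]
    have : k + 2 ≤ layer k s dd r * (k+2) := Nat.le_mul_of_pos_left _ (by omega)
    omega

include hs1 hs2 in
lemma rho_r_ge {r : ℕ} (hr : Rmem k s dd r) :
    layer k s dd r * (k+2) ≤ rho k s dd r := by
  rw [rho, if_pos hr.1]
  omega

include hs1 hs2 in
lemma rho_sr_ge {r : ℕ} (hr : Rmem k s dd r) :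
    layer k s dd r * (k+2) ≤ rho k s dd (s r) := by
  by_cases hsr : s r = r
  · rw [hsr]; exact rho_r_ge hs1 hs2 hr
  · have hcs : Cyc k s (s r) := cyc_s hs1 hs2 hr.1
    have hcm : cmax k s (s r) = cmax k s r := cmax_s hs1 hs2 hr.1
    have hlay : layer k s dd (s r) = layer k s dd r := layer_congr hcm
    rw [rho, if_pos hcs, hlay]
    omega

end Lems
end Comb


theorem keyLem {R : Type*} [CommRing R] {k n : ℕ} (M : Matrix (Fin k) (Fin n) R)
    (κ : Fin k → Fin n) (hinj : Function.Injective κ) (ρ : Fin n → ℕ)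
    (h1 : ∀ i, M i (κ i) = 1)
    (h2 : ∀ i u : Fin k, i ≠ u → M i (κ u) ≠ 0 → ρ (κ i) < ρ (κ u)) :
    ∃ H : Matrix (Fin n) (Fin k) R, M * H = 1 := by
  classical
  set A : Matrix (Fin k) (Fin k) R := fun i u => M i (κ u) with hA
  have hdet : A.det = 1 := by
    rw [Matrix.det_apply]
    rw [Finset.sum_eq_single (1 : Equiv.Perm (Fin k))]
    · simp [hA, h1]
    · intro σ _ hσ
      have : ∃ i, A (σ i) i = 0 := by
        by_contra hc
        push_neg at hc
        have hlt : ∀ i : Fin k, σ i ≠ i → ρ (κ (σ i)) < ρ (κ i) := by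
          intro i hi
          exact h2 (σ i) i hi (hc i)
        have hne : (Finset.univ.filter (fun i : Fin k => σ i ≠ i)).Nonempty := by
          by_contra he
          rw [Finset.not_nonempty_iff_eq_empty] at he
          apply hσ
          apply Equiv.ext
          intro x
          by_contra hx
          have hx' : σ x ≠ x := by simpa using hx
          have : x ∈ Finset.univ.filter (fun i : Fin k => σ i ≠ i) := by
            simp [hx']
          simp [he] at this
        obtain ⟨i₀, hi₀mem, hi₀min⟩ :=
          Finset.exists_min_image (Finset.univ.filter (fun i : Fin k => σ i ≠ i)) (fun i : Fin k => ρ (κ (σ i))) hne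
        have hi₀ : σ i₀ ≠ i₀ := by simpa using hi₀mem
        have hmem : σ i₀ ∈ Finset.univ.filter (fun i : Fin k => σ i ≠ i) := by
          simp only [Finset.mem_filter, Finset.mem_univ, true_and]
          intro h
          exact hi₀ (σ.injective h)
        have := hlt (σ i₀) (by
          intro h; exact hi₀ (σ.injective h))
        exact absurd (hi₀min _ hmem) (not_le.mpr this)
      obtain ⟨i, hi⟩ := this
      rw [Finset.prod_eq_zero (f := fun x => A (σ x) x) (Finset.mem_univ i) hi,
        smul_zero]
    · simp
  have hIsUnit : IsUnit A.det := by rw [hdet]; exact isUnit_one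
  have hAB : A * A⁻¹ = 1 := Matrix.mul_nonsing_inv A hIsUnit
  refine ⟨Matrix.of (fun b u => ∑ v, if b = κ v then A⁻¹ v u else 0), ?_⟩
  ext i u
  have key : (M * Matrix.of (fun b u => ∑ v, if b = κ v then A⁻¹ v u else 0)) i u
      = ∑ v, M i (κ v) * A⁻¹ v u := by
    rw [Matrix.mul_apply]
    simp_rw [Matrix.of_apply, Finset.mul_sum, mul_ite, mul_zero]
    rw [Finset.sum_comm]
    refine Finset.sum_congr rfl ?_
    intro v _
    rw [Finset.sum_ite_eq' Finset.univ (κ v) (fun b => M i b * A⁻¹ v u)]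
    simp
  rw [key]
  have := congrFun (congrFun hAB i) u
  rw [Matrix.mul_apply] at this
  simpa [hA] using this


/-- Given pairwise different columns `j_1,…,j_{n−1} ∈ {1,…,n}` and
degrees `d_1,…,d_{n−1} ∈ ℕ` with `j_i < i → d_i > 0`, there is a basic matrix
`M ∈ F[t]^{(n−1)×n}` satisfying (i)–(iv) as in Theorem stmt_12 together with the
strengthened properties: (vi) the only nonzero entries strictly below the diagonal are
`t^{d_i}` at the positions `(i, j_i)` with `j_i < i`; (vii) if `j_i < i`, then the only
nonconstant entry of row `i` is the one at position `(i, j_i)`. -/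
theorem exists_basic_matrix_with_degrees_strengthened {F : Type*} [Field F] [Fintype F]
    {n : ℕ} (hn : 2 ≤ n) (j : Fin (n - 1) → Fin n) (hj : Function.Injective j)
    (d : Fin (n - 1) → ℕ) (hjd : ∀ i : Fin (n - 1), ((j i : ℕ) < (i : ℕ)) → 0 < d i) :
    ∃ M : Matrix (Fin (n - 1)) (Fin n) (Polynomial F), IsBasic M ∧
      (∀ (i : Fin (n - 1)) (b : Fin n), (b : ℕ) < (j i : ℕ) →
        (M i b).degree ≤ (d i : WithBot ℕ)) ∧
      (∀ i : Fin (n - 1), (M i (j i)).degree = (d i : WithBot ℕ)) ∧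
      (∀ (i : Fin (n - 1)) (b : Fin n), (j i : ℕ) < (b : ℕ) →
        (M i b).degree < (d i : WithBot ℕ)) ∧
      (∀ i : Fin (n - 1), (M i (Fin.castLE (Nat.sub_le n 1) i)).eval 0 = 1) ∧
      (∀ (i : Fin (n - 1)) (b : Fin n), (b : ℕ) < (i : ℕ) →
        M i b = if b = j i then Polynomial.X ^ (d i) else 0) ∧
      (∀ i : Fin (n - 1), (j i : ℕ) < (i : ℕ) →
        ∀ b : Fin n, b ≠ j i → (M i b).degree ≤ 0) := by
  classical
  have hk : 1 ≤ n - 1 := by omega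
  have hkn : n - 1 < n := by omega
  set s : ℕ → ℕ := fun b => if h : b < n - 1 then (j ⟨b, h⟩ : ℕ) else b with hsdef
  set dd : ℕ → ℕ := fun b => if h : b < n - 1 then d ⟨b, h⟩ else 0 with hdddef
  have hsi : ∀ i : Fin (n - 1), s (i : ℕ) = (j i : ℕ) := by
    intro i
    simp only [hsdef, dif_pos i.isLt, Fin.eta]
  have hddi : ∀ i : Fin (n - 1), dd (i : ℕ) = d i := by
    intro i
    simp only [hdddef, dif_pos i.isLt, Fin.eta]
  have hs1 : s (n - 1) = n - 1 := by simp [hsdef]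
  have hs2 : ∀ b, b ≤ n - 1 → s b ≤ n - 1 := by
    intro b hb
    simp only [hsdef]
    split
    · rename_i h
      have := (j ⟨b, h⟩).isLt
      omega
    · omega
  have hs3 : ∀ a, a < n - 1 → ∀ b, b < n - 1 → s a = s b → a = b := by
    intro a ha b hb h
    simp only [hsdef, dif_pos ha, dif_pos hb] at h
    have h2 : j ⟨a, ha⟩ = j ⟨b, hb⟩ := Fin.ext h
    have h3 := hj h2
    simpa using congrArg Fin.val h3
  have hs4 : ∀ r, r < n - 1 → s r < r → 0 < dd r := by
    intro r hr h
    simp only [hsdef, dif_pos hr] at h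
    simp only [hdddef, dif_pos hr]
    exact hjd ⟨r, hr⟩ h
  set M : Matrix (Fin (n - 1)) (Fin n) (Polynomial F) := Matrix.of (fun i b =>
    if (b : ℕ) = s (i : ℕ) then
      (if s (i : ℕ) = (i : ℕ) ∧ dd (i : ℕ) ≠ 0 then
        X ^ (dd (i : ℕ)) + 1 else X ^ (dd (i : ℕ)))
    else if (b : ℕ) = (i : ℕ) then 1
    else if Rmem (n - 1) s dd (i : ℕ) ∧ (b : ℕ) = kap (n - 1) s dd (i : ℕ) then 1
    else 0) with hM
  have hM0 : ∀ (i : Fin (n - 1)) (b : Fin n), (b : ℕ) = s (i : ℕ) →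
      M i b = if s (i : ℕ) = (i : ℕ) ∧ dd (i : ℕ) ≠ 0 then
        X ^ (dd (i : ℕ)) + 1 else X ^ (dd (i : ℕ)) := by
    intro i b h
    simp only [hM, Matrix.of_apply, if_pos h]
  have hM1 : ∀ (i : Fin (n - 1)) (b : Fin n), (b : ℕ) ≠ s (i : ℕ) →
      (b : ℕ) = (i : ℕ) → M i b = 1 := by
    intro i b h1 h2
    simp only [hM, Matrix.of_apply, if_neg h1, if_pos h2]
  have hM2 : ∀ (i : Fin (n - 1)) (b : Fin n), (b : ℕ) ≠ s (i : ℕ) →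
      (b : ℕ) ≠ (i : ℕ) → Rmem (n - 1) s dd (i : ℕ) →
      (b : ℕ) = kap (n - 1) s dd (i : ℕ) → M i b = 1 := by
    intro i b h1 h2 h3 h4
    simp only [hM, Matrix.of_apply, if_neg h1, if_neg h2, if_pos (And.intro h3 h4)]
  have hM3 : ∀ (i : Fin (n - 1)) (b : Fin n), (b : ℕ) ≠ s (i : ℕ) →
      (b : ℕ) ≠ (i : ℕ) →
      ¬ (Rmem (n - 1) s dd (i : ℕ) ∧ (b : ℕ) = kap (n - 1) s dd (i : ℕ)) →
      M i b = 0 := by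
    intro i b h1 h2 h3
    simp only [hM, Matrix.of_apply, if_neg h1, if_neg h2, if_neg h3]
  have hent : ∀ (i : Fin (n - 1)) (b : Fin n), (b : ℕ) ≠ s (i : ℕ) →
      M i b = 1 ∨ M i b = 0 := by
    intro i b h1
    by_cases h2 : (b : ℕ) = (i : ℕ)
    · exact Or.inl (hM1 i b h1 h2)
    · by_cases h3 : Rmem (n - 1) s dd (i : ℕ) ∧ (b : ℕ) = kap (n - 1) s dd (i : ℕ)
      · exact Or.inl (hM2 i b h1 h2 h3.1 h3.2)
      · exact Or.inr (hM3 i b h1 h2 h3)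
  have h01le : ∀ p : Polynomial F, p = 1 ∨ p = 0 → ∀ m : ℕ,
      p.degree ≤ (m : WithBot ℕ) := by
    rintro p (rfl | rfl) m
    · rw [Polynomial.degree_one]
      exact_mod_cast Nat.zero_le m
    · rw [Polynomial.degree_zero]
      exact bot_le
  have h01lt : ∀ p : Polynomial F, p = 1 ∨ p = 0 → ∀ m : ℕ, 0 < m →
      p.degree < (m : WithBot ℕ) := by
    rintro p (rfl | rfl) m hm
    · rw [Polynomial.degree_one]
      exact_mod_cast hm
    · rw [Polynomial.degree_zero]
      exact bot_lt_iff_ne_bot.mpr (by exact_mod_cast WithBot.coe_ne_bot)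
  have h01le0 : ∀ p : Polynomial F, p = 1 ∨ p = 0 → p.degree ≤ 0 := by
    rintro p (rfl | rfl)
    · rw [Polynomial.degree_one]
    · rw [Polynomial.degree_zero]; exact bot_le
  have hilt : ∀ i : Fin (n - 1), (i : ℕ) < n - 1 := fun i => i.isLt
  have hRd : ∀ i : Fin (n - 1), Rmem (n - 1) s dd (i : ℕ) → 0 < d i := by
    intro i hR
    have := hR.2.2
    rwa [hddi] at this
  have hRsle : ∀ i : Fin (n - 1), Rmem (n - 1) s dd (i : ℕ) →
      s (i : ℕ) ≤ (i : ℕ) := by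
    intro i hR
    have := hR.2.1 1 hk
    simpa using this
  refine ⟨M, ?_, ?_, ?_, ?_, ?_, ?_, ?_⟩
  -- IsBasic
  · have hkaplt : ∀ i : Fin (n - 1), kap (n - 1) s dd (i : ℕ) < n :=
      fun i => lt_of_le_of_lt (kap_le (hilt i)) hkn
    set κF : Fin (n - 1) → Fin n := fun i => ⟨kap (n - 1) s dd (i : ℕ), hkaplt i⟩
      with hκF
    have hκinj : Function.Injective κF := by
      intro a b h
      have h2 : kap (n - 1) s dd (a : ℕ) = kap (n - 1) s dd (b : ℕ) :=
        congrArg Fin.val h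
      exact Fin.ext (kap_inj (hilt a) (hilt b) h2)
    have hkap_ne_row : ∀ (i u : Fin (n - 1)), i ≠ u →
        ¬ Rmem (n - 1) s dd (i : ℕ) → kap (n - 1) s dd (u : ℕ) ≠ (i : ℕ) := by
      intro i u hne hnRi he
      by_cases hRu : Rmem (n - 1) s dd (u : ℕ)
      · rcases kap_R_cases hRu with ⟨h1, _, _⟩ | ⟨h1, _⟩
        · rw [he] at h1
          exact hnRi h1
        · rw [h1] at he
          have := hilt i
          omega
      · rw [kap_not hRu] at he
        exact hne (Fin.ext he.symm)
    have h1' : ∀ i, M i (κF i) = 1 := by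
      intro i
      by_cases hRi : Rmem (n - 1) s dd (i : ℕ)
      · have hgt := kap_gt hRi
        have hsle := hRsle i hRi
        refine hM2 i (κF i) (by simp only [hκF]; omega) (by simp only [hκF]; omega)
          hRi (by simp only [hκF])
      · have hki : (κF i : ℕ) = (i : ℕ) := by simp only [hκF]; rw [kap_not hRi]
        by_cases hsii : s (i : ℕ) = (i : ℕ)
        · rw [hM0 i (κF i) (by rw [hki, hsii])]
          have hdd0 : dd (i : ℕ) = 0 := by
            by_contra hdd
            exact hRi (Rfix hk (hilt i) hsii (Nat.pos_of_ne_zero hdd))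
          rw [if_neg (by tauto), hdd0, pow_zero]
        · exact hM1 i (κF i) (by rw [hki]; exact fun h => hsii h.symm) hki
    have h2' : ∀ i u : Fin (n - 1), i ≠ u → M i (κF u) ≠ 0 →
        rho (n - 1) s dd ((κF i : Fin n) : ℕ) < rho (n - 1) s dd ((κF u : Fin n) : ℕ) := by
      intro i u hne hM'
      have hκFi : ((κF i : Fin n) : ℕ) = kap (n - 1) s dd (i : ℕ) := rfl
      have hκFu : ((κF u : Fin n) : ℕ) = kap (n - 1) s dd (u : ℕ) := rfl
      rw [hκFi, hκFu]
      by_cases hB1 : ((κF u : Fin n) : ℕ) = s (i : ℕ)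
      · rw [hκFu] at hB1
        rw [hB1]
        by_cases hRi : Rmem (n - 1) s dd (i : ℕ)
        · exact lt_of_lt_of_le (rho_kap_bound hs1 hs2 hRi) (rho_sr_ge hs1 hs2 hRi)
        · by_cases hsii : s (i : ℕ) = (i : ℕ)
          · exact absurd (hB1.trans hsii) (hkap_ne_row i u hne hRi)
          · rw [kap_not hRi]
            exact rho_step hs1 hs2 hs3 hs4 (hilt i) hRi hsii
      · by_cases hB2 : ((κF u : Fin n) : ℕ) = (i : ℕ)
        · rw [hκFu] at hB2
          by_cases hRi : Rmem (n - 1) s dd (i : ℕ)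
          · rw [hB2]
            exact lt_of_lt_of_le (rho_kap_bound hs1 hs2 hRi) (rho_r_ge hs1 hs2 hRi)
          · exact absurd hB2 (hkap_ne_row i u hne hRi)
        · by_cases hB3 : Rmem (n - 1) s dd (i : ℕ) ∧
              ((κF u : Fin n) : ℕ) = kap (n - 1) s dd (i : ℕ)
          · rw [hκFu] at hB3
            have := kap_inj (hilt u) (hilt i) hB3.2
            exact absurd (Fin.ext this).symm hne
          · exact absurd (hM3 i (κF u) hB1 hB2 hB3) hM'
    obtain ⟨H, hH⟩ := keyLem M κF hκinj (fun b => rho (n - 1) s dd (b : ℕ)) h1' h2'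
    exact ⟨H, hH⟩
  -- (i) b < j i
  · intro i b hb
    have hne : (b : ℕ) ≠ s (i : ℕ) := by rw [hsi i]; omega
    exact h01le _ (hent i b hne) (d i)
  -- (ii) degree at j i
  · intro i
    rw [hM0 i (j i) (hsi i).symm]
    split
    · rename_i h
      rw [← Polynomial.C_1, Polynomial.degree_X_pow_add_C
        (Nat.pos_of_ne_zero h.2)]
      rw [hddi]
    · rw [Polynomial.degree_X_pow, hddi]
  -- (iii) b > j i
  · intro i b hb
    have hne : (b : ℕ) ≠ s (i : ℕ) := by rw [hsi i]; omega
    have hsb : s (i : ℕ) < (b : ℕ) := by rw [hsi i]; omega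
    by_cases h2 : (b : ℕ) = (i : ℕ)
    · have hdi : 0 < d i := by
        apply hjd
        rw [← hsi i]
        omega
      rw [hM1 i b hne h2]
      exact h01lt _ (Or.inl rfl) _ hdi
    · by_cases h3 : Rmem (n - 1) s dd (i : ℕ) ∧ (b : ℕ) = kap (n - 1) s dd (i : ℕ)
      · rw [hM2 i b hne h2 h3.1 h3.2]
        exact h01lt _ (Or.inl rfl) _ (hRd i h3.1)
      · rw [hM3 i b hne h2 h3]
        rw [Polynomial.degree_zero]
        exact bot_lt_iff_ne_bot.mpr (by exact_mod_cast WithBot.coe_ne_bot)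
  -- (iv) diagonal evaluates to 1
  · intro i
    have hcast : ((Fin.castLE (Nat.sub_le n 1) i : Fin n) : ℕ) = (i : ℕ) := rfl
    by_cases hsii : s (i : ℕ) = (i : ℕ)
    · rw [hM0 i _ (by rw [hcast, hsii])]
      split
    
      · rename_i h
        simp [zero_pow h.2]
      · rename_i h
        have hdd0 : dd (i : ℕ) = 0 := by tauto
        rw [hdd0, pow_zero]
        simp
    · rw [hM1 i _ (by rw [hcast]; exact fun h => hsii h.symm) hcast]
      simp
  -- (vi) below diagonal
  · intro i b hb
    by_cases h1 : (b : ℕ) = s (i : ℕ)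
    · have hbj : b = j i := Fin.ext (by rw [h1, hsi i])
      rw [if_pos hbj]
      rw [hM0 i b h1]
      rw [if_neg (by intro h; omega), hddi]
    · have hbj : b ≠ j i := by
        intro h
        apply h1
        rw [h, hsi i]
      rw [if_neg hbj]
      apply hM3 i b h1 (by omega)
      rintro ⟨hR, hkapb⟩
      have := kap_gt hR
      omega
  -- (vii) row of down-step is constant off j i
  · intro i hji b hbj
    have hne : (b : ℕ) ≠ s (i : ℕ) := by
      intro h
      exact hbj (Fin.ext (by rw [h, hsi i]))
    exact h01le0 _ (hent i b hne)
end
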